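/- arXiv:1611.04559 — 5 statements merged into one kernel-verified Lean document; each statement's English description precedes it below -/
import Mathlib

section
/- Let A = (A_j)_{j∈ℤ} be a real sequence, a_j = 2cos(π A_j), and suppose the set J₀ = {j ∈ ℤ : a_j = 0} is unbounded above and unbounded below. For consecutive elements j < k of J₀ (i.e. no element of J₀ lies strictly between them), let L_{j,k} be the (k−j)×(k−j) real symmetric tridiagonal matrix with zero diagonal and off-diagonal entries a_{j+1}, …, a_{k−1}. Then the spectrum of L_A equals the closure of the union of the spectra of the matrices L_{j,k} over all pairs j < k of consecutive elements of J₀. -/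
open Real Complex

/-- The `(k−j)×(k−j)` real symmetric tridiagonal matrix with zero diagonal and
off-diagonal entries `a_{j+1}, …, a_{k−1}`. -/
noncomputable def blockMatrix (a : ℤ → ℝ) (j k : ℤ) :
    Matrix (Fin (k - j).toNat) (Fin (k - j).toNat) ℝ :=
  fun i i' =>
    if (i' : ℕ) = (i : ℕ) + 1 then a (j + 1 + (i : ℕ))
    else if (i : ℕ) = (i' : ℕ) + 1 then a (j + 1 + (i' : ℕ))
    else 0

/-- The set of (real) eigenvalues of a finite real matrix. -/
def eigSet {m : ℕ} (M : Matrix (Fin m) (Fin m) ℝ) : Set ℝ :=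
  {μ : ℝ | ∃ v : Fin m → ℝ, v ≠ 0 ∧ M.mulVec v = μ • v}

lemma sumIte {n : ℕ} (c : ℕ) (A : ℝ) :
    ∑ m' : Fin n, (if (m' : ℕ) = c then A else 0) = if c < n then A else 0 := by
  by_cases h : c < n
  · rw [if_pos h]
    rw [Finset.sum_eq_single (⟨c, h⟩ : Fin n)]
    · simp
    · intro b _ hb
      rw [if_neg]
      intro hbc
      exact hb (Fin.ext hbc)
    · simp
  · rw [if_neg h]
    apply Finset.sum_eq_zero
    intro b _
    rw [if_neg]
    intro hbc
    exact h (hbc ▸ b.isLt)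

lemma blockMatrix_isSymm (a : ℤ → ℝ) (j k : ℤ) :
    (blockMatrix a j k).IsHermitian := by
  ext i i'
  simp only [Matrix.conjTranspose_apply, blockMatrix, starRingEnd_apply, star_trivial]
  split_ifs with h1 h2 h3 h4 <;> first | rfl | omega


lemma blockMatrix_mulVec_apply (a : ℤ → ℝ) {j k : ℤ} (hjk : j < k)
    (haj : a j = 0) (hak : a k = 0) (x : ℤ → ℝ) (m : Fin (k - j).toNat) :
    (blockMatrix a j k).mulVec (fun m' => x (j + 1 + (m' : ℕ))) m
      = a (j + 1 + (m : ℕ)) * x (j + 1 + (m : ℕ) + 1)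
        + a (j + (m : ℕ)) * x (j + (m : ℕ)) := by
  have hn : ((k - j).toNat : ℤ) = k - j := Int.toNat_of_nonneg (by omega)
  rw [Matrix.mulVec, dotProduct]
  have hterm : ∀ m' : Fin (k - j).toNat,
      blockMatrix a j k m m' * x (j + 1 + (m' : ℕ))
        = (if (m' : ℕ) = (m : ℕ) + 1 then a (j + 1 + (m : ℕ)) * x (j + 1 + (m : ℕ) + 1) else 0)
          + (if (m : ℕ) = (m' : ℕ) + 1 then a (j + (m : ℕ)) * x (j + (m : ℕ)) else 0) := by
    intro m'
    by_cases h1 : (m' : ℕ) = (m : ℕ) + 1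
    · simp only [blockMatrix, if_pos h1, if_neg (show ¬ (m : ℕ) = (m' : ℕ) + 1 by omega)]
      rw [show j + 1 + ((m' : ℕ) : ℤ) = j + 1 + ((m : ℕ) : ℤ) + 1 from by omega, add_zero]
    · by_cases h2 : (m : ℕ) = (m' : ℕ) + 1
      · simp only [blockMatrix, if_neg h1, if_pos h2]
        rw [show j + 1 + ((m' : ℕ) : ℤ) = j + ((m : ℕ) : ℤ) from by omega, zero_add]
      · simp only [blockMatrix, if_neg h1, if_neg h2, zero_mul, add_zero]
  rw [Finset.sum_congr rfl (fun m' _ => hterm m'), Finset.sum_add_distrib]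
  have hmlt : (m : ℕ) < (k - j).toNat := m.isLt
  have hS1 : ∑ m' : Fin (k - j).toNat,
      (if (m' : ℕ) = (m : ℕ) + 1 then a (j + 1 + (m : ℕ)) * x (j + 1 + (m : ℕ) + 1) else 0)
      = a (j + 1 + (m : ℕ)) * x (j + 1 + (m : ℕ) + 1) := by
    rw [sumIte]
    by_cases h1 : (m : ℕ) + 1 < (k - j).toNat
    · rw [if_pos h1]
    · rw [if_neg h1]
      have hik : j + 1 + ((m : ℕ) : ℤ) = k := by omega
      rw [hik, hak, zero_mul]
  have hS2 : ∑ m' : Fin (k - j).toNat,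
      (if (m : ℕ) = (m' : ℕ) + 1 then a (j + (m : ℕ)) * x (j + (m : ℕ)) else 0)
      = a (j + (m : ℕ)) * x (j + (m : ℕ)) := by
    by_cases hm0 : (m : ℕ) = 0
    · rw [Finset.sum_eq_zero (fun b _ => by rw [if_neg (by omega)])]
      rw [hm0]
      push_cast
      rw [add_zero, haj, zero_mul]
    · have : ∀ m' : Fin (k - j).toNat,
          (if (m : ℕ) = (m' : ℕ) + 1 then a (j + (m : ℕ)) * x (j + (m : ℕ)) else 0)
          = (if (m' : ℕ) = (m : ℕ) - 1 then a (j + (m : ℕ)) * x (j + (m : ℕ)) else 0) := by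
        intro m'
        exact if_congr (by omega) rfl rfl
      rw [Finset.sum_congr rfl (fun m' _ => this m'), sumIte, if_pos (by omega)]
  rw [hS1, hS2]
lemma euc_sq {n : ℕ} (y : EuclideanSpace ℝ (Fin n)) : ∑ m, (y m)^2 = ‖y‖^2 := by
  rw [EuclideanSpace.norm_eq, Real.sq_sqrt (Finset.sum_nonneg fun m _ => sq_nonneg _)]
  exact Finset.sum_congr rfl fun m _ => by rw [Real.norm_eq_abs, _root_.sq_abs]

lemma onb_sum_sq {n : ℕ} (B : OrthonormalBasis (Fin n) ℝ (EuclideanSpace ℝ (Fin n)))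
    (d : Fin n → ℝ) :
    ∑ m, ((∑ i, d i • (B i : EuclideanSpace ℝ (Fin n))) m)^2 = ∑ i, (d i)^2 := by
  have hx : ∀ m, B.repr (∑ i, d i • B i) m = d m := by
    intro m
    rw [OrthonormalBasis.repr_apply_apply, inner_sum]
    have horth := orthonormal_iff_ite.mp B.orthonormal
    simp only [real_inner_smul_right, horth]
    simp
  rw [euc_sq, ← B.repr.norm_map, ← euc_sq]
  exact Finset.sum_congr rfl fun m _ => by rw [hx]


lemma eig_mem {n : ℕ} (M : Matrix (Fin n) (Fin n) ℝ) (hM : M.IsHermitian) (i : Fin n) :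
    hM.eigenvalues i ∈ eigSet M := by
  refine ⟨hM.eigenvectorBasis i, ?_, hM.mulVec_eigenvectorBasis i⟩
  intro h
  exact hM.eigenvectorBasis.orthonormal.ne_zero i (by ext m; exact congrFun h m)

lemma euc_sum_apply {n : ℕ} {ι : Type*} (s : Finset ι) (f : ι → EuclideanSpace ℝ (Fin n))
    (m : Fin n) : (∑ i ∈ s, f i) m = ∑ i ∈ s, f i m :=
  by rw [WithLp.ofLp_sum]; exact Finset.sum_apply m s _

lemma block_est {n : ℕ} (M : Matrix (Fin n) (Fin n) ℝ) (hM : M.IsHermitian) {t ε : ℝ}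
    (hε : 0 ≤ ε) (hspec : ∀ μ ∈ eigSet M, ε ≤ |t - μ|) (u : Fin n → ℝ) :
    ε^2 * ∑ m, (u m)^2 ≤ ∑ m, (M.mulVec u m - t * u m)^2 := by
  set B := hM.eigenvectorBasis with hB
  set c : Fin n → ℝ := fun i => B.repr (WithLp.toLp 2 u) i with hc
  have hsum : ∑ i, c i • (B i : EuclideanSpace ℝ (Fin n)) = u := by have := congrArg WithLp.ofLp (B.sum_repr (WithLp.toLp 2 u)); exact this
  set d : Fin n → ℝ := fun i => c i * (hM.eigenvalues i - t) with hd
  have hMu : M.mulVec u = ∑ i, c i • M.mulVec (B i) := by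
    conv_lhs => rw [← hsum]
    rw [WithLp.ofLp_sum, Matrix.mulVec_sum]
    exact Finset.sum_congr rfl fun i _ => by rw [WithLp.ofLp_smul, Matrix.mulVec_smul]
  have hkey : ∀ m, M.mulVec u m - t * u m = (∑ i, d i • (B i : EuclideanSpace ℝ (Fin n))) m := by
    intro m
    rw [hMu, ← hsum]
    simp only [euc_sum_apply, Finset.sum_apply, Pi.smul_apply, PiLp.smul_apply, smul_eq_mul,
      hM.mulVec_eigenvectorBasis, Finset.mul_sum, hd]
    rw [← Finset.sum_sub_distrib]
    refine Finset.sum_congr rfl fun i _ => ?_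
    have h5 := congrFun (hM.mulVec_eigenvectorBasis i) m
    rw [Pi.smul_apply, smul_eq_mul] at h5
    have h5' : M.mulVec (B i) m = hM.eigenvalues i * B i m := h5
    rw [h5']; ring
  calc ε^2 * ∑ m, (u m)^2 = ε^2 * ∑ i, (c i)^2 := by
        rw [← hsum, onb_sum_sq]
    _ = ∑ i, ε^2 * (c i)^2 := Finset.mul_sum _ _ _
    _ ≤ ∑ i, (d i)^2 := by
        apply Finset.sum_le_sum
        intro i _
        have h1 := hspec (hM.eigenvalues i) (eig_mem M hM i)
        have h2 : ε^2 ≤ (hM.eigenvalues i - t)^2 := by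
          calc ε^2 ≤ |t - hM.eigenvalues i|^2 := by
                apply pow_le_pow_left₀ hε h1
            _ = (hM.eigenvalues i - t)^2 := by rw [_root_.sq_abs]; ring
        calc ε^2 * (c i)^2 ≤ (hM.eigenvalues i - t)^2 * (c i)^2 := by
              apply mul_le_mul_of_nonneg_right h2 (sq_nonneg _)
          _ = (d i)^2 := by rw [hd]; ring
    _ = ∑ m, (M.mulVec u m - t * u m)^2 := by
        rw [show (∑ m, (M.mulVec u m - t * u m)^2)
            = ∑ m, ((∑ i, d i • (B i : EuclideanSpace ℝ (Fin n))) m)^2 from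
          Finset.sum_congr rfl fun m _ => by rw [hkey], onb_sum_sq]
lemma partition_tsum {fib : ℤ → Finset ℤ} {ρ : ℤ → ℤ}
    (h : ∀ i k, i ∈ fib k ↔ ρ i = k) (G : ℤ → ENNReal) :
    ∑' i, G i = ∑' k, ∑ i ∈ fib k, G i := by
  have h1 : ∀ k : ℤ, ∑ i ∈ fib k, G i = ∑' i : ℤ, (if i ∈ fib k then G i else 0) := by
    intro k
    rw [tsum_eq_sum (s := fib k) (fun b hb => if_neg hb)]
    exact Finset.sum_congr rfl fun i hi => (if_pos hi).symm
  calc ∑' i, G i = ∑' i, ∑' k, (if i ∈ fib k then G i else 0) := by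
        refine tsum_congr fun i => ?_
        rw [tsum_eq_single (ρ i) (fun k hk => if_neg (fun hm => hk ((h i k).mp hm).symm))]
        rw [if_pos ((h i (ρ i)).mpr rfl)]
    _ = ∑' k, ∑' i, (if i ∈ fib k then G i else 0) := ENNReal.tsum_comm
    _ = ∑' k, ∑ i ∈ fib k, G i := by
        exact tsum_congr fun k => (h1 k).symm

lemma sum_Ioc_fin {j k : ℤ} (hjk : j ≤ k) (f : ℤ → ℝ) :
    ∑ i ∈ Finset.Ioc j k, f i = ∑ m : Fin (k - j).toNat, f (j + 1 + ((m : ℕ) : ℤ)) := by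
  rw [Fin.sum_univ_eq_sum_range (fun m => f (j + 1 + (m : ℤ)))]
  apply Finset.sum_nbij' (i := fun i => (i - (j + 1)).toNat) (j := fun m => j + 1 + (m : ℤ))
  · intro i hi
    simp only [Finset.mem_Ioc] at hi
    simp only [Finset.mem_range]
    omega
  · intro m hm
    simp only [Finset.mem_range] at hm
    simp only [Finset.mem_Ioc]
    omega
  · intro i hi
    simp only [Finset.mem_Ioc] at hi
    omega
  · intro m hm
    simp only [Finset.mem_range] at hm
    omega
  · intro i hi
    simp only [Finset.mem_Ioc] at hi
    congr 1
    omega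
noncomputable def extVec {j k : ℤ} (v : Fin (k - j).toNat → ℝ) : ℤ → ℝ :=
  fun i => if h : j < i ∧ i ≤ k then v ⟨(i - (j + 1)).toNat, by omega⟩ else 0

lemma extVec_idx {j k : ℤ} (v : Fin (k - j).toNat → ℝ) (m : Fin (k - j).toNat) :
    extVec v (j + 1 + ((m : ℕ) : ℤ)) = v m := by
  have hm := m.isLt
  have hn : ((k - j).toNat : ℤ) = k - j := Int.toNat_of_nonneg (by omega)
  rw [extVec, dif_pos (by omega)]
  congr 1
  ext
  simp only
  omega

lemma extVec_fun {j k : ℤ} (v : Fin (k - j).toNat → ℝ) :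
    (fun m : Fin (k - j).toNat => extVec v (j + 1 + ((m : ℕ) : ℤ))) = v :=
  funext fun m => extVec_idx v m

lemma eig_extension (a : ℤ → ℝ) {j k : ℤ} (hjk : j < k) (haj : a j = 0) (hak : a k = 0)
    {s : ℝ} {v : Fin (k - j).toNat → ℝ} (hv : (blockMatrix a j k).mulVec v = s • v) (i : ℤ) :
    a i * extVec v (i + 1) + a (i - 1) * extVec v (i - 1) = s * extVec v i := by
  by_cases hi : j < i ∧ i ≤ k
  · have hbound : (i - (j + 1)).toNat < (k - j).toNat := by omega
    set m : Fin (k - j).toNat := ⟨(i - (j + 1)).toNat, hbound⟩ with hm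
    have hmv : ((m : ℕ) : ℤ) = i - (j + 1) := by
      simp only [hm]
      omega
    have h1 := blockMatrix_mulVec_apply a hjk haj hak (extVec v) m
    rw [extVec_fun] at h1
    have h2 : (blockMatrix a j k).mulVec v m = s * v m := by
      rw [hv]; rfl
    have hvm : extVec v i = v m := by
      rw [extVec, dif_pos hi]
    rw [show j + 1 + ((m : ℕ) : ℤ) + 1 = i + 1 by omega,
        show j + 1 + ((m : ℕ) : ℤ) = i by omega,
        show j + ((m : ℕ) : ℤ) = i - 1 by omega] at h1
    rw [← h1, h2, hvm]
  · have hv0 : extVec v i = 0 := by rw [extVec, dif_neg hi]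
    rw [hv0, mul_zero]
    have h1 : a i * extVec v (i + 1) = 0 := by
      by_cases hi1 : j < i + 1 ∧ i + 1 ≤ k
      · rw [show i = j by omega, haj, zero_mul]
      · rw [extVec, dif_neg hi1, mul_zero]
    have h2 : a (i - 1) * extVec v (i - 1) = 0 := by
      by_cases hi2 : j < i - 1 ∧ i - 1 ≤ k
      · rw [show i - 1 = k by omega, hak, zero_mul]
      · rw [extVec, dif_neg hi2, mul_zero]
    rw [h1, h2, add_zero]

lemma norm_sq_complex (z : ℂ) : ‖z‖^2 = z.re^2 + z.im^2 := by
  rw [← Complex.normSq_eq_norm_sq, Complex.normSq_apply]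
  ring

lemma block_bound (a : ℤ → ℝ) {j k : ℤ} (hjk : j < k) (haj : a j = 0) (hak : a k = 0)
    {t ε : ℝ} (hε : 0 ≤ ε) (hspec : ∀ μ ∈ eigSet (blockMatrix a j k), ε ≤ |t - μ|)
    (φ ψ : ℤ → ℂ)
    (hψ : ∀ i, j < i → i ≤ k →
      ψ i = (t : ℂ) * φ i - ((a i : ℂ) * φ (i + 1) + (a (i - 1) : ℂ) * φ (i - 1))) :
    ε^2 * ∑ i ∈ Finset.Ioc j k, ‖φ i‖^2 ≤ ∑ i ∈ Finset.Ioc j k, ‖ψ i‖^2 := by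
  set n := (k - j).toNat with hn
  set M := blockMatrix a j k with hM
  have hMsym := blockMatrix_isSymm a j k
  set u : Fin n → ℝ := fun m => (φ (j + 1 + ((m : ℕ) : ℤ))).re with hu
  set w : Fin n → ℝ := fun m => (φ (j + 1 + ((m : ℕ) : ℤ))).im with hw
  have hre : ∀ m : Fin n, M.mulVec u m
      = a (j + 1 + ((m : ℕ) : ℤ)) * (φ (j + 1 + ((m : ℕ) : ℤ) + 1)).re
        + a (j + ((m : ℕ) : ℤ)) * (φ (j + ((m : ℕ) : ℤ))).re := by
    intro m
    exact blockMatrix_mulVec_apply a hjk haj hak (fun i => (φ i).re) m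
  have him : ∀ m : Fin n, M.mulVec w m
      = a (j + 1 + ((m : ℕ) : ℤ)) * (φ (j + 1 + ((m : ℕ) : ℤ) + 1)).im
        + a (j + ((m : ℕ) : ℤ)) * (φ (j + ((m : ℕ) : ℤ))).im := by
    intro m
    exact blockMatrix_mulVec_apply a hjk haj hak (fun i => (φ i).im) m
  have hkey : ∀ m : Fin n, ‖ψ (j + 1 + ((m : ℕ) : ℤ))‖^2
      = (M.mulVec u m - t * u m)^2 + (M.mulVec w m - t * w m)^2 := by
    intro m
    have hmlt := m.isLt
    have hnn : ((k - j).toNat : ℤ) = k - j := Int.toNat_of_nonneg (by omega)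
    have h1 : j < j + 1 + ((m : ℕ) : ℤ) := by omega
    have h2 : j + 1 + ((m : ℕ) : ℤ) ≤ k := by omega
    rw [hψ _ h1 h2, norm_sq_complex]
    rw [hre m, him m]
    simp only [Complex.sub_re, Complex.sub_im, Complex.add_re, Complex.add_im,
      Complex.mul_re, Complex.mul_im, Complex.ofReal_re, Complex.ofReal_im,
      show j + 1 + ((m : ℕ) : ℤ) + 1 = j + 1 + ((m : ℕ) : ℤ) + 1 from rfl,
      show j + 1 + ((m : ℕ) : ℤ) - 1 = j + ((m : ℕ) : ℤ) by omega]
    ring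
  have hφkey : ∀ m : Fin n, ‖φ (j + 1 + ((m : ℕ) : ℤ))‖^2 = (u m)^2 + (w m)^2 := by
    intro m
    rw [norm_sq_complex]
  rw [sum_Ioc_fin hjk.le (fun i => ‖φ i‖^2), sum_Ioc_fin hjk.le (fun i => ‖ψ i‖^2)]
  calc ε^2 * ∑ m : Fin n, ‖φ (j + 1 + ((m : ℕ) : ℤ))‖^2
      = ε^2 * ∑ m : Fin n, (u m)^2 + ε^2 * ∑ m : Fin n, (w m)^2 := by
        rw [Finset.sum_congr rfl fun m _ => hφkey m, Finset.sum_add_distrib, mul_add]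
    _ ≤ (∑ m : Fin n, (M.mulVec u m - t * u m)^2)
        + ∑ m : Fin n, (M.mulVec w m - t * w m)^2 := by
        apply add_le_add
        · exact block_est M hMsym hε hspec u
        · exact block_est M hMsym hε hspec w
    _ = ∑ m : Fin n, ‖ψ (j + 1 + ((m : ℕ) : ℤ))‖^2 := by
        rw [← Finset.sum_add_distrib]
        exact (Finset.sum_congr rfl fun m _ => hkey m).symm

lemma lp_summable_sq (f : lp (fun _ : ℤ => ℂ) 2) : Summable (fun i => ‖f i‖^2) := by
  have h := (lp.memℓp f).summable (p := 2) (by norm_num)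
  refine h.congr fun i => ?_
  rw [show ((2 : ENNReal).toReal) = ((2 : ℕ) : ℝ) by norm_num, Real.rpow_natCast]

lemma lp_norm_sq (f : lp (fun _ : ℤ => ℂ) 2) : ‖f‖^2 = ∑' i, ‖f i‖^2 := by
  have h := lp.norm_rpow_eq_tsum (p := 2) (by norm_num) f
  rw [show ((2 : ENNReal).toReal) = ((2 : ℕ) : ℝ) by norm_num, Real.rpow_natCast] at h
  rw [h]
  exact tsum_congr fun i => by
    rw [show ((2 : ℕ) : ℝ) = ((2 : ℕ) : ℝ) from rfl, Real.rpow_natCast]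

lemma summable_shift_sq (f : lp (fun _ : ℤ => ℂ) 2) (σ : ℤ ≃ ℤ) :
    Summable (fun i => ‖f (σ i)‖^2) :=
  σ.summable_iff.mpr (lp_summable_sq f)

open ComplexConjugate in
lemma summable_aux (b : ℤ → ℝ) (hb : ∀ i, |b i| ≤ 2) (f g : lp (fun _ : ℤ => ℂ) 2)
    (σ τ : ℤ ≃ ℤ) :
    Summable (fun i : ℤ => (b i : ℂ) * (conj (f (σ i)) * g (τ i))) := by
  apply Summable.of_norm_bounded (g := fun i => ‖f (σ i)‖^2 + ‖g (τ i)‖^2)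
  · exact (summable_shift_sq f σ).add (summable_shift_sq g τ)
  · intro i
    rw [norm_mul, norm_mul, Complex.norm_real, RCLike.norm_conj]
    calc |b i| * (‖f (σ i)‖ * ‖g (τ i)‖) ≤ 2 * (‖f (σ i)‖ * ‖g (τ i)‖) := by
          apply mul_le_mul_of_nonneg_right (hb i)
          positivity
      _ = 2 * ‖f (σ i)‖ * ‖g (τ i)‖ := by ring
      _ ≤ ‖f (σ i)‖^2 + ‖g (τ i)‖^2 := two_mul_le_add_sq _ _

open ComplexConjugate in
lemma L_isSelfAdjoint (a : ℤ → ℝ) (hb : ∀ i, |a i| ≤ 2)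
    (L : lp (fun _ : ℤ => ℂ) 2 →L[ℂ] lp (fun _ : ℤ => ℂ) 2)
    (hL : ∀ (φ : lp (fun _ : ℤ => ℂ) 2) (j : ℤ),
      L φ j = (a j : ℂ) * φ (j + 1) + (a (j - 1) : ℂ) * φ (j - 1)) :
    IsSelfAdjoint L := by
  rw [ContinuousLinearMap.isSelfAdjoint_iff_isSymmetric]
  intro φ ψ
  have e1 : ℤ ≃ ℤ := Equiv.addRight (1 : ℤ)
  set S1 : ℤ → ℂ := fun i => (a i : ℂ) * (conj (φ (i + 1)) * ψ i) with hS1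
  set S2 : ℤ → ℂ := fun i => (a (i - 1) : ℂ) * (conj (φ (i - 1)) * ψ i) with hS2
  set T1 : ℤ → ℂ := fun i => (a i : ℂ) * (conj (φ i) * ψ (i + 1)) with hT1
  set T2 : ℤ → ℂ := fun i => (a (i - 1) : ℂ) * (conj (φ i) * ψ (i - 1)) with hT2
  have hsS1 : Summable S1 := summable_aux a hb φ ψ (Equiv.addRight (1 : ℤ)) (Equiv.refl ℤ)
  have hsS2 : Summable S2 := summable_aux (fun i => a (i - 1)) (fun i => hb _) φ ψ
    (Equiv.subRight (1 : ℤ)) (Equiv.refl ℤ)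
  have hsT1 : Summable T1 := summable_aux a hb φ ψ (Equiv.refl ℤ) (Equiv.addRight (1 : ℤ))
  have hsT2 : Summable T2 := summable_aux (fun i => a (i - 1)) (fun i => hb _) φ ψ
    (Equiv.refl ℤ) (Equiv.subRight (1 : ℤ))
  have hLHS : (inner ℂ ((L : lp (fun _ : ℤ => ℂ) 2 →ₗ[ℂ] lp (fun _ : ℤ => ℂ) 2) φ) ψ : ℂ)
      = (∑' i, S1 i) + ∑' i, S2 i := by
    rw [show ((L : lp (fun _ : ℤ => ℂ) 2 →ₗ[ℂ] lp (fun _ : ℤ => ℂ) 2) φ) = L φ from rfl]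
    rw [lp.inner_eq_tsum]
    rw [show (fun i => (inner ℂ ((L φ) i) (ψ i) : ℂ)) = fun i => S1 i + S2 i from funext fun i => by
      rw [RCLike.inner_apply, hL φ i, map_add, map_mul, map_mul, Complex.conj_ofReal,
        Complex.conj_ofReal, hS1, hS2]
      ring]
    exact Summable.tsum_add hsS1 hsS2
  have hRHS : (inner ℂ φ ((L : lp (fun _ : ℤ => ℂ) 2 →ₗ[ℂ] lp (fun _ : ℤ => ℂ) 2) ψ) : ℂ)
      = (∑' i, T1 i) + ∑' i, T2 i := by
    rw [show ((L : lp (fun _ : ℤ => ℂ) 2 →ₗ[ℂ] lp (fun _ : ℤ => ℂ) 2) ψ) = L ψ from rfl]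
    rw [lp.inner_eq_tsum]
    rw [show (fun i => (inner ℂ (φ i) ((L ψ) i) : ℂ)) = fun i => T1 i + T2 i from funext fun i => by
      rw [RCLike.inner_apply, hL ψ i, hT1, hT2]
      ring]
    exact Summable.tsum_add hsT1 hsT2
  have h12 : ∑' i, S1 i = ∑' i, T2 i := by
    rw [← (Equiv.addRight (1 : ℤ)).tsum_eq T2]
    refine tsum_congr fun i => ?_
    simp only [hS1, hT2, Equiv.coe_addRight, add_sub_cancel_right]
  have h21 : ∑' i, S2 i = ∑' i, T1 i := by
    rw [← (Equiv.subRight (1 : ℤ)).tsum_eq T1]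
    refine tsum_congr fun i => ?_
    simp only [hS2, hT1, Equiv.subRight_apply, sub_add_cancel]
  rw [hLHS, hRHS, h12, h21, add_comm]

lemma selfadj_lower_bound_isUnit {H : Type*} [NormedAddCommGroup H] [InnerProductSpace ℂ H]
    [CompleteSpace H] (T : H →L[ℂ] H)
    (hsym : ∀ x y : H, (inner ℂ (T x) y : ℂ) = inner ℂ x (T y))
    {ε : ℝ} (hε : 0 < ε) (hlow : ∀ x, ε * ‖x‖ ≤ ‖T x‖) : IsUnit T := by
  have hzero : ∀ x : H, T x = 0 → x = 0 := by
    intro x hx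
    have h1 := hlow x
    rw [hx, norm_zero] at h1
    have h2 : ‖x‖ ≤ 0 := by nlinarith [norm_nonneg x]
    exact norm_le_zero_iff.mp h2
  have hker : LinearMap.ker (T : H →ₗ[ℂ] H) = ⊥ := (LinearMap.ker_eq_bot' (f := (T : H →ₗ[ℂ] H))).mpr fun x hx => hzero x hx
  have hanti : AntilipschitzWith (ε⁻¹).toNNReal T := by
    apply ContinuousLinearMap.antilipschitz_of_bound
    intro x
    rw [Real.coe_toNNReal _ (by positivity), inv_mul_eq_div, le_div_iff₀ hε]
    calc ‖x‖ * ε = ε * ‖x‖ := mul_comm _ _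
      _ ≤ ‖T x‖ := hlow x
  have hclosed : IsClosed (Set.range T) := hanti.isClosed_range T.uniformContinuous
  have hrange_closed : IsClosed ((LinearMap.range (T : H →ₗ[ℂ] H) : Submodule ℂ H) : Set H) := by
    rw [LinearMap.coe_range]
    exact hclosed
  haveI : CompleteSpace (LinearMap.range (T : H →ₗ[ℂ] H) : Submodule ℂ H) := hrange_closed.completeSpace_coe
  have horth : (LinearMap.range (T : H →ₗ[ℂ] H))ᗮ = ⊥ := by
    rw [Submodule.eq_bot_iff]
    intro v hv
    have h0 : ∀ x : H, (inner ℂ x (T v) : ℂ) = 0 := fun x => by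
      rw [← hsym x v]
      exact hv (T x) (LinearMap.mem_range_self _ x)
    have hTv : T v = 0 := inner_self_eq_zero.mp (h0 (T v))
    exact hzero v hTv
  have hrange : LinearMap.range (T : H →ₗ[ℂ] H) = ⊤ := Submodule.orthogonal_eq_bot_iff.mp horth
  let e := ContinuousLinearEquiv.ofBijective T hker hrange
  have he : ∀ x, e x = T x := fun x =>
    congrFun (ContinuousLinearEquiv.coeFn_ofBijective T hker hrange) x
  refine ⟨⟨T, (e.symm : H →L[ℂ] H), ?_, ?_⟩, rfl⟩
  · ext x
    rw [ContinuousLinearMap.mul_apply, ContinuousLinearMap.one_apply,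
      ContinuousLinearEquiv.coe_coe, ← he (e.symm x), e.apply_symm_apply]
  · ext x
    rw [ContinuousLinearMap.mul_apply, ContinuousLinearMap.one_apply,
      ContinuousLinearEquiv.coe_coe, ← he x, e.symm_apply_apply]

lemma eig_to_spectrum (a : ℤ → ℝ)
    (L : lp (fun _ : ℤ => ℂ) 2 →L[ℂ] lp (fun _ : ℤ => ℂ) 2)
    (hL : ∀ (φ : lp (fun _ : ℤ => ℂ) 2) (j : ℤ),
      L φ j = (a j : ℂ) * φ (j + 1) + (a (j - 1) : ℂ) * φ (j - 1))
    {j k : ℤ} (hjk : j < k) (haj : a j = 0) (hak : a k = 0)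
    {s : ℝ} (hs : s ∈ eigSet (blockMatrix a j k)) :
    (s : ℂ) ∈ spectrum ℂ L := by
  obtain ⟨v, hv0, hveq⟩ := hs
  set x : ℤ → ℂ := fun i => ((extVec v i : ℝ) : ℂ) with hx
  have hsupp : ∀ i ∉ Finset.Ioc j k, x i = 0 := by
    intro i hi
    rw [Finset.mem_Ioc] at hi
    simp only [hx, extVec, dif_neg hi, Complex.ofReal_zero]
  have hmem : Memℓp x 2 := by
    apply memℓp_gen
    apply summable_of_ne_finset_zero (s := Finset.Ioc j k)
    intro i hi
    rw [hsupp i hi, norm_zero, Real.zero_rpow (by norm_num)]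
  set φ0 : lp (fun _ : ℤ => ℂ) 2 := ⟨x, hmem⟩ with hφ0
  have hcoe : ∀ i, φ0 i = x i := fun i => rfl
  have hφne : φ0 ≠ 0 := by
    intro h
    rw [Function.ne_iff] at hv0
    obtain ⟨m, hm⟩ := hv0
    apply hm
    have h1 : x (j + 1 + ((m : ℕ) : ℤ)) = 0 := by
      rw [← hcoe, h, lp.coeFn_zero]
      rfl
    rw [hx] at h1
    simp only [Complex.ofReal_eq_zero] at h1
    rw [extVec_idx] at h1
    exact h1
  have hLφ : L φ0 = (s : ℂ) • φ0 := by
    apply lp.ext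
    funext i
    rw [hL φ0 i, lp.coeFn_smul, Pi.smul_apply, hcoe, hcoe, hcoe, smul_eq_mul, hx]
    push_cast
    exact_mod_cast congrArg (fun r : ℝ => (r : ℂ)) (eig_extension a hjk haj hak hveq i)
  rw [spectrum.mem_iff]
  intro hunit
  obtain ⟨u, hu⟩ := hunit
  have hT0 : (algebraMap ℂ (lp (fun _ : ℤ => ℂ) 2 →L[ℂ] lp (fun _ : ℤ => ℂ) 2) (s : ℂ) - L) φ0
      = 0 := by
    rw [Algebra.algebraMap_eq_smul_one, ContinuousLinearMap.sub_apply,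
      ContinuousLinearMap.smul_apply, ContinuousLinearMap.one_apply, hLφ, sub_self]
  apply hφne
  calc φ0 = (1 : lp (fun _ : ℤ => ℂ) 2 →L[ℂ] lp (fun _ : ℤ => ℂ) 2) φ0 := rfl
    _ = ((↑u⁻¹ * ↑u : lp (fun _ : ℤ => ℂ) 2 →L[ℂ] lp (fun _ : ℤ => ℂ) 2)) φ0 := by
        rw [u.inv_mul]
    _ = (↑u⁻¹ : lp (fun _ : ℤ => ℂ) 2 →L[ℂ] lp (fun _ : ℤ => ℂ) 2) ((↑u : lp (fun _ : ℤ => ℂ) 2 →L[ℂ] lp (fun _ : ℤ => ℂ) 2) φ0) := rfl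
    _ = 0 := by rw [hu, hT0, map_zero]


/-- If `J₀ = {j : a j = 0}` is unbounded above and below, then the spectrum
of `L_A` is the closure of the union of the spectra of the finite blocks `L_{j,k}` over
consecutive elements `j < k` of `J₀`. -/
theorem spectrum_decomposition_blocks
    (A : ℤ → ℝ) (a : ℤ → ℝ) (ha : ∀ j, a j = 2 * Real.cos (π * A j))
    (hAbove : ¬ BddAbove {j : ℤ | a j = 0})
    (hBelow : ¬ BddBelow {j : ℤ | a j = 0})
    (L : lp (fun _ : ℤ => ℂ) 2 →L[ℂ] lp (fun _ : ℤ => ℂ) 2)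
    (hL : ∀ (φ : lp (fun _ : ℤ => ℂ) 2) (j : ℤ),
      L φ j = (a j : ℂ) * φ (j + 1) + (a (j - 1) : ℂ) * φ (j - 1)) :
    spectrum ℂ L = Complex.ofReal ''
      closure (⋃ (j : ℤ) (k : ℤ)
        (_ : a j = 0 ∧ a k = 0 ∧ j < k ∧ ∀ i : ℤ, a i = 0 → ¬ (j < i ∧ i < k)),
        eigSet (blockMatrix a j k)) := by
  classical
  set U : Set ℝ := ⋃ (j : ℤ) (k : ℤ)
      (_ : a j = 0 ∧ a k = 0 ∧ j < k ∧ ∀ i : ℤ, a i = 0 → ¬ (j < i ∧ i < k)),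
      eigSet (blockMatrix a j k) with hU
  have hb : ∀ i, |a i| ≤ 2 := by
    intro i
    rw [ha i, abs_mul]
    have h1 := abs_cos_le_one (π * A i)
    have h2 : |(2:ℝ)| = 2 := by norm_num
    nlinarith [abs_nonneg (Real.cos (π * A i))]
  have hSA : IsSelfAdjoint L := L_isSelfAdjoint a hb L hL
  -- union membership criterion
  have hUmem : ∀ s : ℝ, s ∈ U ↔ ∃ j k : ℤ,
      (a j = 0 ∧ a k = 0 ∧ j < k ∧ ∀ i : ℤ, a i = 0 → ¬ (j < i ∧ i < k)) ∧
      s ∈ eigSet (blockMatrix a j k) := by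
    intro s
    simp only [hU, Set.mem_iUnion]
    tauto
  -- ⊇ : image of closure is in the spectrum
  have hsup : Complex.ofReal '' closure U ⊆ spectrum ℂ L := by
    intro z hz
    obtain ⟨t, ht, rfl⟩ := hz
    have hsub : U ⊆ Complex.ofReal ⁻¹' (spectrum ℂ L) := by
      intro s hs
      obtain ⟨j, k, ⟨haj, hak, hjk, -⟩, hseig⟩ := (hUmem s).mp hs
      exact eig_to_spectrum a L hL hjk haj hak hseig
    have hcl : IsClosed (Complex.ofReal ⁻¹' (spectrum ℂ L)) :=
      (spectrum.isClosed L).preimage Complex.continuous_ofReal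
    exact (hcl.closure_subset_iff.mpr hsub) ht
  -- choice functions for next/previous zeros
  have hνex : ∀ i : ℤ, ∃ l, (a l = 0 ∧ i ≤ l) ∧ ∀ l', a l' = 0 ∧ i ≤ l' → l ≤ l' := by
    intro i
    apply Int.exists_least_of_bdd (P := fun l => a l = 0 ∧ i ≤ l)
    · exact ⟨i, fun z hz => hz.2⟩
    · obtain ⟨y, hy, hlt⟩ := not_bddAbove_iff.mp hAbove (i - 1)
      exact ⟨y, hy, by omega⟩
  choose nz hnz1 hnz2 using hνex
  have hπex : ∀ i : ℤ, ∃ l, (a l = 0 ∧ l < i) ∧ ∀ l', a l' = 0 ∧ l' < i → l' ≤ l := by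
    intro i
    apply Int.exists_greatest_of_bdd (P := fun l => a l = 0 ∧ l < i)
    · exact ⟨i, fun z hz => hz.2.le⟩
    · obtain ⟨y, hy, hlt⟩ := not_bddBelow_iff.mp hBelow i
      exact ⟨y, hy, hlt⟩
  choose pz hpz1 hpz2 using hπex
  have hcons : ∀ k, a k = 0 →
      (a (pz k) = 0 ∧ a k = 0 ∧ pz k < k ∧ ∀ i', a i' = 0 → ¬ (pz k < i' ∧ i' < k)) := by
    intro k hk
    refine ⟨(hpz1 k).1, hk, (hpz1 k).2, fun i' hi' hcontra => ?_⟩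
    have := hpz2 k i' ⟨hi', hcontra.2⟩
    omega
  -- the fiber structure
  set fib : ℤ → Finset ℤ := fun k => if a k = 0 then Finset.Ioc (pz k) k else ∅ with hfibdef
  have hfib : ∀ i k, i ∈ fib k ↔ nz i = k := by
    intro i k
    by_cases hk : a k = 0
    · rw [hfibdef]
      simp only [if_pos hk, Finset.mem_Ioc]
      constructor
      · rintro ⟨h1, h2⟩
        have hle : nz i ≤ k := hnz2 i k ⟨hk, h2⟩
        by_contra hne
        have hlt : nz i < k := lt_of_le_of_ne hle hne
        have h3 := hpz2 k (nz i) ⟨(hnz1 i).1, hlt⟩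
        have h4 : i ≤ nz i := (hnz1 i).2
        omega
      · rintro rfl
        refine ⟨?_, (hnz1 i).2⟩
        by_contra hge
        have h3 := hpz1 (nz i)
        have h4 : nz i ≤ pz (nz i) := hnz2 i _ ⟨h3.1, by omega⟩
        have h5 := h3.2
        omega
    · rw [hfibdef]
      simp only [if_neg hk, Finset.notMem_empty, false_iff]
      intro h
      exact hk (h ▸ (hnz1 i).1)
  -- nonemptiness of U
  have hUne : U.Nonempty := by
    set k0 := nz 0 with hk0
    have hak0 : a k0 = 0 := (hnz1 0).1
    set j0 := pz k0 with hj0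
    have hjk0 : j0 < k0 := (hpz1 k0).2
    have hpos : 0 < (k0 - j0).toNat := by omega
    have hM := blockMatrix_isSymm a j0 k0
    refine ⟨hM.eigenvalues ⟨0, hpos⟩, ?_⟩
    rw [hUmem]
    exact ⟨j0, k0, hcons k0 hak0, eig_mem _ hM ⟨0, hpos⟩⟩
  -- ⊆ : the spectrum is contained in the image of the closure
  apply Set.eq_of_subset_of_subset _ hsup
  intro z hz
  have hzre : z = ((z.re : ℝ) : ℂ) := hSA.mem_spectrum_eq_re hz
  set t : ℝ := z.re with htdef
  refine ⟨t, ?_, hzre.symm⟩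
  by_contra htc
  set ε : ℝ := Metric.infDist t (closure U) with hε
  have hεpos : 0 < ε := by
    rw [hε]
    exact (isClosed_closure.notMem_iff_infDist_pos (hUne.closure)).mp htc
  have hspec : ∀ j k : ℤ,
      (a j = 0 ∧ a k = 0 ∧ j < k ∧ ∀ i' : ℤ, a i' = 0 → ¬ (j < i' ∧ i' < k)) →
      ∀ μ ∈ eigSet (blockMatrix a j k), ε ≤ |t - μ| := by
    intro j k hcond μ hμ
    have hμU : μ ∈ closure U := subset_closure ((hUmem μ).mpr ⟨j, k, hcond, hμ⟩)
    calc ε ≤ dist t μ := Metric.infDist_le_dist_of_mem hμU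
      _ = |t - μ| := Real.dist_eq t μ
  set T := algebraMap ℂ (lp (fun _ : ℤ => ℂ) 2 →L[ℂ] lp (fun _ : ℤ => ℂ) 2) ((t : ℝ) : ℂ) - L
    with hT
  have hTapp : ∀ φ : lp (fun _ : ℤ => ℂ) 2, T φ = ((t : ℝ) : ℂ) • φ - L φ := by
    intro φ
    rw [hT, Algebra.algebraMap_eq_smul_one, ContinuousLinearMap.sub_apply,
      ContinuousLinearMap.smul_apply, ContinuousLinearMap.one_apply]
  have hTcoord : ∀ (φ : lp (fun _ : ℤ => ℂ) 2) (i : ℤ),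
      T φ i = ((t : ℝ) : ℂ) * φ i
        - (((a i : ℝ) : ℂ) * φ (i + 1) + ((a (i - 1) : ℝ) : ℂ) * φ (i - 1)) := by
    intro φ i
    rw [hTapp φ, lp.coeFn_sub, Pi.sub_apply, lp.coeFn_smul, Pi.smul_apply, smul_eq_mul, hL φ i]
  have hsymT : ∀ x y : lp (fun _ : ℤ => ℂ) 2, (inner ℂ (T x) y : ℂ) = inner ℂ x (T y) := by
    have hsymL := ContinuousLinearMap.isSelfAdjoint_iff_isSymmetric.mp hSA
    intro x y
    rw [hTapp x, hTapp y, inner_sub_left, inner_sub_right, inner_smul_left, inner_smul_right,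
      Complex.conj_ofReal]
    rw [show (inner ℂ (L x) y : ℂ) = inner ℂ x (L y) from hsymL x y]
  -- the key lower bound
  have hlow : ∀ φ : lp (fun _ : ℤ => ℂ) 2, ε * ‖φ‖ ≤ ‖T φ‖ := by
    intro φ
    set ψ := T φ with hψdef
    set F : ℤ → ℝ := fun i => ‖φ i‖^2 with hF
    set G : ℤ → ℝ := fun i => ‖ψ i‖^2 with hG
    have hFnn : ∀ i, 0 ≤ F i := fun i => sq_nonneg _
    have hGnn : ∀ i, 0 ≤ G i := fun i => sq_nonneg _
    have hblock : ∀ k : ℤ, ε^2 * ∑ i ∈ fib k, F i ≤ ∑ i ∈ fib k, G i := by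
      intro k
      by_cases hk : a k = 0
      · rw [hfibdef]
        simp only [if_pos hk]
        have hc := hcons k hk
        refine block_bound a hc.2.2.1 hc.1 hc.2.1 hεpos.le
          (hspec (pz k) k hc) (fun i => φ i) (fun i => ψ i) ?_
        intro i h1 h2
        exact hTcoord φ i
      · rw [hfibdef]
        simp only [if_neg hk, Finset.sum_empty, mul_zero, le_refl]
    have hENN : ENNReal.ofReal (ε^2 * ‖φ‖^2) ≤ ENNReal.ofReal (‖ψ‖^2) := by
      have hFpart : ENNReal.ofReal (‖φ‖^2) = ∑' k : ℤ, ENNReal.ofReal (∑ i ∈ fib k, F i) := by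
        rw [lp_norm_sq φ, ENNReal.ofReal_tsum_of_nonneg hFnn (lp_summable_sq φ),
          partition_tsum hfib (fun i => ENNReal.ofReal (F i))]
        exact tsum_congr fun k => (ENNReal.ofReal_sum_of_nonneg (fun i _ => hFnn i)).symm
      have hGpart : ENNReal.ofReal (‖ψ‖^2) = ∑' k : ℤ, ENNReal.ofReal (∑ i ∈ fib k, G i) := by
        rw [lp_norm_sq ψ, ENNReal.ofReal_tsum_of_nonneg hGnn (lp_summable_sq ψ),
          partition_tsum hfib (fun i => ENNReal.ofReal (G i))]
        exact tsum_congr fun k => (ENNReal.ofReal_sum_of_nonneg (fun i _ => hGnn i)).symm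
      calc ENNReal.ofReal (ε^2 * ‖φ‖^2)
          = ENNReal.ofReal (ε^2) * ENNReal.ofReal (‖φ‖^2) :=
            ENNReal.ofReal_mul (sq_nonneg ε)
        _ = ∑' k : ℤ, ENNReal.ofReal (ε^2) * ENNReal.ofReal (∑ i ∈ fib k, F i) := by
            rw [hFpart, ENNReal.tsum_mul_left]
        _ = ∑' k : ℤ, ENNReal.ofReal (ε^2 * ∑ i ∈ fib k, F i) := by
            exact tsum_congr fun k =>
              (ENNReal.ofReal_mul (sq_nonneg ε)).symm
        _ ≤ ∑' k : ℤ, ENNReal.ofReal (∑ i ∈ fib k, G i) :=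
            ENNReal.tsum_le_tsum fun k => ENNReal.ofReal_le_ofReal (hblock k)
        _ = ENNReal.ofReal (‖ψ‖^2) := hGpart.symm
    have hsq : ε^2 * ‖φ‖^2 ≤ ‖ψ‖^2 :=
      (ENNReal.ofReal_le_ofReal_iff (sq_nonneg _)).mp hENN
    have h1 : (ε * ‖φ‖)^2 ≤ ‖ψ‖^2 := by nlinarith
    have h2 : 0 ≤ ε * ‖φ‖ := by positivity
    nlinarith [norm_nonneg ψ]
  have hUnit : IsUnit T := selfadj_lower_bound_isUnit T hsymT hεpos hlow
  rw [spectrum.mem_iff, hzre] at hz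
  exact hz hUnit
end

section
/- Let α = p/q with p ∈ ℤ, q ∈ ℕ, q ≥ 1, gcd(p, q) = 1, and let θ ∈ ℝ be such that αj + θ + 1/2 ∈ ℤ for some j ∈ {0, …, q−1}. Then the spectrum of L_{α,θ} consists of exactly q distinct real numbers, each of which is an eigenvalue of L_{α,θ} whose eigenspace is infinite-dimensional. -/
open Real Complex

lemma RFPP.cos_add_int_mul_pi (x : ℝ) (k : ℤ) :
    Real.cos (x + (k : ℝ) * π) = (if Even k then 1 else -1) * Real.cos x := by
  rcases Int.even_or_odd k with ⟨t, ht⟩ | ⟨t, ht⟩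
  · rw [if_pos ⟨t, ht⟩, one_mul]
    have hx : x + (k : ℝ) * π = x + (t : ℤ) * (2 * π) := by
      rw [ht]; push_cast; ring
    rw [hx]
    exact_mod_cast Real.cos_add_int_mul_two_pi x t
  · rw [if_neg (by simpa using (Int.not_even_iff_odd.mpr ⟨t, ht⟩))]
    have hx : x + (k : ℝ) * π = (x + π) + (t : ℤ) * (2 * π) := by
      rw [ht]; push_cast; ring
    rw [hx]
    rw [show ((t : ℤ) : ℝ) * (2 * π) = ((t : ℤ) : ℝ) * (2 * π) from rfl]
    rw [Real.cos_add_int_mul_two_pi (x + π) t]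
    rw [Real.cos_add, Real.cos_pi, Real.sin_pi]
    ring


namespace RFPP

/-- The `q × q` tridiagonal matrix with zero diagonal and off-diagonal entries `β`. -/
def triA (q : ℕ) (β : ℕ → ℝ) : Matrix (Fin q) (Fin q) ℂ :=
  Matrix.of fun i j =>
    if (i : ℕ) + 1 = (j : ℕ) then (β i : ℂ)
    else if (j : ℕ) + 1 = (i : ℕ) then (β j : ℂ) else 0

lemma triA_apply (q : ℕ) (β : ℕ → ℝ) (i j : Fin q) :
    triA q β i j =
      if (i : ℕ) + 1 = (j : ℕ) then (β i : ℂ)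
      else if (j : ℕ) + 1 = (i : ℕ) then (β j : ℂ) else 0 := rfl

lemma triA_mulVec (q : ℕ) (β : ℕ → ℝ) (v : Fin q → ℂ) (i : Fin q) :
    (triA q β).mulVec v i =
      (if h : (i : ℕ) + 1 < q then (β i : ℂ) * v ⟨(i : ℕ) + 1, h⟩ else 0)
        + (if 0 < (i : ℕ) then (β ((i : ℕ) - 1) : ℂ)
              * v ⟨(i : ℕ) - 1, Nat.lt_of_le_of_lt (Nat.sub_le _ _) i.2⟩ else 0) := by
  classical
  have hsplit : ∀ j : Fin q, triA q β i j * v j =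
      (if (i : ℕ) + 1 = (j : ℕ) then (β i : ℂ) * v j else 0)
        + (if (j : ℕ) + 1 = (i : ℕ) then (β j : ℂ) * v j else 0) := by
    intro j
    rw [triA_apply]
    by_cases h1 : (i : ℕ) + 1 = (j : ℕ) <;> by_cases h2 : (j : ℕ) + 1 = (i : ℕ) <;>
      simp [h1, h2] <;> omega
  rw [Matrix.mulVec, dotProduct]
  simp only [hsplit, Finset.sum_add_distrib]
  congr 1
  · by_cases h : (i : ℕ) + 1 < q
    · rw [dif_pos h]
      rw [Finset.sum_eq_single (⟨(i : ℕ) + 1, h⟩ : Fin q)]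
      · simp
      · intro b _ hb
        rw [if_neg]
        intro hc
        exact hb (by apply Fin.ext; simp [← hc])
      · intro hmem; exact absurd (Finset.mem_univ _) hmem
    · rw [dif_neg h]
      apply Finset.sum_eq_zero
      intro b _
      rw [if_neg]
      intro hc
      exact h (hc ▸ b.2)
  · by_cases h : 0 < (i : ℕ)
    · rw [if_pos h]
      rw [Finset.sum_eq_single (⟨(i : ℕ) - 1, Nat.lt_of_le_of_lt (Nat.sub_le _ _) i.2⟩ : Fin q)]
      · rw [if_pos (by simp; omega)]
      · intro b _ hb
        rw [if_neg]
        intro hc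
        exact hb (by apply Fin.ext; simp; omega)
      · intro hmem; exact absurd (Finset.mem_univ _) hmem
    · rw [if_neg h]
      apply Finset.sum_eq_zero
      intro b _
      rw [if_neg]
      omega
  
lemma triA_isHermitian (q : ℕ) (β : ℕ → ℝ) : (triA q β).IsHermitian := by
  ext i j
  simp only [Matrix.conjTranspose_apply, triA_apply]
  by_cases h1 : (i : ℕ) + 1 = (j : ℕ) <;> by_cases h2 : (j : ℕ) + 1 = (i : ℕ) <;>
    simp [h1, h2, Complex.conj_ofReal] <;> omega

/-- eigenvector with zero first entry vanishes -/
lemma triA_eigen_unique (q : ℕ) (β : ℕ → ℝ) (hq : 0 < q)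
    (hβ : ∀ k : ℕ, k + 1 < q → β k ≠ 0) (μ : ℂ) (u : Fin q → ℂ)
    (hu : (triA q β).mulVec u = μ • u) (h0 : u ⟨0, hq⟩ = 0) : u = 0 := by
  have key : ∀ m : ℕ, ∀ hm : m < q, u ⟨m, hm⟩ = 0 := by
    intro m
    induction m using Nat.strong_induction_on with
    | _ m ih =>
      intro hm
      match m, hm with
      | 0, hm => exact h0
      | 1, hm =>
        have hrow := congrFun hu ⟨0, hq⟩
        rw [triA_mulVec] at hrow
        rw [dif_pos hm, if_neg (by simp)] at hrow
        simp only [Pi.smul_apply, smul_eq_mul, h0, mul_zero, add_zero] at hrow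
        have hβne : (β 0 : ℂ) ≠ 0 := by exact_mod_cast hβ 0 hm
        rcases mul_eq_zero.mp hrow with h | h
        · exact absurd h hβne
        · exact h
      | (m + 2), hm =>
        have hm1 : m + 1 < q := by omega
        have hrow := congrFun hu ⟨m + 1, hm1⟩
        rw [triA_mulVec] at hrow
        rw [dif_pos (by simpa using hm), if_pos (by simp)] at hrow
        have hu1 : u ⟨m + 1, hm1⟩ = 0 := ih (m + 1) (by omega) hm1
        have hu0 : u ⟨m + 1 - 1, by omega⟩ = 0 := ih (m + 1 - 1) (by omega) (by omega)
        simp only [Pi.smul_apply, smul_eq_mul, hu1, hu0, mul_zero, add_zero] at hrow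
        have hβne : (β (m + 1) : ℂ) ≠ 0 := by exact_mod_cast hβ (m + 1) (by simpa using hm)
        have : (β (↑(⟨m+1, hm1⟩ : Fin q)) : ℂ) * u ⟨m + 2, _⟩ = 0 := hrow
        simp only at this
        have := mul_eq_zero.mp this
        rcases this with h | h
        · exact absurd h hβne
        · exact h
  funext i
  have := key i.1 i.2
  simpa using this

lemma exists_eigvec (q : ℕ) {A : Matrix (Fin q) (Fin q) ℂ} (hA : A.IsHermitian) (i : Fin q) :
    ∃ v : Fin q → ℂ, v ≠ 0 ∧ A.mulVec v = ((hA.eigenvalues i : ℝ) : ℂ) • v := by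
  classical
  refine ⟨(WithLp.equiv 2 _) (hA.eigenvectorBasis i), ?_, ?_⟩
  · intro h
    have : hA.eigenvectorBasis i = 0 := by
      have := congrArg (WithLp.equiv 2 (Fin q → ℂ)).symm h
      simpa using this
    have hnorm := hA.eigenvectorBasis.orthonormal.1 i
    rw [this] at hnorm
    simp at hnorm
  · have := hA.mulVec_eigenvectorBasis i
    rw [WithLp.equiv_apply, this]
    funext k
    simp [Pi.smul_apply, Complex.real_smul]

end RFPP
namespace RFPPb

variable {q : ℕ} {A : Matrix (Fin q) (Fin q) ℂ}

lemma eig_inj (hA : A.IsHermitian) (hq : 0 < q)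
    (huniq : ∀ (μ : ℂ) (u : Fin q → ℂ), A.mulVec u = μ • u → u ⟨0, hq⟩ = 0 → u = 0) :
    Function.Injective hA.eigenvalues := by
  classical
  intro i j hij
  by_contra hne
  set b := hA.eigenvectorBasis with hb
  set vi : Fin q → ℂ := (WithLp.equiv 2 _) (b i) with hvi
  set vj : Fin q → ℂ := (WithLp.equiv 2 _) (b j) with hvj
  have cast' : ∀ (r : ℝ) (w : Fin q → ℂ), r • w = ((r : ℂ)) • w := by
    intro r w; funext k; simp [Complex.real_smul]
  have hvimul : A.mulVec vi = ((hA.eigenvalues i : ℝ) : ℂ) • vi := by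
    rw [← cast']; exact hA.mulVec_eigenvectorBasis i
  have hvjmul : A.mulVec vj = ((hA.eigenvalues i : ℝ) : ℂ) • vj := by
    rw [← cast', hij]; exact hA.mulVec_eigenvectorBasis j
  have hnz : ∀ (w : Fin q → ℂ), A.mulVec w = ((hA.eigenvalues i : ℝ) : ℂ) • w →
      w ≠ 0 → w ⟨0, hq⟩ ≠ 0 := by
    intro w hw hwne h0
    exact hwne (huniq _ w hw h0)
  have hvine : vi ≠ 0 := by
    intro h
    have : b i = 0 := by
      rw [hvi] at h
      have := congrArg (WithLp.equiv 2 (Fin q → ℂ)).symm h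
      simpa using this
    have hnorm := b.orthonormal.1 i
    rw [this] at hnorm; simp at hnorm
  have hvi0 : vi ⟨0, hq⟩ ≠ 0 := hnz vi hvimul hvine
  set c : ℂ := vj ⟨0, hq⟩ / vi ⟨0, hq⟩ with hc
  have hueig : A.mulVec (vj - c • vi) = ((hA.eigenvalues i : ℝ) : ℂ) • (vj - c • vi) := by
    rw [Matrix.mulVec_sub, Matrix.mulVec_smul, hvimul, hvjmul]
    rw [smul_sub, smul_comm]
  have hu0 : (vj - c • vi) ⟨0, hq⟩ = 0 := by
    simp only [Pi.sub_apply, Pi.smul_apply, smul_eq_mul, hc]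
    field_simp
    ring
  have huz := huniq _ _ hueig hu0
  have hvjc : vj = c • vi := sub_eq_zero.mp huz
  -- now contradiction with orthonormality
  have hbj : b j = c • b i := by
    apply (WithLp.equiv 2 (Fin q → ℂ)).injective
    simpa [hvj, hvi] using hvjc
  have horth : inner ℂ (b i) (b j) = (0 : ℂ) := b.orthonormal.2 hne
  rw [hbj, inner_smul_right] at horth
  have hii : inner ℂ (b i) (b i) = (1 : ℂ) := by
    have := orthonormal_iff_ite.mp b.orthonormal i i
    simpa using this
  rw [hii, mul_one] at horth
  rw [horth] at hbj
  have hnorm := b.orthonormal.1 j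
  rw [hbj] at hnorm; simp at hnorm

lemma det_smul_one_sub_ne_zero (hA : A.IsHermitian) {μ : ℂ}
    (h : ∀ i, μ ≠ (hA.eigenvalues i : ℂ)) :
    (μ • (1 : Matrix (Fin q) (Fin q) ℂ) - A).det ≠ 0 := by
  classical
  set U : Matrix (Fin q) (Fin q) ℂ := (hA.eigenvectorUnitary : Matrix (Fin q) (Fin q) ℂ) with hU
  have hUmem := hA.eigenvectorUnitary.2
  have hU1 : U * star U = 1 := (Unitary.mem_iff.mp hUmem).2
  have hU2 : star U * U = 1 := (Unitary.mem_iff.mp hUmem).1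
  have hspec : A = U * Matrix.diagonal (RCLike.ofReal ∘ hA.eigenvalues) * star U :=
    hA.spectral_theorem
  have hconj : μ • (1 : Matrix (Fin q) (Fin q) ℂ) - A
      = U * (μ • 1 - Matrix.diagonal (RCLike.ofReal ∘ hA.eigenvalues)) * star U := by
    have hexp : U * (μ • 1 - Matrix.diagonal (RCLike.ofReal ∘ hA.eigenvalues)) * star U
        = U * (μ • 1) * star U - U * Matrix.diagonal (RCLike.ofReal ∘ hA.eigenvalues) * star U := by
      rw [Matrix.mul_sub, Matrix.sub_mul]
    rw [hexp, ← hspec]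
    congr 1
    rw [Matrix.mul_smul, mul_one, Matrix.smul_mul, hU1]
  rw [hconj, Matrix.det_mul, Matrix.det_mul]
  have hdetU : U.det * (star U).det = 1 := by
    rw [← Matrix.det_mul, hU1, Matrix.det_one]
  have hdiag : (μ • (1 : Matrix (Fin q) (Fin q) ℂ)
      - Matrix.diagonal (RCLike.ofReal ∘ hA.eigenvalues)).det
      = ∏ i, (μ - (hA.eigenvalues i : ℂ)) := by
    have : μ • (1 : Matrix (Fin q) (Fin q) ℂ)
        - Matrix.diagonal (RCLike.ofReal ∘ hA.eigenvalues)
        = Matrix.diagonal (fun i => μ - (hA.eigenvalues i : ℂ)) := by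
      ext i j
      by_cases hij : i = j
      · subst hij; simp [Matrix.diagonal_apply_eq]
      · simp [Matrix.one_apply_ne hij, Matrix.diagonal_apply_ne _ hij]
    rw [this, Matrix.det_diagonal]
  intro hzero
  have h1 : U.det ≠ 0 := left_ne_zero_of_mul_eq_one hdetU
  have h2 : (star U).det ≠ 0 := right_ne_zero_of_mul_eq_one hdetU
  rcases mul_eq_zero.mp hzero with h' | h'
  · rcases mul_eq_zero.mp h' with h'' | h''
    · exact h1 h''
    · rw [hdiag] at h''
      obtain ⟨i, _, hi⟩ := Finset.prod_eq_zero_iff.mp h''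
      exact h i (sub_eq_zero.mp hi)
  · exact h2 h'

lemma det_smul_one_add (q : ℕ) (β : ℕ → ℝ) (μ : ℂ)
    (B : Matrix (Fin q) (Fin q) ℂ)
    (hBd : ∀ i, B i i = 0)
    (hBo : ∀ i j : Fin q, (i:ℕ) + 1 ≠ (j:ℕ) → (j:ℕ) + 1 ≠ (i:ℕ) → i ≠ j → B i j = 0) :
    (μ • (1 : Matrix (Fin q) (Fin q) ℂ) + B).det
      = (μ • (1 : Matrix (Fin q) (Fin q) ℂ) - B).det := by
  classical
  set D : Matrix (Fin q) (Fin q) ℂ := Matrix.diagonal (fun k : Fin q => (-1 : ℂ) ^ (k : ℕ)) with hD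
  have hDD : D * D = 1 := by
    rw [hD, Matrix.diagonal_mul_diagonal]
    ext i j
    by_cases hij : i = j
    · subst hij
      simp [← mul_pow]
    · simp [Matrix.diagonal_apply_ne _ hij, Matrix.one_apply_ne hij]
  have hkey : μ • (1 : Matrix (Fin q) (Fin q) ℂ) + B = D * (μ • 1 - B) * D := by
    have entry : ∀ i j : Fin q, (D * (μ • 1 - B) * D) i j
        = (-1 : ℂ) ^ (i : ℕ) * ((μ • (1 : Matrix (Fin q) (Fin q) ℂ) - B) i j) * (-1 : ℂ) ^ (j : ℕ) := by
      intro i j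
      rw [hD, Matrix.mul_diagonal, Matrix.diagonal_mul]
    ext i j
    rw [entry]
    by_cases hij : i = j
    · subst hij
      have hsq : (-1 : ℂ) ^ (i : ℕ) * (-1 : ℂ) ^ (i : ℕ) = 1 := by
        rw [← mul_pow]; norm_num
      simp only [Matrix.add_apply, Matrix.sub_apply, Matrix.smul_apply, Matrix.one_apply_eq,
        hBd i, smul_eq_mul, mul_one, sub_zero, add_zero]
      linear_combination (-μ) * hsq
    · simp only [Matrix.add_apply, Matrix.sub_apply, Matrix.smul_apply,
        Matrix.one_apply_ne hij, smul_eq_mul, mul_zero, zero_add, zero_sub]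
      by_cases h1 : (i : ℕ) + 1 = (j : ℕ)
      · have hj : (-1 : ℂ) ^ (j : ℕ) = -(-1 : ℂ) ^ (i : ℕ) := by
          rw [← h1, pow_succ]; ring
        have hsq : (-1 : ℂ) ^ (i : ℕ) * (-1 : ℂ) ^ (i : ℕ) = 1 := by
          rw [← mul_pow]; norm_num
        rw [hj]
        linear_combination (-(B i j)) * hsq
      · by_cases h2 : (j : ℕ) + 1 = (i : ℕ)
        · have hi' : (-1 : ℂ) ^ (i : ℕ) = -(-1 : ℂ) ^ (j : ℕ) := by
            rw [← h2, pow_succ]; ring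
          have hsq : (-1 : ℂ) ^ (j : ℕ) * (-1 : ℂ) ^ (j : ℕ) = 1 := by
            rw [← mul_pow]; norm_num
          rw [hi']
          linear_combination (-(B i j)) * hsq
        · rw [hBo i j h1 h2 hij]
          ring
  rw [hkey, Matrix.det_mul, Matrix.det_mul]
  have : D.det * D.det = 1 := by rw [← Matrix.det_mul, hDD, Matrix.det_one]
  linear_combination (μ • (1 : Matrix (Fin q) (Fin q) ℂ) - B).det * this

end RFPPb
lemma RFPP.lp_coeFn_sum {ι : Type*} (s : Finset ι) (f : ι → lp (fun _ : ℤ => ℂ) 2) :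
    ((∑ i ∈ s, f i : lp (fun _ : ℤ => ℂ) 2) : ∀ _ : ℤ, ℂ) = ∑ i ∈ s, ((f i : ∀ _ : ℤ, ℂ)) := by
  classical
  induction s using Finset.induction_on with
  | empty => simp; rfl
  | insert _ _ h ih =>
    rw [Finset.sum_insert h, Finset.sum_insert h, lp.coeFn_add, ih]

noncomputable def RFPP.evalLM (j : ℤ) : lp (fun _ : ℤ => ℂ) 2 →ₗ[ℂ] ℂ where
  toFun φ := φ j
  map_add' f g := by
    have := congrFun (lp.coeFn_add f g) j
    simpa using this
  map_smul' a f := by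
    have := congrFun (lp.coeFn_smul a f) j
    simpa using this

set_option maxHeartbeats 1600000

/-- For rational `α = p/q` in lowest terms such that `αj + θ + 1/2 ∈ ℤ` for
some `j = 0, …, q−1`, the spectrum of `L_{α,θ}` consists of exactly `q` distinct real
numbers, each an eigenvalue with infinite-dimensional eigenspace. -/
theorem rational_flux_pure_point_spectrum
    (p : ℤ) (q : ℕ) (hq : 1 ≤ q) (hcop : Int.gcd p (q : ℤ) = 1)
    (α θ : ℝ) (hα : α = (p : ℝ) / (q : ℝ))
    (hθ : ∃ j : ℕ, j < q ∧ ∃ m : ℤ, α * (j : ℝ) + θ + 1 / 2 = (m : ℝ))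
    (L : lp (fun _ : ℤ => ℂ) 2 →L[ℂ] lp (fun _ : ℤ => ℂ) 2)
    (hL : ∀ (φ : lp (fun _ : ℤ => ℂ) 2) (j : ℤ),
      L φ j = ((2 * Real.cos (π * (α * (j : ℝ) + θ)) : ℝ) : ℂ) * φ (j + 1)
        + ((2 * Real.cos (π * (α * ((j : ℝ) - 1) + θ)) : ℝ) : ℂ) * φ (j - 1)) :
    ∃ S : Finset ℝ, S.card = q ∧
      spectrum ℂ L = Complex.ofReal '' (S : Set ℝ) ∧
      ∀ μ ∈ S,
        (∃ φ : lp (fun _ : ℤ => ℂ) 2, φ ≠ 0 ∧ L φ = (μ : ℂ) • φ) ∧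
        ¬ FiniteDimensional ℂ
          (LinearMap.ker (L - (μ : ℂ) • (1 : lp (fun _ : ℤ => ℂ) 2 →L[ℂ] lp (fun _ : ℤ => ℂ) 2)).toLinearMap) := by
  classical
  have hq0 : 0 < q := hq
  obtain ⟨j₀n, hj₀lt, m₀, hm₀⟩ := hθ
  set j₀ : ℤ := (j₀n : ℤ) with hj₀def
  set c : ℤ → ℝ := fun j => 2 * Real.cos (π * (α * (j : ℝ) + θ)) with hcdef
  have hqR : (q : ℝ) ≠ 0 := Nat.cast_ne_zero.mpr (by omega)
  have hqZ : (q : ℤ) ≠ 0 := by exact_mod_cast (by omega : q ≠ 0)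
  have hαq : α * (q : ℝ) = (p : ℝ) := by rw [hα]; field_simp
  have hαj₀ : α * ((j₀ : ℤ) : ℝ) + θ = (m₀ : ℝ) - 1 / 2 := by
    rw [hj₀def]; push_cast; linarith [hm₀]
  have hL' : ∀ (φ : lp (fun _ : ℤ => ℂ) 2) (j : ℤ),
      L φ j = ((c j : ℝ) : ℂ) * φ (j + 1) + ((c (j - 1) : ℝ) : ℂ) * φ (j - 1) := by
    intro φ j
    have hcast : α * ((j : ℝ) - 1) + θ = α * ((j - 1 : ℤ) : ℝ) + θ := by push_cast; ring
    rw [hL φ j, hcast, hcdef]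
  set σ : ℤ → ℝ := fun n => if Even (p * n) then 1 else -1 with hσdef
  have hσ1 : ∀ n : ℤ, σ n = 1 ∨ σ n = -1 := by
    intro n; rw [hσdef]; by_cases h : Even (p * n) <;> simp [h]
  have hσeven : ∀ m : ℤ, σ (2 * m) = 1 := by
    intro m; rw [hσdef];
    exact if_pos ⟨p * m, by ring⟩
  have hcσ : ∀ (n j : ℤ), c (j + q * n) = σ n * c j := by
    intro n j
    rw [hcdef, hσdef]
    simp only []
    have h1 : π * (α * ((j + q * n : ℤ) : ℝ) + θ)
        = π * (α * (j : ℝ) + θ) + ((p * n : ℤ) : ℝ) * π := by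
      push_cast
      have h2 : α * ((j : ℝ) + (q : ℝ) * (n : ℝ)) = α * (j : ℝ) + α * (q : ℝ) * (n : ℝ) := by ring
      rw [h2, hαq]; ring
    rw [h1, RFPP.cos_add_int_mul_pi]
    by_cases h : Even (p * n) <;> simp [h] <;> ring
  have hcj₀ : c j₀ = 0 := by
    rw [hcdef]
    simp only []
    have hz : Real.cos (π * (α * ((j₀ : ℤ) : ℝ) + θ)) = 0 := by
      rw [Real.cos_eq_zero_iff]
      exact ⟨m₀ - 1, by rw [hαj₀]; push_cast; ring⟩
    rw [hz]; ring
  have hczero : ∀ d : ℤ, c (j₀ + q * d) = 0 := fun d => by rw [hcσ d j₀, hcj₀, mul_zero]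
  have hcne : ∀ j : ℤ, c j = 0 → (q : ℤ) ∣ (j - j₀) := by
    intro j hcz
    rw [hcdef] at hcz
    simp only [] at hcz
    have h2 : Real.cos (π * (α * (j : ℝ) + θ)) = 0 := by linarith
    rw [Real.cos_eq_zero_iff] at h2
    obtain ⟨k, hk⟩ := h2
    have hpi := Real.pi_ne_zero
    have h3 : α * (j : ℝ) + θ = (k : ℝ) + 1 / 2 := by
      have h4 : (2 * (α * (j : ℝ) + θ) - (2 * (k : ℝ) + 1)) * π = 0 := by
        field_simp at hk; rw [show 2 * (α * (j : ℝ) + θ) - (2 * (k : ℝ) + 1) = 0 by linarith [hk], zero_mul]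
      rcases mul_eq_zero.mp h4 with h | h
      · linarith
      · exact absurd h hpi
    have h5 : α * ((j : ℝ) - ((j₀ : ℤ) : ℝ)) = (k : ℝ) - (m₀ : ℝ) + 1 := by
      have hr : α * ((j : ℝ) - ((j₀ : ℤ) : ℝ))
          = (α * (j : ℝ) + θ) - (α * ((j₀ : ℤ) : ℝ) + θ) := by ring
      rw [hr, h3, hαj₀]; ring
    have h6 : (p : ℝ) * ((j : ℝ) - ((j₀ : ℤ) : ℝ)) = ((k - m₀ + 1 : ℤ) : ℝ) * (q : ℝ) := by
      have h7 : (p : ℝ) * ((j : ℝ) - ((j₀ : ℤ) : ℝ))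
          = α * ((j : ℝ) - ((j₀ : ℤ) : ℝ)) * (q : ℝ) := by
        rw [hα]; field_simp
      rw [h7, h5]; push_cast; ring
    have h8 : p * (j - j₀) = (k - m₀ + 1) * (q : ℤ) := by exact_mod_cast h6
    have hdvd : (q : ℤ) ∣ p * (j - j₀) := ⟨k - m₀ + 1, by rw [h8]; ring⟩
    have hcop' : IsCoprime (q : ℤ) p := by
      rw [Int.isCoprime_iff_gcd_eq_one, Int.gcd_comm]
      exact hcop
    exact hcop'.dvd_of_dvd_mul_left hdvd
  -- the off-diagonal sequence
  set β : ℕ → ℝ := fun k => c (j₀ + 1 + (k : ℤ)) with hβdef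
  have hβ : ∀ k : ℕ, k + 1 < q → β k ≠ 0 := by
    intro k hk hzero
    rw [hβdef] at hzero
    have hd := hcne _ hzero
    have hd2 : (q : ℤ) ∣ ((k : ℤ) + 1) := by
      have : j₀ + 1 + (k : ℤ) - j₀ = (k : ℤ) + 1 := by ring
      rwa [this] at hd
    have := Int.le_of_dvd (by positivity) hd2
    omega
  have hβq : β (q - 1) = 0 := by
    rw [hβdef]
    have hcast : j₀ + 1 + ((q - 1 : ℕ) : ℤ) = j₀ + (q : ℤ) * 1 := by
      push_cast [Nat.cast_sub hq]; ring
    simp only []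
    rw [hcast]
    exact hczero 1
  -- the block matrix
  set A : Matrix (Fin q) (Fin q) ℂ := RFPP.triA q β with hAdef
  have hAH : A.IsHermitian := by rw [hAdef]; exact RFPP.triA_isHermitian q β
  have hAdiag : ∀ i : Fin q, A i i = 0 := by
    intro i; rw [hAdef, RFPP.triA_apply, if_neg (by omega), if_neg (by omega)]
  have hAoff : ∀ i j : Fin q, (i : ℕ) + 1 ≠ (j : ℕ) → (j : ℕ) + 1 ≠ (i : ℕ) → i ≠ j → A i j = 0 := by
    intro i j h1 h2 _
    rw [hAdef, RFPP.triA_apply, if_neg h1, if_neg h2]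
  have huniq : ∀ (μ : ℂ) (u : Fin q → ℂ), A.mulVec u = μ • u → u ⟨0, hq0⟩ = 0 → u = 0 := by
    intro μ u hu h0
    rw [hAdef] at hu
    exact RFPP.triA_eigen_unique q β hq0 hβ μ u hu h0
  -- block indexing
  set e : ℤ → ℕ → ℤ := fun n k => j₀ + 1 + n * q + k with hedef
  set bn : ℤ → ℤ := fun j => (j - j₀ - 1) / q with hbndef
  set br : ℤ → ℕ := fun j => ((j - j₀ - 1) % q).toNat with hbrdef
  have hbr_lt : ∀ j : ℤ, br j < q := by
    intro j
    rw [hbrdef]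
    simp only []
    have h1 : 0 ≤ (j - j₀ - 1) % q := Int.emod_nonneg _ hqZ
    have h2 : (j - j₀ - 1) % q < q := Int.emod_lt_of_pos _ (by exact_mod_cast hq0)
    omega
  have h_e_br : ∀ j : ℤ, e (bn j) (br j) = j := by
    intro j
    rw [hedef, hbndef, hbrdef]
    simp only []
    have h1 : 0 ≤ (j - j₀ - 1) % q := Int.emod_nonneg _ hqZ
    have h3 := Int.mul_ediv_add_emod (j - j₀ - 1) (q : ℤ)
    have h4 : ((j - j₀ - 1) / q) * (q : ℤ) = (q : ℤ) * ((j - j₀ - 1) / q) := mul_comm _ _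
    rw [Int.toNat_of_nonneg h1]
    linarith
  have hbn_e : ∀ (n : ℤ) (k : ℕ), k < q → bn (e n k) = n := by
    intro n k hk
    rw [hedef, hbndef]
    simp only []
    have h1 : j₀ + 1 + n * q + (k : ℤ) - j₀ - 1 = (k : ℤ) + n * (q : ℤ) := by ring
    rw [h1, Int.add_mul_ediv_right _ _ hqZ, Int.ediv_eq_zero_of_lt (by positivity) (by exact_mod_cast hk), zero_add]
  have hbr_e : ∀ (n : ℤ) (k : ℕ), k < q → br (e n k) = k := by
    intro n k hk
    rw [hedef, hbrdef]
    simp only []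
    have h1 : j₀ + 1 + n * q + (k : ℤ) - j₀ - 1 = (k : ℤ) + n * (q : ℤ) := by ring
    rw [h1, Int.add_mul_emod_self_right, Int.emod_eq_of_lt (by positivity) (by exact_mod_cast hk)]
    exact Int.toNat_natCast k
  have hce : ∀ (n : ℤ) (k : ℕ), c (e n k) = σ n * β k := by
    intro n k
    have h1 : e n k = (j₀ + 1 + (k : ℤ)) + (q : ℤ) * n := by rw [hedef]; ring
    rw [h1, hcσ]
  -- the fundamental pointwise identity
  have hkey : ∀ (φ : lp (fun _ : ℤ => ℂ) 2) (μ : ℂ) (n : ℤ) (k : Fin q),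
      ((μ • (1 : Matrix (Fin q) (Fin q) ℂ) - ((σ n : ℝ) : ℂ) • A).mulVec
          (fun k' : Fin q => φ (e n (k' : ℕ)))) k
        = μ * φ (e n (k : ℕ)) - L φ (e n (k : ℕ)) := by
    intro φ μ n k
    rw [Matrix.sub_mulVec, Matrix.smul_mulVec, Matrix.smul_mulVec, Matrix.one_mulVec]
    simp only [Pi.sub_apply, Pi.smul_apply, smul_eq_mul]
    rw [hAdef, RFPP.triA_mulVec, hL' φ (e n (k : ℕ))]
    have hck : c (e n (k : ℕ)) = σ n * β (k : ℕ) := hce n k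
    have he1 : e n (k : ℕ) + 1 = e n ((k : ℕ) + 1) := by rw [hedef]; push_cast; ring
    by_cases hk1 : (k : ℕ) + 1 < q
    · rw [dif_pos hk1]
      by_cases hk0 : 0 < (k : ℕ)
      · rw [if_pos hk0]
        have he2 : e n (k : ℕ) - 1 = e n ((k : ℕ) - 1) := by
          rw [hedef]
          push_cast [Nat.cast_sub hk0]
          ring
        have hck2 : c (e n (k : ℕ) - 1) = σ n * β ((k : ℕ) - 1) := by
          rw [he2]; exact hce n _
        rw [hck, hck2, he1, he2]
        push_cast
        ring
      · rw [if_neg hk0]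
        have hk0' : (k : ℕ) = 0 := by omega
        have he2 : e n (k : ℕ) - 1 = j₀ + (q : ℤ) * n := by
          rw [hedef, hk0']
          push_cast
          ring
        have hck2 : c (e n (k : ℕ) - 1) = 0 := by rw [he2]; exact hczero n
        rw [hck, hck2, he1]
        push_cast
        ring
    · rw [dif_neg hk1]
      have hkq : (k : ℕ) = q - 1 := by omega
      have hβk : β (k : ℕ) = 0 := by rw [hkq]; exact hβq
      by_cases hk0 : 0 < (k : ℕ)
      · rw [if_pos hk0]
        have he2 : e n (k : ℕ) - 1 = e n ((k : ℕ) - 1) := by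
          rw [hedef]
          push_cast [Nat.cast_sub hk0]
          ring
        have hck2 : c (e n (k : ℕ) - 1) = σ n * β ((k : ℕ) - 1) := by
          rw [he2]; exact hce n _
        rw [hck, hck2, hβk, he2]
        push_cast
        ring
      · rw [if_neg hk0]
        have hk0' : (k : ℕ) = 0 := by omega
        have he2 : e n (k : ℕ) - 1 = j₀ + (q : ℤ) * n := by
          rw [hedef, hk0']
          push_cast
          ring
        have hck2 : c (e n (k : ℕ) - 1) = 0 := by rw [he2]; exact hczero n
        rw [hck, hck2, hβk]
        push_cast
        ring
  -- eigenvalue set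
  set S : Finset ℝ := Finset.image hAH.eigenvalues Finset.univ with hSdef
  have hSmem : ∀ μ : ℂ, μ ∉ Complex.ofReal '' (S : Set ℝ) → ∀ i, μ ≠ (hAH.eigenvalues i : ℂ) := by
    intro μ hμ i h
    exact hμ ⟨hAH.eigenvalues i, by rw [hSdef]; simp, h.symm⟩
  have hdetU : ∀ μ : ℂ, μ ∉ Complex.ofReal '' (S : Set ℝ) → ∀ n : ℤ,
      IsUnit (μ • (1 : Matrix (Fin q) (Fin q) ℂ) - ((σ n : ℝ) : ℂ) • A).det := by
    intro μ hμ n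
    have hne := hSmem μ hμ
    apply isUnit_iff_ne_zero.mpr
    rcases hσ1 n with h | h
    · rw [h]
      have h1 : (((1 : ℝ) : ℂ)) • A = A := by norm_num
      rw [h1]
      exact RFPPb.det_smul_one_sub_ne_zero hAH hne
    · rw [h]
      have h1 : (((-1 : ℝ) : ℂ)) • A = -A := by
        rw [show (((-1 : ℝ) : ℂ)) = -1 by norm_num, neg_one_smul]
      rw [h1, sub_neg_eq_add, RFPPb.det_smul_one_add q β μ A hAdiag hAoff]
      exact RFPPb.det_smul_one_sub_ne_zero hAH hne
  have hUnit : ∀ μ : ℂ, μ ∉ Complex.ofReal '' (S : Set ℝ) →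
      IsUnit ((algebraMap ℂ (lp (fun _ : ℤ => ℂ) 2 →L[ℂ] lp (fun _ : ℤ => ℂ) 2)) μ - L) := by
    intro μ hμ
    set T : lp (fun _ : ℤ => ℂ) 2 →L[ℂ] lp (fun _ : ℤ => ℂ) 2
      := (algebraMap ℂ (lp (fun _ : ℤ => ℂ) 2 →L[ℂ] lp (fun _ : ℤ => ℂ) 2)) μ - L with hTdef
    have hT : ∀ (φ : lp (fun _ : ℤ => ℂ) 2) (j : ℤ), T φ j = μ * φ j - L φ j := by
      intro φ j
      rw [hTdef, Algebra.algebraMap_eq_smul_one]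
      rw [ContinuousLinearMap.sub_apply, ContinuousLinearMap.smul_apply,
        ContinuousLinearMap.one_apply]
      have h1 := congrFun (lp.coeFn_sub (μ • φ) (L φ)) j
      have h2 := congrFun (lp.coeFn_smul μ φ) j
      simp only [Pi.sub_apply, Pi.smul_apply, smul_eq_mul] at h1 h2
      rw [h1, h2]
    set M : ℤ → Matrix (Fin q) (Fin q) ℂ
      := fun n => μ • (1 : Matrix (Fin q) (Fin q) ℂ) - ((σ n : ℝ) : ℂ) • A with hMdef
    set G : ℤ → Matrix (Fin q) (Fin q) ℂ := fun n => (M n)⁻¹ with hGdef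
    have hdet : ∀ n, IsUnit (M n).det := fun n => hdetU μ hμ n
    have hMG : ∀ n, M n * G n = 1 := fun n => Matrix.mul_nonsing_inv _ (hdet n)
    have hGM : ∀ n, G n * M n = 1 := fun n => Matrix.nonsing_inv_mul _ (hdet n)
    have hker : LinearMap.ker T.toLinearMap = ⊥ := by
      rw [LinearMap.ker_eq_bot']
      intro φ hφ
      change T φ = 0 at hφ
      have hφ0 : ∀ j : ℤ, T φ j = 0 := by
        intro j
        rw [hφ]
        exact congrFun (lp.coeFn_zero _ _) j
      have hvec : ∀ n : ℤ, (fun k : Fin q => (φ : ∀ _ : ℤ, ℂ) (e n (k : ℕ))) = 0 := by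
        intro n
        have hmv : (M n).mulVec (fun k : Fin q => (φ : ∀ _ : ℤ, ℂ) (e n (k : ℕ))) = 0 := by
          funext k
          rw [hMdef]
          simp only []
          rw [hkey φ μ n k, ← hT φ (e n (k : ℕ)), hφ0]
          rfl
        have h2 := congrArg (fun v => (G n).mulVec v) hmv
        simp only [] at h2
        rw [Matrix.mulVec_mulVec, hGM n, Matrix.one_mulVec, Matrix.mulVec_zero] at h2
        exact h2
      apply lp.ext
      funext j
      have h3 := congrFun (hvec (bn j)) ⟨br j, hbr_lt j⟩
      have h4 : e (bn j) ((⟨br j, hbr_lt j⟩ : Fin q) : ℕ) = j := h_e_br j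
      rw [h4] at h3
      simpa using h3
    have hrange : LinearMap.range T.toLinearMap = ⊤ := by
      rw [LinearMap.range_eq_top]
      intro ψ
      set w : ℤ → Fin q → ℂ
        := fun n => (G n).mulVec (fun k : Fin q => (ψ : ∀ _ : ℤ, ℂ) (e n (k : ℕ))) with hwdef
      set φf : ℤ → ℂ := fun j => w (bn j) ⟨br j, hbr_lt j⟩ with hφfdef
      set Eqv : ℤ × Fin q ≃ ℤ :=
        { toFun := fun x => e x.1 (x.2 : ℕ)
          invFun := fun j => (bn j, ⟨br j, hbr_lt j⟩)
          left_inv := by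
            rintro ⟨n, k⟩
            have h1 : bn (e n (k : ℕ)) = n := hbn_e n k k.2
            have h2 : (⟨br (e n (k : ℕ)), hbr_lt _⟩ : Fin q) = k :=
              Fin.ext (by simpa using hbr_e n k k.2)
            simp only []
            rw [Prod.ext_iff]
            exact ⟨h1, h2⟩
          right_inv := fun j => h_e_br j } with hEqvdef
    -- summability of coordinates
      have hp2 : ∀ x : ℝ, x ^ ((2 : ENNReal).toReal) = x ^ (2 : ℕ) := by
        intro x
        rw [ENNReal.toReal_ofNat]
        rw [show (2 : ℝ) = ((2 : ℕ) : ℝ) by norm_num, Real.rpow_natCast]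
      have hψsq : Summable (fun j : ℤ => ‖(ψ : ∀ _ : ℤ, ℂ) j‖ ^ (2 : ℕ)) := by
        have h1 := (memℓp_gen_iff
          (by norm_num : (0 : ℝ) < (2 : ENNReal).toReal)).mp (lp.memℓp ψ)
        exact (h1.congr fun j => hp2 _)
      set H : ℤ → ℝ := fun n => ∑ k : Fin q, ‖(ψ : ∀ _ : ℤ, ℂ) (e n (k : ℕ))‖ ^ (2 : ℕ) with hHdef
      have hHnn : ∀ n, 0 ≤ H n := fun n => Finset.sum_nonneg fun k _ => by positivity
      have hsum1 : Summable (fun x : ℤ × Fin q => ‖(ψ : ∀ _ : ℤ, ℂ) (e x.1 (x.2 : ℕ))‖ ^ (2 : ℕ)) :=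
        (Eqv.summable_iff (f := fun j : ℤ => ‖(ψ : ∀ _ : ℤ, ℂ) j‖ ^ (2 : ℕ))).mpr hψsq
      have hH : Summable H := by
        have h2 := ((summable_prod_of_nonneg (fun x => by positivity)).mp hsum1).2
        exact h2.congr fun n => by rw [tsum_fintype]
      have hHb : Summable (fun j : ℤ => H (bn j)) := by
        apply (Eqv.summable_iff (f := fun j : ℤ => H (bn j))).mp
        have hps : Summable (fun x : ℤ × Fin q => H x.1) := by
          apply (summable_prod_of_nonneg (fun x => hHnn x.1)).mpr
          refine ⟨fun n => Summable.of_finite, ?_⟩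
          have heq : (fun n : ℤ => ∑' (_ : Fin q), H n) = fun n => (q : ℝ) * H n := by
            funext n
            rw [tsum_fintype]
            simp [Finset.sum_const, Finset.card_univ, nsmul_eq_mul]
          rw [heq]
          exact hH.mul_left _
        apply hps.congr
        intro x
        show H x.1 = H (bn (Eqv x))
        have : bn (Eqv x) = x.1 := hbn_e x.1 x.2 x.2.2
        rw [this]
      obtain ⟨C, hC0, hGC⟩ : ∃ C : ℝ, 0 ≤ C ∧ ∀ (n : ℤ) (a b : Fin q), ‖G n a b‖ ≤ C := by
        refine ⟨(∑ a : Fin q, ∑ b : Fin q,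
            ‖(μ • (1 : Matrix (Fin q) (Fin q) ℂ) - (((1 : ℝ) : ℂ)) • A)⁻¹ a b‖)
          + (∑ a : Fin q, ∑ b : Fin q,
            ‖(μ • (1 : Matrix (Fin q) (Fin q) ℂ) - (((-1 : ℝ) : ℂ)) • A)⁻¹ a b‖), ?_, ?_⟩
        · positivity
        · intro n a b
          have hentry : ∀ (N : Matrix (Fin q) (Fin q) ℂ) (a b : Fin q),
              ‖N a b‖ ≤ ∑ a' : Fin q, ∑ b' : Fin q, ‖N a' b'‖ := by
            intro N a b
            calc ‖N a b‖ ≤ ∑ b' : Fin q, ‖N a b'‖ :=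
                Finset.single_le_sum (fun _ _ => norm_nonneg _) (Finset.mem_univ b)
              _ ≤ ∑ a' : Fin q, ∑ b' : Fin q, ‖N a' b'‖ :=
                Finset.single_le_sum (f := fun a' => ∑ b' : Fin q, ‖N a' b'‖)
                  (fun _ _ => Finset.sum_nonneg fun _ _ => norm_nonneg _) (Finset.mem_univ a)
          rcases hσ1 n with h | h
          · rw [hGdef]
            simp only [hMdef, h]
            exact le_add_of_le_of_nonneg (hentry _ a b) (by positivity)
          · rw [hGdef]
            simp only [hMdef, h]
            exact le_add_of_nonneg_of_le (by positivity) (hentry _ a b)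
      have hwb : ∀ (n : ℤ) (k : Fin q), ‖w n k‖ ^ (2 : ℕ) ≤ C ^ 2 * (q : ℝ) * H n := by
        intro n k
        have h1 : ‖w n k‖ ≤ C * ∑ k' : Fin q, ‖(ψ : ∀ _ : ℤ, ℂ) (e n (k' : ℕ))‖ := by
          rw [hwdef]
          simp only [Matrix.mulVec, dotProduct]
          calc ‖∑ k' : Fin q, G n k k' * (ψ : ∀ _ : ℤ, ℂ) (e n (k' : ℕ))‖
              ≤ ∑ k' : Fin q, ‖G n k k' * (ψ : ∀ _ : ℤ, ℂ) (e n (k' : ℕ))‖ := norm_sum_le _ _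
            _ ≤ ∑ k' : Fin q, C * ‖(ψ : ∀ _ : ℤ, ℂ) (e n (k' : ℕ))‖ := by
                apply Finset.sum_le_sum
                intro k' _
                rw [norm_mul]
                exact mul_le_mul_of_nonneg_right (hGC n k k') (norm_nonneg _)
            _ = C * ∑ k' : Fin q, ‖(ψ : ∀ _ : ℤ, ℂ) (e n (k' : ℕ))‖ := by rw [Finset.mul_sum]
        have h2 : ‖w n k‖ ^ (2 : ℕ)
            ≤ (C * ∑ k' : Fin q, ‖(ψ : ∀ _ : ℤ, ℂ) (e n (k' : ℕ))‖) ^ 2 :=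
          pow_le_pow_left₀ (norm_nonneg _) h1 2
        have h3 : (∑ k' : Fin q, ‖(ψ : ∀ _ : ℤ, ℂ) (e n (k' : ℕ))‖) ^ 2
            ≤ (q : ℝ) * ∑ k' : Fin q, ‖(ψ : ∀ _ : ℤ, ℂ) (e n (k' : ℕ))‖ ^ 2 := by
          have := sq_sum_le_card_mul_sum_sq (s := (Finset.univ : Finset (Fin q)))
            (f := fun k' : Fin q => ‖(ψ : ∀ _ : ℤ, ℂ) (e n (k' : ℕ))‖)
          simpa using this
        calc ‖w n k‖ ^ (2 : ℕ)
            ≤ (C * ∑ k' : Fin q, ‖(ψ : ∀ _ : ℤ, ℂ) (e n (k' : ℕ))‖) ^ 2 := h2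
          _ = C ^ 2 * (∑ k' : Fin q, ‖(ψ : ∀ _ : ℤ, ℂ) (e n (k' : ℕ))‖) ^ 2 := by ring
          _ ≤ C ^ 2 * ((q : ℝ) * ∑ k' : Fin q, ‖(ψ : ∀ _ : ℤ, ℂ) (e n (k' : ℕ))‖ ^ 2) :=
              mul_le_mul_of_nonneg_left h3 (by positivity)
          _ = C ^ 2 * (q : ℝ) * H n := by rw [hHdef]; ring
      have hmem : Memℓp φf 2 := by
        apply memℓp_gen
        have hs : Summable (fun j : ℤ => ‖φf j‖ ^ (2 : ℕ)) := by
          apply Summable.of_nonneg_of_le (fun j => by positivity) (fun j => ?_)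
            (hHb.mul_left (C ^ 2 * (q : ℝ)))
          rw [hφfdef]
          simp only []
          calc ‖w (bn j) ⟨br j, hbr_lt j⟩‖ ^ (2 : ℕ) ≤ C ^ 2 * (q : ℝ) * H (bn j) := hwb _ _
            _ = C ^ 2 * (q : ℝ) * H (bn j) := rfl
        exact hs.congr fun j => (hp2 _).symm
      refine ⟨⟨φf, hmem⟩, ?_⟩
      apply lp.ext
      funext j
      have hje : e (bn j) ((⟨br j, hbr_lt j⟩ : Fin q) : ℕ) = j := h_e_br j
      have hweq : (fun k' : Fin q =>
          ((⟨φf, hmem⟩ : lp (fun _ : ℤ => ℂ) 2) : ∀ _ : ℤ, ℂ) (e (bn j) (k' : ℕ))) = w (bn j) := by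
        funext k'
        show φf (e (bn j) (k' : ℕ)) = w (bn j) k'
        rw [hφfdef]
        simp only []
        have h1 : bn (e (bn j) (k' : ℕ)) = bn j := hbn_e (bn j) k' k'.2
        have h2 : (⟨br (e (bn j) (k' : ℕ)), hbr_lt _⟩ : Fin q) = k' :=
          Fin.ext (by simpa using hbr_e (bn j) k' k'.2)
        rw [h1, h2]
      have hkeyj := hkey ⟨φf, hmem⟩ μ (bn j) ⟨br j, hbr_lt j⟩
      rw [hje, hweq] at hkeyj
      have hTj : T ⟨φf, hmem⟩ j = μ * φf j - L ⟨φf, hmem⟩ j := hT _ j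
      change (T ⟨φf, hmem⟩ : ∀ _ : ℤ, ℂ) j = (ψ : ∀ _ : ℤ, ℂ) j
      rw [hTj, ← hkeyj]
      rw [hwdef]
      simp only []
      rw [Matrix.mulVec_mulVec, hMG (bn j), Matrix.one_mulVec]
      rw [hje]
    haveI : CompleteSpace (lp (fun _ : ℤ => ℂ) 2) := by infer_instance
    have hTE : ∀ x, T x = (ContinuousLinearEquiv.ofBijective T hker hrange) x := fun x =>
      (DFunLike.congr_fun (ContinuousLinearEquiv.coe_ofBijective T hker hrange) x).symm
    refine isUnit_iff_exists.mpr
      ⟨((ContinuousLinearEquiv.ofBijective T hker hrange).symm :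
          lp (fun _ : ℤ => ℂ) 2 →L[ℂ] lp (fun _ : ℤ => ℂ) 2), ?_, ?_⟩
    · refine ContinuousLinearMap.ext fun x => ?_
      rw [ContinuousLinearMap.mul_apply, ContinuousLinearMap.one_apply,
        ContinuousLinearEquiv.coe_coe]
      rw [hTE]
      exact (ContinuousLinearEquiv.ofBijective T hker hrange).apply_symm_apply x
    · refine ContinuousLinearMap.ext fun x => ?_
      rw [ContinuousLinearMap.mul_apply, ContinuousLinearMap.one_apply,
        ContinuousLinearEquiv.coe_coe]
      rw [hTE]
      exact (ContinuousLinearEquiv.ofBijective T hker hrange).symm_apply_apply x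
  -- eigenvector families
  have hsingle : ∀ (a : ℂ) (i j : ℤ),
      (lp.single (E := fun _ : ℤ => ℂ) 2 i a : ∀ _ : ℤ, ℂ) j = if j = i then a else 0 := by
    intro a i j
    rw [lp.single_apply, Pi.single_apply]
  have hEig : ∀ μ₀ : ℝ, μ₀ ∈ S → ∃ (Φ : ℤ → lp (fun _ : ℤ => ℂ) 2) (J : ℤ → ℤ) (z : ℂ),
      z ≠ 0 ∧ (∀ m : ℤ, L (Φ m) = (μ₀ : ℂ) • Φ m) ∧
      (∀ m m' : ℤ, (Φ m : ∀ _ : ℤ, ℂ) (J m') = if m' = m then z else 0) := by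
    intro μ₀ hμ₀
    rw [hSdef] at hμ₀
    obtain ⟨i, _, hi⟩ := Finset.mem_image.mp hμ₀
    obtain ⟨v, hv0, hv⟩ := RFPP.exists_eigvec q hAH i
    rw [hi] at hv
    obtain ⟨k₀, hk₀⟩ : ∃ k₀ : Fin q, v k₀ ≠ 0 := by
      by_contra h
      push_neg at h
      exact hv0 (funext fun k => h k)
    set Φ : ℤ → lp (fun _ : ℤ => ℂ) 2
      := fun m => ∑ k : Fin q, lp.single 2 (e (2 * m) (k : ℕ)) (v k) with hΦdef
    have hcoord : ∀ (m n : ℤ) (k : Fin q),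
        (Φ m : ∀ _ : ℤ, ℂ) (e n (k : ℕ)) = if n = 2 * m then v k else 0 := by
      intro m n k
      rw [hΦdef]
      simp only []
      rw [RFPP.lp_coeFn_sum, Finset.sum_apply]
      by_cases hn : n = 2 * m
      · rw [if_pos hn, ← hn]
        rw [Finset.sum_eq_single k]
        · rw [hsingle, if_pos rfl]
        · intro b _ hb
          rw [hsingle, if_neg]
          intro hc
          apply hb
          apply Fin.ext
          have h5 := congrArg br hc
          rw [hbr_e n k k.2, hbr_e n b b.2] at h5
          exact h5.symm
        · intro h; exact absurd (Finset.mem_univ _) h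
      · rw [if_neg hn]
        apply Finset.sum_eq_zero
        intro b _
        rw [hsingle, if_neg]
        intro hc
        apply hn
        have h5 := congrArg bn hc
        rwa [hbn_e n k k.2, hbn_e (2 * m) b b.2] at h5

    have hΦeig : ∀ m : ℤ, L (Φ m) = ((μ₀ : ℝ) : ℂ) • Φ m := by
      intro m
      apply lp.ext
      funext j
      have hje : e (bn j) ((⟨br j, hbr_lt j⟩ : Fin q) : ℕ) = j := h_e_br j
      have hkeym := hkey (Φ m) ((μ₀ : ℝ) : ℂ) (bn j) ⟨br j, hbr_lt j⟩
      rw [hje] at hkeym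
      have hvecΦ : (fun k' : Fin q => (Φ m : ∀ _ : ℤ, ℂ) (e (bn j) (k' : ℕ)))
          = if bn j = 2 * m then v else 0 := by
        funext k'
        rw [hcoord m (bn j) k']
        by_cases h : bn j = 2 * m <;> simp [h]
      have hzero : (((μ₀ : ℝ) : ℂ) • (1 : Matrix (Fin q) (Fin q) ℂ)
          - ((σ (bn j) : ℝ) : ℂ) • A).mulVec
            (fun k' : Fin q => (Φ m : ∀ _ : ℤ, ℂ) (e (bn j) (k' : ℕ))) = 0 := by
        rw [hvecΦ]
        by_cases h : bn j = 2 * m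
        · rw [if_pos h, h, hσeven m]
          rw [Matrix.sub_mulVec, Matrix.smul_mulVec, Matrix.smul_mulVec,
            Matrix.one_mulVec, hv]
          norm_num
        · rw [if_neg h, Matrix.mulVec_zero]
      have h0 := (congrFun hzero (⟨br j, hbr_lt j⟩ : Fin q)).symm.trans hkeym
      have hsm := congrFun (lp.coeFn_smul ((μ₀ : ℝ) : ℂ) (Φ m)) j
      simp only [Pi.smul_apply, smul_eq_mul] at hsm
      rw [hsm]
      simp only [Pi.zero_apply] at h0
      linear_combination h0
    refine ⟨Φ, fun m => e (2 * m) ((k₀ : Fin q) : ℕ), v k₀, hk₀, hΦeig, ?_⟩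
    intro m m'
    rw [hcoord m (2 * m') k₀]
    by_cases h : m' = m
    · rw [if_pos h, if_pos (by omega)]
    · rw [if_neg h, if_neg (by omega)]
  -- final assembly
  refine ⟨S, ?_, ?_, ?_⟩
  · rw [hSdef, Finset.card_image_of_injective _ (RFPPb.eig_inj hAH hq0 huniq),
      Finset.card_univ, Fintype.card_fin]
  · ext z
    constructor
    · intro hz
      by_contra hnotin
      exact spectrum.notMem_iff.mpr (hUnit z hnotin) hz
    · rintro ⟨x, hxS, rfl⟩
      obtain ⟨Φ, J, z0, hz0, hΦeig, hΦc⟩ := hEig x hxS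
      by_contra h
      obtain ⟨u, hu⟩ := spectrum.notMem_iff.mp h
      have h0 : ((algebraMap ℂ (lp (fun _ : ℤ => ℂ) 2 →L[ℂ] lp (fun _ : ℤ => ℂ) 2)) (x : ℂ) - L)
          (Φ 0) = 0 := by
        rw [Algebra.algebraMap_eq_smul_one, ContinuousLinearMap.sub_apply,
          ContinuousLinearMap.smul_apply, ContinuousLinearMap.one_apply, hΦeig 0, sub_self]
      have hΦ00 : Φ 0 = 0 := by
        calc Φ 0 = (1 : lp (fun _ : ℤ => ℂ) 2 →L[ℂ] lp (fun _ : ℤ => ℂ) 2) (Φ 0) :=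
              (ContinuousLinearMap.one_apply _).symm
          _ = ((↑u⁻¹ * ↑u : lp (fun _ : ℤ => ℂ) 2 →L[ℂ] lp (fun _ : ℤ => ℂ) 2)) (Φ 0) := by
              rw [u.inv_mul]
          _ = (↑u⁻¹ : lp (fun _ : ℤ => ℂ) 2 →L[ℂ] lp (fun _ : ℤ => ℂ) 2)
                ((↑u : lp (fun _ : ℤ => ℂ) 2 →L[ℂ] lp (fun _ : ℤ => ℂ) 2) (Φ 0)) :=
              ContinuousLinearMap.mul_apply _ _ _
          _ = (↑u⁻¹ : lp (fun _ : ℤ => ℂ) 2 →L[ℂ] lp (fun _ : ℤ => ℂ) 2) 0 := by rw [hu, h0]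
          _ = 0 := map_zero _
      have hz00 := hΦc 0 0
      rw [hΦ00] at hz00
      simp at hz00
      exact hz0 hz00.symm
  · intro μ₀ hμ₀
    obtain ⟨Φ, J, z0, hz0, hΦeig, hΦc⟩ := hEig μ₀ hμ₀
    constructor
    · refine ⟨Φ 0, ?_, hΦeig 0⟩
      intro h
      have hz00 := hΦc 0 0
      rw [h] at hz00
      simp at hz00
      exact hz0 hz00.symm
    · intro hFD
      set K : lp (fun _ : ℤ => ℂ) 2 →L[ℂ] lp (fun _ : ℤ => ℂ) 2 := L - (μ₀ : ℂ) • 1 with hKdef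
      have hmemker : ∀ m : ℤ, Φ m ∈ LinearMap.ker K.toLinearMap := by
        intro m
        rw [LinearMap.mem_ker]
        show K (Φ m) = 0
        rw [hKdef, ContinuousLinearMap.sub_apply, ContinuousLinearMap.smul_apply,
          ContinuousLinearMap.one_apply, hΦeig m, sub_self]
      have hli : LinearIndependent ℂ (fun m : ℤ => (⟨Φ m, hmemker m⟩ : LinearMap.ker K.toLinearMap)) := by
        rw [linearIndependent_iff'']
        intro s g hg hsum m₀
        by_cases hm₀ : m₀ ∈ s
        · have happ : ((RFPP.evalLM (J m₀)).comp (LinearMap.ker K.toLinearMap).subtype)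
              (∑ i ∈ s, g i • (⟨Φ i, hmemker i⟩ : LinearMap.ker K.toLinearMap)) = 0 := by
            rw [hsum]; exact map_zero _
          rw [map_sum] at happ
          have hterm : ∀ i ∈ s, ((RFPP.evalLM (J m₀)).comp (LinearMap.ker K.toLinearMap).subtype)
              (g i • (⟨Φ i, hmemker i⟩ : LinearMap.ker K.toLinearMap)) = if m₀ = i then g i * z0 else 0 := by
            intro i _
            rw [map_smul]
            have hri : ((RFPP.evalLM (J m₀)).comp (LinearMap.ker K.toLinearMap).subtype)
                (⟨Φ i, hmemker i⟩ : LinearMap.ker K.toLinearMap) = (Φ i : ∀ _ : ℤ, ℂ) (J m₀) := rfl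
            rw [smul_eq_mul, hri, hΦc i m₀]
            by_cases h : m₀ = i <;> simp [h]
          rw [Finset.sum_congr rfl hterm] at happ
          have hsum2 : ∑ i ∈ s, (if m₀ = i then g i * z0 else 0) = g m₀ * z0 := by
            rw [Finset.sum_eq_single m₀]
            · rw [if_pos rfl]
            · intro b _ hb
              rw [if_neg (fun h => hb h.symm)]
            · intro h; exact absurd hm₀ h
          rw [hsum2] at happ
          rcases mul_eq_zero.mp happ with h | h
          · exact h
          · exact absurd h hz0
        · exact hg m₀ hm₀
      haveI := hFD
      have hinj2 : Function.Injective (fun i : Fin (Module.finrank ℂ (LinearMap.ker K.toLinearMap) + 1)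
          => (i : ℤ)) := by
        intro a b hab
        simp only [] at hab
        exact Fin.ext (by exact_mod_cast hab)
      have hcard := (hli.comp _ hinj2).fintype_card_le_finrank
      rw [Fintype.card_fin] at hcard
      omega
end

section
/- Let α ∈ ℤ and θ ∈ ℝ. If θ + 1/2 ∉ ℤ, then the spectrum of L_{α,θ} equals the interval [−4|cos(πθ)|, 4|cos(πθ)|]. If θ + 1/2 ∈ ℤ, then L_{α,θ} is the zero operator and σ(L_{α,θ}) = {0}. -/
open Real Complex


private lemma coef_eq (θ : ℝ) (n : ℤ) :
    Real.cos (π * ((n : ℝ) + θ)) = (-1 : ℝ) ^ n * Real.cos (π * θ) := by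
  have h : π * ((n : ℝ) + θ) = (n : ℝ) * π - (-(π * θ)) := by ring
  rw [h, Real.cos_int_mul_pi_sub, Real.cos_neg]

private lemma coef_zero (θ : ℝ) (m : ℤ) (hm : θ + 1 / 2 = (m : ℝ)) (n : ℤ) :
    Real.cos (π * ((n : ℝ) + θ)) = 0 := by
  rw [Real.cos_eq_zero_iff]
  refine ⟨n + m - 1, ?_⟩
  have hθ : θ = (m : ℝ) - 1 / 2 := by linarith
  rw [hθ]; push_cast; ring

private lemma norm_sq_eq (f : lp (fun _ : ℤ => ℂ) 2) : ‖f‖ ^ 2 = ∑' j, ‖f j‖ ^ 2 := by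
  have := lp.norm_rpow_eq_tsum (p := 2) (by norm_num) f
  simp only [ENNReal.toReal_ofNat] at this
  rw [← Real.rpow_two, this]
  congr 1; funext j; rw [Real.rpow_two]

private lemma memℓp_sq {g : ℤ → ℂ} (h : Summable fun j => ‖g j‖ ^ 2) :
    Memℓp g 2 := by
  apply memℓp_gen
  simp only [ENNReal.toReal_ofNat]
  convert h using 2 with j; rw [Real.rpow_two]

private lemma summable_norm_sq (f : lp (fun _ : ℤ => ℂ) 2) :
    Summable fun j => ‖f j‖ ^ 2 := by
  have h := (memℓp_gen_iff (p := 2) (by norm_num)).mp (lp.memℓp f)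
  simp only [ENNReal.toReal_ofNat] at h
  convert h using 2 with j
  rw [Real.rpow_two]

private lemma summable_shift (f : ℤ → ℝ) (h : Summable f) (d : ℤ) :
    Summable fun j => f (j + d) := by
  have : (fun j => f (j + d)) = f ∘ (Equiv.addRight d) := rfl
  rw [this]
  exact ((Equiv.addRight d).summable_iff).mpr h

private lemma tsum_shift (f : ℤ → ℝ) (d : ℤ) :
    ∑' j, f (j + d) = ∑' j, f j := by
  exact (Equiv.addRight d).tsum_eq f

-- component value via inner

private lemma apply_eq_inner (f : lp (fun _ : ℤ => ℂ) 2) (j : ℤ) :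
    f j = @inner ℂ _ _ (lp.single 2 j (1:ℂ)) f := by
  rw [lp.inner_single_left]
  simp [RCLike.inner_apply]

private lemma shift_sq_le (t : ℤ → ℝ) (C : ℝ) (ht : ∀ j, |t j| ≤ C)
    (f : lp (fun _ : ℤ => ℂ) 2) (d : ℤ) (j : ℤ) :
    ‖(t j : ℂ) * f (j + d)‖ ^ 2 ≤ C ^ 2 * ‖f (j + d)‖ ^ 2 := by
  rw [norm_mul, mul_pow, Complex.norm_real, Real.norm_eq_abs]
  have h1 : |t j| ^ 2 ≤ C ^ 2 := pow_le_pow_left₀ (abs_nonneg _) (ht j) 2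
  exact mul_le_mul_of_nonneg_right h1 (by positivity)

private lemma shift_mem (t : ℤ → ℝ) (C : ℝ) (ht : ∀ j, |t j| ≤ C)
    (f : lp (fun _ : ℤ => ℂ) 2) (d : ℤ) :
    Memℓp (fun j => (t j : ℂ) * f (j + d)) 2 := by
  apply memℓp_sq
  exact Summable.of_nonneg_of_le (fun j => by positivity) (shift_sq_le t C ht f d)
    (((summable_shift _ (summable_norm_sq f) d)).mul_left (C ^ 2))

private lemma shift_norm_le (t : ℤ → ℝ) (C : ℝ) (hC : 0 ≤ C) (ht : ∀ j, |t j| ≤ C)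
    (f : lp (fun _ : ℤ => ℂ) 2) (d : ℤ) :
    ‖(⟨fun j => (t j : ℂ) * f (j + d), shift_mem t C ht f d⟩ : lp (fun _ : ℤ => ℂ) 2)‖
      ≤ C * ‖f‖ := by
  have h0 : (0:ℝ) ≤ C * ‖f‖ := by positivity
  refine le_of_pow_le_pow_left₀ two_ne_zero h0 ?_
  rw [norm_sq_eq]
  have hs1 : Summable fun j => ‖(t j : ℂ) * f (j + d)‖ ^ 2 :=
    Summable.of_nonneg_of_le (fun j => by positivity) (shift_sq_le t C ht f d)
      (((summable_shift _ (summable_norm_sq f) d)).mul_left (C ^ 2))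
  calc ∑' j, ‖(t j : ℂ) * f (j + d)‖ ^ 2
      ≤ ∑' j, C ^ 2 * ‖f (j + d)‖ ^ 2 :=
        Summable.tsum_le_tsum (shift_sq_le t C ht f d) hs1
          (((summable_shift _ (summable_norm_sq f) d)).mul_left (C ^ 2))
    _ = C ^ 2 * ∑' j, ‖f (j + d)‖ ^ 2 := tsum_mul_left
    _ = C ^ 2 * ∑' j, ‖f j‖ ^ 2 := by
        exact congrArg _ ((Equiv.addRight d).tsum_eq (fun j => ‖f j‖ ^ 2))
    _ = (C * ‖f‖) ^ 2 := by rw [← norm_sq_eq]; ring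

private lemma single_val (i j : ℤ) (a : ℂ) :
    (lp.single (E := fun _ : ℤ => ℂ) 2 i a) j = if j = i then a else 0 := by
  rcases eq_or_ne j i with h | h
  · subst h; simp [lp.single_apply_self]
  · simp [lp.single_apply_ne _ _ _ h, h]

private lemma selfadj (L : lp (fun _ : ℤ => ℂ) 2 →L[ℂ] lp (fun _ : ℤ => ℂ) 2)
    (t : ℤ → ℝ)
    (hL' : ∀ (f : lp (fun _ : ℤ => ℂ) 2) (j : ℤ),
      L f j = ((t j : ℝ) : ℂ) * f (j + 1) + ((t (j - 1) : ℝ) : ℂ) * f (j - 1)) :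
    IsSelfAdjoint L := by
  rw [ContinuousLinearMap.isSelfAdjoint_iff']
  have key : ∀ (i : ℤ) (a : ℂ),
      ContinuousLinearMap.adjoint L (lp.single 2 i a) = L (lp.single 2 i a) := by
    intro i a
    apply lp.ext
    funext j
    have h1 : (ContinuousLinearMap.adjoint L (lp.single 2 i a)) j
        = @inner ℂ _ _ (L (lp.single 2 j (1:ℂ))) (lp.single 2 i a) := by
      rw [apply_eq_inner, ContinuousLinearMap.adjoint_inner_right]
    rw [h1, lp.inner_single_right, hL', hL']
    rw [single_val, single_val, single_val, single_val]
    simp only [RCLike.inner_apply]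
    split_ifs with h1' h2' h3' h4' h5' h6' h7' h8' h9'
    all_goals simp only [map_add, map_mul, map_zero, map_one, Complex.conj_ofReal,
      mul_one, mul_zero, add_zero, zero_add, zero_mul]
    all_goals first
      | rfl
      | omega
      | (rw [show j - 1 = i from by omega])
      | (rw [show i - 1 = j from by omega])
      | skip
    all_goals exact mul_comm _ _
  refine ContinuousLinearMap.ext fun f => ?_
  have hf := lp.hasSum_single (E := fun _ : ℤ => ℂ) (p := 2) (by norm_num) f
  have h1 := hf.mapL (ContinuousLinearMap.adjoint L)
  have h2 := hf.mapL L
  simp_rw [key] at h1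
  exact h1.unique h2

private lemma neg_one_zpow_mul_self (m : ℤ) : (-1 : ℂ) ^ m * (-1 : ℂ) ^ m = 1 := by
  rw [← mul_zpow]; norm_num

private lemma gauge_eig (α : ℤ) (c k : ℝ) :
    ∃ ψ : ℤ → ℂ, (∀ j, ‖ψ j‖ = 1) ∧ ∀ j : ℤ,
      ((2 * ((-1:ℝ) ^ (α * j)) * c : ℝ) : ℂ) * ψ (j + 1)
        + ((2 * ((-1:ℝ) ^ (α * (j - 1))) * c : ℝ) : ℂ) * ψ (j - 1)
        = ((4 * c * Real.cos k : ℝ) : ℂ) * ψ j := by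
  set ε : ℤ → ℂ := fun j => (-1 : ℂ) ^ (α * (j * (j - 1) / 2)) with hε
  set e : ℤ → ℂ := fun j => Complex.exp ((k : ℂ) * j * Complex.I) with he
  refine ⟨fun j => ε j * e j, fun j => ?_, fun j => ?_⟩
  · rw [norm_mul, hε, he]
    rw [norm_zpow, norm_neg, norm_one, one_zpow, one_mul]
    rw [Complex.norm_exp]
    norm_num
  · have hne : (-1 : ℂ) ≠ 0 := by norm_num
    -- exponent arithmetic
    have g1 : α * ((j + 1) * (j + 1 - 1) / 2) = α * (j * (j - 1) / 2) + α * j := by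
      have e1 : (j + 1) * (j + 1 - 1) = j * (j - 1) + j * 2 := by ring
      rw [e1, Int.add_mul_ediv_right _ _ (by norm_num : (2:ℤ) ≠ 0), mul_add]
    have g2 : α * ((j - 1) * (j - 1 - 1) / 2) = α * (j * (j - 1) / 2) + α * (1 - j) := by
      have e1 : (j - 1) * (j - 1 - 1) = j * (j - 1) + (1 - j) * 2 := by ring
      rw [e1, Int.add_mul_ediv_right _ _ (by norm_num : (2:ℤ) ≠ 0), mul_add]
    have hε1 : ε (j + 1) = ε j * (-1 : ℂ) ^ (α * j) := by
      rw [hε]; simp only []; rw [g1, zpow_add₀ hne]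
    have hε2 : ε (j - 1) = ε j * (-1 : ℂ) ^ (α * (1 - j)) := by
      rw [hε]; simp only []; rw [g2, zpow_add₀ hne]
    have hcancel : (-1 : ℂ) ^ (α * (j - 1)) * (-1 : ℂ) ^ (α * (1 - j)) = 1 := by
      rw [← zpow_add₀ hne]
      have : α * (j - 1) + α * (1 - j) = 0 := by ring
      rw [this, zpow_zero]
    have he1 : e (j + 1) = e j * Complex.exp ((k : ℂ) * Complex.I) := by
      rw [he]; simp only []
      rw [← Complex.exp_add]
      congr 1
      push_cast
      ring
    have he2 : e (j - 1) = e j * Complex.exp (-((k : ℂ) * Complex.I)) := by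
      rw [he]; simp only []
      rw [← Complex.exp_add]
      congr 1
      push_cast
      ring
    have htwo : Complex.exp ((k:ℂ) * Complex.I) + Complex.exp (-((k:ℂ) * Complex.I))
        = 2 * Complex.cos (k : ℂ) := by
      rw [Complex.two_cos, neg_mul]
    have hcast : ∀ m : ℤ, (((-1:ℝ) ^ m : ℝ) : ℂ) = (-1 : ℂ) ^ m := by
      intro m; push_cast; ring
    push_cast
    rw [hε1, hε2, he1, he2]
    have hsq := neg_one_zpow_mul_self (α * j)
    have hcos : ((Real.cos k : ℝ) : ℂ) = Complex.cos (k : ℂ) := Complex.ofReal_cos k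
    calc 2 * (-1:ℂ) ^ (α * j) * c * (ε j * (-1:ℂ) ^ (α * j) * (e j * Complex.exp ((k:ℂ) * Complex.I)))
          + 2 * (-1:ℂ) ^ (α * (j-1)) * c * (ε j * (-1:ℂ) ^ (α * (1-j)) * (e j * Complex.exp (-((k:ℂ) * Complex.I))))
        = ((-1:ℂ)^(α*j) * (-1:ℂ)^(α*j)) * (2 * c * ε j * e j * Complex.exp ((k:ℂ) * Complex.I))
          + ((-1:ℂ)^(α*(j-1)) * (-1:ℂ)^(α*(1-j))) * (2 * c * ε j * e j * Complex.exp (-((k:ℂ) * Complex.I))) := by ring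
      _ = 2 * c * ε j * e j * (Complex.exp ((k:ℂ) * Complex.I) + Complex.exp (-((k:ℂ) * Complex.I))) := by
          rw [hsq, hcancel]; ring
      _ = 4 * c * Complex.cos (k:ℂ) * (ε j * e j) := by rw [htwo]; ring

private lemma weyl (L : lp (fun _ : ℤ => ℂ) 2 →L[ℂ] lp (fun _ : ℤ => ℂ) 2)
    (t : ℤ → ℝ) (C : ℝ) (hC : 0 ≤ C) (htb : ∀ j, |t j| ≤ C)
    (hL' : ∀ (f : lp (fun _ : ℤ => ℂ) 2) (j : ℤ),
      L f j = ((t j : ℝ) : ℂ) * f (j + 1) + ((t (j - 1) : ℝ) : ℂ) * f (j - 1))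
    (z : ℂ) (ψ : ℤ → ℂ) (hψn : ∀ j, ‖ψ j‖ = 1)
    (heig : ∀ j : ℤ, ((t j : ℝ) : ℂ) * ψ (j + 1) + ((t (j - 1) : ℝ) : ℂ) * ψ (j - 1) = z * ψ j) :
    z ∈ spectrum ℂ L := by
  by_contra hz
  rw [spectrum.notMem_iff] at hz
  set T : lp (fun _ : ℤ => ℂ) 2 →L[ℂ] lp (fun _ : ℤ => ℂ) 2 :=
    algebraMap ℂ _ z - L with hT
  set K := ‖(↑hz.unit⁻¹ : lp (fun _ : ℤ => ℂ) 2 →L[ℂ] lp (fun _ : ℤ => ℂ) 2)‖ with hK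
  have hK0 : 0 ≤ K := norm_nonneg _
  set M : ℝ := C + C + ‖z‖ with hM
  have hM0 : 0 ≤ M := by positivity
  set n : ℕ := ⌈(2 * K * M) ^ 2⌉₊ with hn
  -- the truncated generalized eigenfunction
  set g : ℤ → ℂ := fun j => if -(n:ℤ) ≤ j ∧ j ≤ (n:ℤ) then ψ j else 0 with hg
  have hgnorm : ∀ j, ‖g j‖ ≤ 1 := by
    intro j
    rw [hg]; dsimp only
    split_ifs
    · exact (hψn j).le
    · simp
  have hmem : Memℓp g 2 := by
    have hfin : {j | g j ≠ 0}.Finite := by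
      apply Set.Finite.subset (Set.finite_Icc (-(n:ℤ)) (n:ℤ))
      intro j hj
      rw [Set.mem_setOf_eq, hg] at hj
      dsimp only at hj
      by_contra hco
      rw [Set.mem_Icc] at hco
      rw [if_neg (by omega)] at hj
      exact hj rfl
    exact (memℓp_zero hfin).of_exponent_ge zero_le
  set φ : lp (fun _ : ℤ => ℂ) 2 := ⟨g, hmem⟩ with hφ
  have hφval : ∀ j, φ j = g j := fun _ => rfl
  -- norm of φ
  have hφsq : ‖φ‖ ^ 2 = 2 * (n:ℝ) + 1 := by
    rw [norm_sq_eq]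
    rw [tsum_eq_sum (s := Finset.Icc (-(n:ℤ)) (n:ℤ)) ?_]
    · rw [Finset.sum_congr rfl (g := fun _ => (1:ℝ)) ?_]
      · rw [Finset.sum_const, nsmul_eq_mul, mul_one, Int.card_Icc]
        have h4 : ((n:ℤ) + 1 - -(n:ℤ)).toNat = 2 * n + 1 := by omega
        rw [h4]
        push_cast
        ring
      · intro j hj
        rw [Finset.mem_Icc] at hj
        rw [hφval, hg]
        dsimp only
        rw [if_pos (by omega)]
        rw [hψn j]
        norm_num
    · intro j hj
      rw [Finset.mem_Icc] at hj
      rw [hφval, hg]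
      dsimp only
      rw [if_neg (by omega)]
      norm_num
  -- components of T φ
  have hTφ : ∀ j : ℤ, (T φ) j = z * g j - (((t j : ℝ):ℂ) * g (j+1) + ((t (j-1) : ℝ):ℂ) * g (j-1)) := by
    intro j
    rw [hT]
    simp only [ContinuousLinearMap.sub_apply, Algebra.algebraMap_eq_smul_one,
      ContinuousLinearMap.smul_apply, ContinuousLinearMap.one_apply]
    rw [lp.coeFn_sub]
    simp only [Pi.sub_apply]
    rw [lp.coeFn_smul]
    simp only [Pi.smul_apply, smul_eq_mul]
    rw [hL' φ j, hφval]
  -- support of T φ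
  have hsupp : ∀ j : ℤ, j ∉ ({-(n:ℤ)-1, -(n:ℤ), (n:ℤ), (n:ℤ)+1} : Finset ℤ) → (T φ) j = 0 := by
    intro j hj
    simp only [Finset.mem_insert, Finset.mem_singleton] at hj
    push_neg at hj
    rw [hTφ]
    rcases le_or_gt (|j|) ((n:ℤ) - 1) with hcase | hcase
    · rw [abs_le] at hcase
      rw [hg]; dsimp only
      rw [if_pos (by omega), if_pos (by omega), if_pos (by omega), heig j]
      ring
    · rw [hg]; dsimp only
      have habs : (n:ℤ) + 2 ≤ |j| := by
        rcases abs_cases j with ⟨h1, h2⟩ | ⟨h1, h2⟩ <;> omega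
      rcases abs_cases j with ⟨h1, h2⟩ | ⟨h1, h2⟩
      · rw [if_neg (by omega), if_neg (by omega), if_neg (by omega)]
        ring
      · rw [if_neg (by omega), if_neg (by omega), if_neg (by omega)]
        ring
  -- bound on each component
  have hcomp : ∀ j : ℤ, ‖(T φ) j‖ ≤ M := by
    intro j
    rw [hTφ]
    calc ‖z * g j - (((t j : ℝ):ℂ) * g (j+1) + ((t (j-1) : ℝ):ℂ) * g (j-1))‖
        ≤ ‖z * g j‖ + ‖((t j : ℝ):ℂ) * g (j+1) + ((t (j-1) : ℝ):ℂ) * g (j-1)‖ := norm_sub_le _ _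
      _ ≤ ‖z * g j‖ + (‖((t j : ℝ):ℂ) * g (j+1)‖ + ‖((t (j-1) : ℝ):ℂ) * g (j-1)‖) := by
          gcongr; exact norm_add_le _ _
      _ ≤ ‖z‖ * 1 + (C * 1 + C * 1) := by
          gcongr
          · rw [norm_mul]
            exact mul_le_mul (le_refl _) (hgnorm j) (norm_nonneg _) (norm_nonneg _)
          · rw [norm_mul, Complex.norm_real, Real.norm_eq_abs]
            exact mul_le_mul (htb j) (hgnorm (j+1)) (norm_nonneg _) hC
          · rw [norm_mul, Complex.norm_real, Real.norm_eq_abs]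
            exact mul_le_mul (htb (j-1)) (hgnorm (j-1)) (norm_nonneg _) hC
      _ = M := by rw [hM]; ring
  -- norm bound on T φ
  have hTφnorm : ‖T φ‖ ^ 2 ≤ 4 * M ^ 2 := by
    rw [norm_sq_eq]
    rw [tsum_eq_sum (s := ({-(n:ℤ)-1, -(n:ℤ), (n:ℤ), (n:ℤ)+1} : Finset ℤ)) ?_]
    · calc ∑ j ∈ ({-(n:ℤ)-1, -(n:ℤ), (n:ℤ), (n:ℤ)+1} : Finset ℤ), ‖(T φ) j‖ ^ 2
          ≤ ∑ _j ∈ ({-(n:ℤ)-1, -(n:ℤ), (n:ℤ), (n:ℤ)+1} : Finset ℤ), M ^ 2 := by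
            apply Finset.sum_le_sum
            intro j _
            exact pow_le_pow_left₀ (norm_nonneg _) (hcomp j) 2
        _ ≤ 4 * M ^ 2 := by
            rw [Finset.sum_const, nsmul_eq_mul]
            have hcard : (({-(n:ℤ)-1, -(n:ℤ), (n:ℤ), (n:ℤ)+1} : Finset ℤ).card : ℝ) ≤ 4 := by
              have := Finset.card_insert_le (-(n:ℤ)-1) ({-(n:ℤ), (n:ℤ), (n:ℤ)+1} : Finset ℤ)
              have h2 := Finset.card_insert_le (-(n:ℤ)) ({(n:ℤ), (n:ℤ)+1} : Finset ℤ)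
              have h3 := Finset.card_insert_le ((n:ℤ)) ({(n:ℤ)+1} : Finset ℤ)
              simp only [Finset.card_singleton] at *
              push_cast
              have : ({-(n:ℤ)-1, -(n:ℤ), (n:ℤ), (n:ℤ)+1} : Finset ℤ).card ≤ 4 := by omega
              exact_mod_cast this
            nlinarith [sq_nonneg M]
    · intro j hj
      rw [hsupp j hj]
      norm_num
  -- contradiction
  have hinv : φ = (↑hz.unit⁻¹ : lp (fun _ : ℤ => ℂ) 2 →L[ℂ] lp (fun _ : ℤ => ℂ) 2) (T φ) := by
    have h1 : (↑hz.unit⁻¹ * T : lp (fun _ : ℤ => ℂ) 2 →L[ℂ] lp (fun _ : ℤ => ℂ) 2) = 1 := by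
      exact hz.val_inv_mul
    have h2 := congrArg
      (fun S : lp (fun _ : ℤ => ℂ) 2 →L[ℂ] lp (fun _ : ℤ => ℂ) 2 => S φ) h1
    simp only [ContinuousLinearMap.mul_apply, ContinuousLinearMap.one_apply] at h2
    exact h2.symm
  have hbound : ‖φ‖ ≤ K * (2 * M) := by
    rw [hinv]
    calc ‖(↑hz.unit⁻¹ : lp (fun _ : ℤ => ℂ) 2 →L[ℂ] lp (fun _ : ℤ => ℂ) 2) (T φ)‖
        ≤ K * ‖T φ‖ := ContinuousLinearMap.le_opNorm _ _
      _ ≤ K * (2 * M) := by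
          gcongr
          have h2 : ‖T φ‖ ^ 2 ≤ (2 * M) ^ 2 := by nlinarith
          exact le_of_pow_le_pow_left₀ two_ne_zero (by positivity) h2
  have hfin : 2 * (n:ℝ) + 1 ≤ (2 * K * M) ^ 2 := by
    have h1 : ‖φ‖ ^ 2 ≤ (K * (2 * M)) ^ 2 := pow_le_pow_left₀ (norm_nonneg _) hbound 2
    rw [hφsq] at h1
    calc 2 * (n:ℝ) + 1 ≤ (K * (2 * M)) ^ 2 := h1
      _ = (2 * K * M) ^ 2 := by ring
  have hceil : (2 * K * M) ^ 2 ≤ (n:ℝ) := Nat.le_ceil _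
  have : (0:ℝ) ≤ (n:ℝ) := Nat.cast_nonneg n
  linarith

set_option maxHeartbeats 1000000 in
set_option synthInstance.maxHeartbeats 200000 in
/-- For integer `α`: if `θ + 1/2 ∉ ℤ` then
`σ(L_{α,θ}) = [−4|cos(πθ)|, 4|cos(πθ)|]`; if `θ + 1/2 ∈ ℤ` then `L_{α,θ} = 0` and
`σ(L_{α,θ}) = {0}`. -/
theorem integer_flux_spectrum
    (α : ℤ) (θ : ℝ)
    (L : lp (fun _ : ℤ => ℂ) 2 →L[ℂ] lp (fun _ : ℤ => ℂ) 2)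
    (hL : ∀ (φ : lp (fun _ : ℤ => ℂ) 2) (j : ℤ),
      L φ j = ((2 * Real.cos (π * ((α : ℝ) * (j : ℝ) + θ)) : ℝ) : ℂ) * φ (j + 1)
        + ((2 * Real.cos (π * ((α : ℝ) * ((j : ℝ) - 1) + θ)) : ℝ) : ℂ) * φ (j - 1)) :
    ((¬ ∃ m : ℤ, θ + 1 / 2 = (m : ℝ)) →
      spectrum ℂ L = Complex.ofReal ''
        Set.Icc (-(4 * |Real.cos (π * θ)|)) (4 * |Real.cos (π * θ)|)) ∧
    ((∃ m : ℤ, θ + 1 / 2 = (m : ℝ)) →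
      L = 0 ∧ spectrum ℂ L = {0}) := by
  have hnt : (lp.single (E := fun _ : ℤ => ℂ) 2 0 (1:ℂ)) ≠ 0 := by
    intro h
    have h0 := congrArg (fun v : lp (fun _ : ℤ => ℂ) 2 => v 0) h
    dsimp only at h0
    rw [single_val] at h0
    simp at h0
  haveI : Nontrivial (lp (fun _ : ℤ => ℂ) 2) := ⟨_, _, hnt⟩
  constructor
  · intro hni
    set c := Real.cos (π * θ) with hcdef
    have hc : c ≠ 0 := by
      intro h
      rw [hcdef, Real.cos_eq_zero_iff] at h
      obtain ⟨kk, hk⟩ := h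
      apply hni
      refine ⟨kk + 1, ?_⟩
      have h2 : π * θ = π * ((2 * (kk:ℝ) + 1) / 2) := by rw [hk]; ring
      have h3 : θ = (2 * (kk:ℝ) + 1) / 2 := mul_left_cancel₀ Real.pi_ne_zero h2
      push_cast
      rw [h3]; ring
    have hcpos : 0 < |c| := abs_pos.mpr hc
    set t : ℤ → ℝ := fun j => 2 * Real.cos (π * ((α:ℝ) * (j:ℝ) + θ)) with htdef
    have hcoef : ∀ j : ℤ,
        (2 * Real.cos (π * ((α:ℝ) * ((j:ℝ) - 1) + θ)) : ℝ) = t (j - 1) := by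
      intro j
      rw [htdef]
      dsimp only
      have harg : (α:ℝ) * ((j:ℝ) - 1) = (α:ℝ) * (((j - 1 : ℤ)):ℝ) := by push_cast; ring
      rw [harg]
    have hL' : ∀ (f : lp (fun _ : ℤ => ℂ) 2) (j : ℤ),
        L f j = ((t j : ℝ) : ℂ) * f (j + 1) + ((t (j - 1) : ℝ) : ℂ) * f (j - 1) := by
      intro f j
      rw [hL, hcoef]
    have ht : ∀ j : ℤ, t j = 2 * (-1:ℝ) ^ (α * j) * c := by
      intro j
      rw [htdef]
      dsimp only
      have harg : (α:ℝ) * (j:ℝ) = ((α * j : ℤ):ℝ) := by push_cast; ring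
      rw [harg, coef_eq θ (α * j), hcdef]
      ring
    have habs1 : ∀ m : ℤ, |(-1:ℝ) ^ m| = 1 := by
      intro m
      have hm2 : (-1:ℝ) ^ m * (-1:ℝ) ^ m = 1 := by
        rw [← mul_zpow]; norm_num
      rcases mul_self_eq_one_iff.mp hm2 with h | h <;> rw [h] <;> norm_num
    have htb : ∀ j : ℤ, |t j| ≤ 2 * |c| := by
      intro j
      rw [ht j, abs_mul, abs_mul, habs1]
      norm_num
    -- operator norm bound
    have hopn : ∀ f : lp (fun _ : ℤ => ℂ) 2, ‖L f‖ ≤ (2 * |c| + 2 * |c|) * ‖f‖ := by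
      intro f
      set t' : ℤ → ℝ := fun j => t (j - 1) with ht'
      have htb' : ∀ j : ℤ, |t' j| ≤ 2 * |c| := fun j => htb (j - 1)
      set A : lp (fun _ : ℤ => ℂ) 2 :=
        ⟨fun j => ((t j : ℝ):ℂ) * f (j + 1), shift_mem t (2 * |c|) htb f 1⟩ with hA
      set B : lp (fun _ : ℤ => ℂ) 2 :=
        ⟨fun j => ((t' j : ℝ):ℂ) * f (j + (-1)), shift_mem t' (2 * |c|) htb' f (-1)⟩ with hB
      have hLf : L f = A + B := by
        apply lp.ext
        funext j
        rw [lp.coeFn_add]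
        simp only [Pi.add_apply]
        rw [hL' f j]
        have e : j + (-1 : ℤ) = j - 1 := by ring
        show _ = ((t j : ℝ):ℂ) * f (j + 1) + ((t' j : ℝ):ℂ) * f (j + (-1))
        rw [e]
      rw [hLf]
      calc ‖A + B‖ ≤ ‖A‖ + ‖B‖ := norm_add_le _ _
        _ ≤ 2 * |c| * ‖f‖ + 2 * |c| * ‖f‖ :=
            add_le_add (shift_norm_le t _ (by positivity) htb f 1)
              (shift_norm_le t' _ (by positivity) htb' f (-1))
        _ = (2 * |c| + 2 * |c|) * ‖f‖ := by ring
    have hnorm : ‖L‖ ≤ 4 * |c| := by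
      apply ContinuousLinearMap.opNorm_le_bound _ (by positivity)
      intro f
      calc ‖L f‖ ≤ (2 * |c| + 2 * |c|) * ‖f‖ := hopn f
        _ = 4 * |c| * ‖f‖ := by ring
    have hsa : IsSelfAdjoint L := selfadj L t hL'
    apply Set.Subset.antisymm
    · intro z hz
      have himg := hsa.spectrumRestricts.algebraMap_image
      rw [← himg] at hz
      obtain ⟨r, hr, rfl⟩ := hz
      have har : algebraMap ℝ ℂ r = (r:ℂ) := rfl
      have hmem : algebraMap ℝ ℂ r ∈ spectrum ℂ L := by
        rw [← himg]
        exact Set.mem_image_of_mem _ hr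
      have hb : ‖algebraMap ℝ ℂ r‖ ≤ 4 * |c| :=
        le_trans (mem_closedBall_zero_iff.mp (spectrum.subset_closedBall_norm L hmem)) hnorm
      have hbr : |r| ≤ 4 * |c| := by
        rw [har, Complex.norm_real, Real.norm_eq_abs] at hb
        exact hb
      exact ⟨r, Set.mem_Icc.mpr (abs_le.mp hbr), har.symm⟩
    · have hIoo : ∀ x ∈ Set.Ioo (-(4 * |c|)) (4 * |c|), (x:ℂ) ∈ spectrum ℂ L := by
        intro x hx
        obtain ⟨hx1, hx2⟩ := hx
        have hxa : |x| < 4 * |c| := abs_lt.mpr ⟨by linarith, hx2⟩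
        set y := x / (4 * c) with hy
        have h4c : |4 * c| = 4 * |c| := by rw [abs_mul]; norm_num
        have hya : |y| ≤ 1 := by
          rw [hy, abs_div, div_le_one (by rw [h4c]; positivity)]
          rw [h4c]
          exact hxa.le
        have hya' := abs_le.mp hya
        set k := Real.arccos y with hk
        have hcos : Real.cos k = y := Real.cos_arccos hya'.1 hya'.2
        obtain ⟨ψ, hψn, heig0⟩ := gauge_eig α c k
        have hx4 : 4 * c * Real.cos k = x := by
          rw [hcos, hy]
          field_simp
        have heig : ∀ j : ℤ,
            ((t j : ℝ):ℂ) * ψ (j + 1) + ((t (j - 1) : ℝ):ℂ) * ψ (j - 1) = ((x:ℝ):ℂ) * ψ j := by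
          intro j
          have h0 := heig0 j
          rw [← ht j, ← ht (j - 1), hx4] at h0
          exact h0
        exact weyl L t (2 * |c|) (by positivity) htb hL' ((x:ℝ):ℂ) ψ hψn heig
      have hne : (-(4 * |c|)) ≠ (4 * |c|) := by
        have : (0:ℝ) < 4 * |c| := by positivity
        linarith
      have h2 : Complex.ofReal '' Set.Icc (-(4 * |c|)) (4 * |c|)
          = closure (Complex.ofReal '' Set.Ioo (-(4 * |c|)) (4 * |c|)) := by
        rw [Complex.isometry_ofReal.isClosedEmbedding.closure_image_eq, closure_Ioo hne]
      rw [h2]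
      apply closure_minimal ?_ (spectrum.isClosed L)
      rintro z ⟨x, hx, rfl⟩
      exact hIoo x hx
  · rintro ⟨m, hm⟩
    have hzero : L = 0 := by
      refine ContinuousLinearMap.ext fun f => ?_
      apply lp.ext
      funext j
      rw [hL]
      have h1 : Real.cos (π * ((α:ℝ) * (j:ℝ) + θ)) = 0 := by
        have harg : (α:ℝ) * (j:ℝ) = ((α * j : ℤ):ℝ) := by push_cast; ring
        rw [harg]
        exact coef_zero θ m hm (α * j)
      have h2 : Real.cos (π * ((α:ℝ) * ((j:ℝ) - 1) + θ)) = 0 := by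
        have harg : (α:ℝ) * ((j:ℝ) - 1) = ((α * (j - 1) : ℤ):ℝ) := by push_cast; ring
        rw [harg]
        exact coef_zero θ m hm (α * (j - 1))
      rw [h1, h2]
      simp
    refine ⟨hzero, ?_⟩
    rw [hzero]
    exact spectrum.zero_eq
end

section
/- Let γ > 0. Then the function η is strictly decreasing on the interval (−∞, 1). -/
open Real

/-- The function `η(z) = γ sin(π√z)/√z + 4 cos(π√z)` for `z > 0`, `η(0) = γπ + 4`, and
`η(z) = γ sinh(π√(−z))/√(−z) + 4 cosh(π√(−z))` for `z < 0`. -/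
noncomputable def eta (γ z : ℝ) : ℝ :=
  if 0 < z then
    γ * Real.sin (π * Real.sqrt z) / Real.sqrt z + 4 * Real.cos (π * Real.sqrt z)
  else if z = 0 then γ * π + 4
  else γ * Real.sinh (π * Real.sqrt (-z)) / Real.sqrt (-z) + 4 * Real.cosh (π * Real.sqrt (-z))


lemma aux1 {u : ℝ} (h0 : 0 < u) (hπ : u < π) : u * Real.cos u < Real.sin u := by
  have h : StrictMonoOn (fun v => Real.sin v - v * Real.cos v) (Set.Icc 0 π) := by
    apply strictMonoOn_of_deriv_pos (convex_Icc 0 π)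
    · fun_prop
    · intro v hv
      rw [interior_Icc] at hv
      have hd : HasDerivAt (fun v => Real.sin v - v * Real.cos v) (v * Real.sin v) v := by
        have := (Real.hasDerivAt_sin v).fun_sub ((hasDerivAt_id v).fun_mul (Real.hasDerivAt_cos v))
        refine this.congr_deriv ?_
        simp [id_eq]
      rw [hd.deriv]
      exact mul_pos hv.1 (Real.sin_pos_of_pos_of_lt_pi hv.1 hv.2)
  have := h (Set.left_mem_Icc.2 Real.pi_pos.le) ⟨h0.le, hπ.le⟩ h0
  simp at this
  linarith

lemma aux2 {t : ℝ} (h0 : 0 < t) : Real.sinh t < t * Real.cosh t := by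
  have h : StrictMonoOn (fun v => v * Real.cosh v - Real.sinh v) (Set.Ici 0) := by
    apply strictMonoOn_of_deriv_pos (convex_Ici 0)
    · fun_prop
    · intro v hv
      rw [interior_Ici] at hv
      have hd : HasDerivAt (fun v => v * Real.cosh v - Real.sinh v) (v * Real.sinh v) v := by
        have := ((hasDerivAt_id v).fun_mul (Real.hasDerivAt_cosh v)).fun_sub (Real.hasDerivAt_sinh v)
        refine this.congr_deriv ?_
        simp [id_eq]
      rw [hd.deriv]
      exact mul_pos hv (Real.sinh_pos_iff.2 hv)
  have := h Set.self_mem_Ici (Set.mem_Ici.2 h0.le) h0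
  simp at this
  linarith

lemma q_anti : StrictAntiOn (fun x : ℝ => Real.sin (π * x) / x) (Set.Ioo (0:ℝ) 1) := by
  apply strictAntiOn_of_deriv_neg (convex_Ioo 0 1)
  · exact ContinuousOn.div (by fun_prop) continuousOn_id (fun x hx => ne_of_gt hx.1)
  · intro x hx
    rw [interior_Ioo] at hx
    have hx0 : (x:ℝ) ≠ 0 := ne_of_gt hx.1
    have hd : HasDerivAt (fun x : ℝ => Real.sin (π * x) / x)
        ((Real.cos (π * x) * π * x - Real.sin (π * x) * 1) / x ^ 2) x := by
      have h1 : HasDerivAt (fun x : ℝ => Real.sin (π * x)) (Real.cos (π * x) * π) x :=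
        by simpa [Function.comp_def] using (Real.hasDerivAt_sin (π * x)).comp x ((hasDerivAt_id x).const_mul π)
      exact h1.div (hasDerivAt_id x) hx0
    rw [hd.deriv]
    apply div_neg_of_neg_of_pos
    · have := aux1 (mul_pos Real.pi_pos hx.1)
        (by nlinarith [Real.pi_pos, hx.2, hx.1])
      nlinarith
    · positivity

lemma g_mono : StrictMonoOn (fun x : ℝ => Real.sinh (π * x) / x) (Set.Ioi (0:ℝ)) := by
  apply strictMonoOn_of_deriv_pos (convex_Ioi 0)
  · exact ContinuousOn.div (by fun_prop) continuousOn_id (fun x hx => ne_of_gt hx)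
  · intro x hx
    rw [interior_Ioi] at hx
    have hx0 : (x:ℝ) ≠ 0 := ne_of_gt hx
    have hd : HasDerivAt (fun x : ℝ => Real.sinh (π * x) / x)
        ((Real.cosh (π * x) * π * x - Real.sinh (π * x) * 1) / x ^ 2) x := by
      have h1 : HasDerivAt (fun x : ℝ => Real.sinh (π * x)) (Real.cosh (π * x) * π) x :=
        by simpa [Function.comp_def] using (Real.hasDerivAt_sinh (π * x)).comp x ((hasDerivAt_id x).const_mul π)
      exact h1.div (hasDerivAt_id x) hx0
    rw [hd.deriv]
    apply div_pos
    · have := aux2 (mul_pos Real.pi_pos hx)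
      nlinarith
    · positivity

lemma eta_of_neg {γ z : ℝ} (hz : z < 0) : eta γ z =
    γ * Real.sinh (π * Real.sqrt (-z)) / Real.sqrt (-z) + 4 * Real.cosh (π * Real.sqrt (-z)) := by
  rw [eta, if_neg (by linarith), if_neg (by linarith)]

lemma eta_of_zero {γ : ℝ} : eta γ 0 = γ * π + 4 := by simp [eta]

lemma eta_of_pos {γ z : ℝ} (hz : 0 < z) : eta γ z =
    γ * Real.sin (π * Real.sqrt z) / Real.sqrt z + 4 * Real.cos (π * Real.sqrt z) := by
  rw [eta, if_pos hz]

lemma etaA {γ : ℝ} (hγ : 0 < γ) {x y : ℝ} (hxy : x < y) (hy : y ≤ 0) :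
    eta γ y < eta γ x := by
  have hx : x < 0 := lt_of_lt_of_le hxy hy
  set a := Real.sqrt (-x) with ha_def
  have ha : 0 < a := Real.sqrt_pos.2 (by linarith)
  rcases eq_or_lt_of_le hy with rfl | hy'
  · rw [eta_of_zero, eta_of_neg hx]
    have h1 : π * a < Real.sinh (π * a) := Real.self_lt_sinh_iff.2 (mul_pos Real.pi_pos ha)
    have h2 : π < Real.sinh (π * a) / a := (lt_div_iff₀ ha).2 h1
    have h3 : (1 : ℝ) < Real.cosh (π * a) :=
      Real.one_lt_cosh.2 (ne_of_gt (mul_pos Real.pi_pos ha))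
    rw [mul_div_assoc]
    nlinarith
  · set b := Real.sqrt (-y) with hb_def
    have hb : 0 < b := Real.sqrt_pos.2 (by linarith)
    have hba : b < a := Real.sqrt_lt_sqrt (by linarith) (by linarith)
    rw [eta_of_neg hx, eta_of_neg hy']
    have h1 : Real.sinh (π * b) / b < Real.sinh (π * a) / a :=
      g_mono (Set.mem_Ioi.2 hb) (Set.mem_Ioi.2 ha) hba
    have h2 : Real.cosh (π * b) < Real.cosh (π * a) := by
      rw [Real.cosh_lt_cosh]
      rw [abs_of_pos (mul_pos Real.pi_pos hb), abs_of_pos (mul_pos Real.pi_pos ha)]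
      exact mul_lt_mul_of_pos_left hba Real.pi_pos
    rw [mul_div_assoc, mul_div_assoc]
    nlinarith

lemma etaB {γ : ℝ} (hγ : 0 < γ) {x y : ℝ} (hx : 0 ≤ x) (hxy : x < y) (hy : y < 1) :
    eta γ y < eta γ x := by
  have hy0 : 0 < y := lt_of_le_of_lt hx hxy
  set t := Real.sqrt y with ht_def
  have ht : 0 < t := Real.sqrt_pos.2 hy0
  have ht1 : t < 1 := by
    have := Real.sqrt_lt_sqrt hy0.le hy
    simpa using this
  rcases eq_or_lt_of_le hx with rfl | hx'
  · rw [eta_of_zero, eta_of_pos hy0]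
    have h1 : Real.sin (π * t) < π * t := Real.sin_lt (mul_pos Real.pi_pos ht)
    have h2 : Real.sin (π * t) / t < π := (div_lt_iff₀ ht).2 (by linarith)
    have h3 : Real.cos (π * t) < 1 := by
      have := Real.strictAntiOn_cos (Set.mem_Icc.2 ⟨le_refl 0, Real.pi_pos.le⟩)
        (Set.mem_Icc.2 ⟨(mul_pos Real.pi_pos ht).le, by nlinarith [Real.pi_pos]⟩)
        (mul_pos Real.pi_pos ht)
      simpa using this
    rw [mul_div_assoc]
    nlinarith
  · set s := Real.sqrt x with hs_def
    have hs : 0 < s := Real.sqrt_pos.2 hx'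
    have hst : s < t := Real.sqrt_lt_sqrt hx hxy
    have hs1 : s < 1 := lt_trans hst ht1
    rw [eta_of_pos hx', eta_of_pos hy0]
    have h1 : Real.sin (π * t) / t < Real.sin (π * s) / s :=
      q_anti (Set.mem_Ioo.2 ⟨hs, hs1⟩) (Set.mem_Ioo.2 ⟨ht, ht1⟩) hst
    have h2 : Real.cos (π * t) < Real.cos (π * s) := by
      apply Real.strictAntiOn_cos
      · exact Set.mem_Icc.2 ⟨(mul_pos Real.pi_pos hs).le, by nlinarith [Real.pi_pos]⟩
      · exact Set.mem_Icc.2 ⟨(mul_pos Real.pi_pos ht).le, by nlinarith [Real.pi_pos]⟩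
      · exact mul_lt_mul_of_pos_left hst Real.pi_pos
    rw [mul_div_assoc, mul_div_assoc]
    nlinarith

/-- For `γ > 0`, the function `η` is strictly decreasing on `(−∞, 1)`. -/
theorem eta_strictAntiOn_of_pos (γ : ℝ) (hγ : 0 < γ) :
    StrictAntiOn (eta γ) (Set.Iio (1 : ℝ)) := by
  intro x hx y hy hxy
  rcases le_or_gt y 0 with h | h
  · exact etaA hγ hxy h
  · rcases le_or_gt x 0 with h' | h'
    · rcases eq_or_lt_of_le h' with rfl | h''
      · exact etaB hγ le_rfl hxy hy
      · exact lt_trans (etaB hγ le_rfl h hy) (etaA hγ h'' le_rfl)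
    · exact etaB hγ h'.le hxy hy
end

section
/- Let γ < 0. Then there exists a unique z₀ ∈ (−∞, 1) such that η is strictly decreasing on (−∞, z₀] and strictly increasing on [z₀, 1). Moreover z₀ ∈ (0, 1) if −12/π < γ < 0, z₀ = 0 if γ = −12/π, and z₀ < 0 if γ < −12/π. -/
open Real

open Real Set Filter Topology

/-- Helper: if `f 0 = 0` and `f' > 0` on `(0,b)`, then `f > 0` on `(0,b]`. -/
lemma pos_on_Ioc {f f' : ℝ → ℝ} {b : ℝ} (hb : 0 < b)
    (hd : ∀ x, HasDerivAt f (f' x) x) (h0 : f 0 = 0)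
    (hpos : ∀ x ∈ Ioo (0:ℝ) b, 0 < f' x) : ∀ x ∈ Ioc (0:ℝ) b, 0 < f x := by
  have hmono : StrictMonoOn f (Icc 0 b) := by
    apply strictMonoOn_of_deriv_pos (convex_Icc 0 b)
    · exact fun x _ => ((hd x).differentiableAt).continuousAt.continuousWithinAt
    · intro x hx
      rw [interior_Icc] at hx
      rw [(hd x).deriv]
      exact hpos x hx
  intro x hx
  have := hmono (left_mem_Icc.2 hb.le) ⟨hx.1.le, hx.2⟩ hx.1
  rwa [h0] at this

/-- Helper: if `f 0 = 0` and `f' > 0` on `(0,∞)`, then `f > 0` on `(0,∞)`. -/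
lemma pos_on_Ioi {f f' : ℝ → ℝ}
    (hd : ∀ x, HasDerivAt f (f' x) x) (h0 : f 0 = 0)
    (hpos : ∀ x, 0 < x → 0 < f' x) : ∀ x, 0 < x → 0 < f x := by
  intro x hx
  have hmono : StrictMonoOn f (Ici 0) := by
    apply strictMonoOn_of_deriv_pos (convex_Ici 0)
    · exact fun y _ => ((hd y).differentiableAt).continuousAt.continuousWithinAt
    · intro y hy
      rw [interior_Ici] at hy
      rw [(hd y).deriv]
      exact hpos y hy
  have := hmono (self_mem_Ici) (le_of_lt hx : (0:ℝ) ≤ x) hx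
  rwa [h0] at this

lemma P_hasDeriv : ∀ t : ℝ, HasDerivAt (fun t => sin t - t * cos t) (t * sin t) t := by
  intro t
  have h : HasDerivAt (fun t : ℝ => sin t - t * cos t)
      (cos t - (1 * cos t + t * (-sin t))) t :=
    (Real.hasDerivAt_sin t).sub ((hasDerivAt_id t).mul (Real.hasDerivAt_cos t))
  convert h using 1 <;> ring

lemma P_pos : ∀ t ∈ Ioc (0:ℝ) π, 0 < sin t - t * cos t := by
  apply pos_on_Ioc Real.pi_pos P_hasDeriv (by simp)
  intro x hx
  exact mul_pos hx.1 (Real.sin_pos_of_pos_of_lt_pi hx.1 hx.2)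

lemma Q_hasDeriv : ∀ s : ℝ, HasDerivAt (fun s => s * cosh s - sinh s) (s * sinh s) s := by
  intro s
  have h : HasDerivAt (fun s : ℝ => s * cosh s - sinh s)
      (1 * cosh s + s * sinh s - cosh s) s :=
    (((hasDerivAt_id s).mul (Real.hasDerivAt_cosh s))).sub (Real.hasDerivAt_sinh s)
  convert h using 1 <;> ring

lemma Q_pos : ∀ s : ℝ, 0 < s → 0 < s * cosh s - sinh s := by
  apply pos_on_Ioi Q_hasDeriv (by simp)
  intro x hx
  exact mul_pos hx (Real.sinh_pos_iff.2 hx)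

/-- `K(t) = 3(sin t - t cos t) - t² sin t > 0` on `(0,π]`, i.e. `χ < 12`. -/
lemma K_pos : ∀ t ∈ Ioc (0:ℝ) π, 0 < 3 * (sin t - t * cos t) - t ^ 2 * sin t := by
  apply pos_on_Ioc Real.pi_pos
  · intro t
    have h : HasDerivAt (fun t : ℝ => 3 * (sin t - t * cos t) - t ^ 2 * sin t)
        (3 * (t * sin t) - (2 * t ^ 1 * sin t + t ^ 2 * cos t)) t :=
      ((P_hasDeriv t).const_mul 3).sub ((hasDerivAt_pow 2 t).mul (Real.hasDerivAt_sin t))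
    convert h using 1 <;> ring
  · simp
  · intro x hx
    have hP := P_pos x ⟨hx.1, hx.2.le⟩
    show (0:ℝ) < 3 * (x * sin x) - (2 * x ^ 1 * sin x + x ^ 2 * cos x)
    have h2 : (3:ℝ) * (x * sin x) - (2 * x ^ 1 * sin x + x ^ 2 * cos x) = x * (sin x - x * cos x) := by
      ring
    rw [h2]
    exact mul_pos hx.1 hP

/-- `s² sinh s + 3 sinh s - 3 s cosh s > 0` for `s > 0`, i.e. `ψ > 12`. -/
lemma Kt_pos : ∀ s : ℝ, 0 < s → 0 < s ^ 2 * sinh s - 3 * (s * cosh s - sinh s) := by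
  apply pos_on_Ioi
  · intro s
    have h : HasDerivAt (fun s : ℝ => s ^ 2 * sinh s - 3 * (s * cosh s - sinh s))
        (2 * s ^ 1 * sinh s + s ^ 2 * cosh s - 3 * (s * sinh s)) s :=
      ((hasDerivAt_pow 2 s).mul (Real.hasDerivAt_sinh s)).sub ((Q_hasDeriv s).const_mul 3)
    convert h using 1 <;> ring
  · simp
  · intro x hx
    have hQ := Q_pos x hx
    show (0:ℝ) < 2 * x ^ 1 * sinh x + x ^ 2 * cosh x - 3 * (x * sinh x)
    have h2 : (2 * x ^ 1 * sinh x + x ^ 2 * cosh x - 3 * (x * sinh x)) =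
        x * (x * cosh x - sinh x) := by ring
    rw [h2]
    exact mul_pos hx hQ

/-- `V(t) > 0` on `(0,π]`, i.e. `χ > 12 - 2t²`. -/
lemma V_pos : ∀ t ∈ Ioc (0:ℝ) π,
    0 < 3 * t ^ 2 * sin t - t ^ 3 * cos t - 6 * sin t + 6 * (t * cos t) := by
  have hd : ∀ t : ℝ, HasDerivAt
      (fun t : ℝ => 3 * t ^ 2 * sin t - t ^ 3 * cos t - 6 * sin t + 6 * (t * cos t))
      (t ^ 3 * sin t) t := by
    intro t
    have h := ((((hasDerivAt_pow 2 t).const_mul 3).mul (Real.hasDerivAt_sin t)).sub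
        ((hasDerivAt_pow 3 t).mul (Real.hasDerivAt_cos t))).sub
        ((Real.hasDerivAt_sin t).const_mul 6) |>.add
        ((hasDerivAt_id' (x := t)).mul (Real.hasDerivAt_cos t) |>.const_mul 6)
    refine h.congr_deriv ?_
    push_cast; ring
  refine pos_on_Ioc Real.pi_pos hd (by simp) ?_
  intro x hx
  exact mul_pos (pow_pos hx.1 3) (Real.sin_pos_of_pos_of_lt_pi hx.1 hx.2)

/-- `V̂(s) > 0` for `s > 0`, i.e. `ψ < 12 + 2s²`. -/
lemma Vh_pos : ∀ s : ℝ, 0 < s →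
    0 < 6 * (s * cosh s) - 6 * sinh s + s ^ 3 * cosh s - 3 * s ^ 2 * sinh s := by
  have hd : ∀ s : ℝ, HasDerivAt
      (fun s : ℝ => 6 * (s * cosh s) - 6 * sinh s + s ^ 3 * cosh s - 3 * s ^ 2 * sinh s)
      (s ^ 3 * sinh s) s := by
    intro s
    have h := (((hasDerivAt_id' (x := s)).mul (Real.hasDerivAt_cosh s) |>.const_mul 6).sub
        ((Real.hasDerivAt_sinh s).const_mul 6)).add
        ((hasDerivAt_pow 3 s).mul (Real.hasDerivAt_cosh s)) |>.sub
        (((hasDerivAt_pow 2 s).const_mul 3).mul (Real.hasDerivAt_sinh s))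
    refine h.congr_deriv ?_
    push_cast; ring
  refine pos_on_Ioi hd (by simp) ?_
  intro x hx
  exact mul_pos (pow_pos hx 3) (Real.sinh_pos_iff.2 hx)

/-- `G''(u) = 2 - 2 cos u - u sin u > 0` on `(0, 2π)`. -/
lemma G2_pos : ∀ u ∈ Ioo (0:ℝ) (2 * π), 0 < 2 - 2 * cos u - u * sin u := by
  have hd : ∀ t : ℝ, HasDerivAt (fun t : ℝ => 2 - 2 * cos t - t * sin t)
      (sin t - t * cos t) t := by
    intro t
    have h := ((hasDerivAt_const t (2:ℝ)).sub ((Real.hasDerivAt_cos t).const_mul 2)).sub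
      ((hasDerivAt_id' (x := t)).mul (Real.hasDerivAt_sin t))
    refine h.congr_deriv ?_
    ring
  intro u hu
  rcases le_or_gt u π with h | h
  · refine pos_on_Ioc Real.pi_pos hd (by simp) ?_ u ⟨hu.1, h⟩
    exact fun x hx => P_pos x ⟨hx.1, hx.2.le⟩
  · have hsin : sin u ≤ 0 := by nlinarith [Real.sin_sub_pi u,
      Real.sin_nonneg_of_nonneg_of_le_pi (by linarith : (0:ℝ) ≤ u - π) (by linarith [hu.2])]
    have hcos : cos u < 1 := by
      have h2 : cos u = 1 - 2 * sin (u / 2) ^ 2 := by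
        have := Real.cos_two_mul (u / 2)
        have h4 : 2 * (u / 2) = u := by ring
        rw [h4] at this
        nlinarith [Real.sin_sq_add_cos_sq (u / 2)]
      have h3 : 0 < sin (u / 2) := by
        apply Real.sin_pos_of_pos_of_lt_pi
        · linarith [Real.pi_pos]
        · linarith [hu.2]
      nlinarith
    nlinarith [mul_nonneg (by linarith [Real.pi_pos] : (0:ℝ) ≤ u) (neg_nonneg.2 hsin)]

/-- `G'(u) = 2u + u cos u - 3 sin u > 0` on `(0, 2π)`. -/
lemma G1_pos : ∀ u ∈ Ioo (0:ℝ) (2 * π), 0 < 2 * u + u * cos u - 3 * sin u := by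
  have hd : ∀ t : ℝ, HasDerivAt (fun t : ℝ => 2 * t + t * cos t - 3 * sin t)
      (2 - 2 * cos t - t * sin t) t := by
    intro t
    have h := (((hasDerivAt_id' (x := t)).const_mul 2).add
        ((hasDerivAt_id' (x := t)).mul (Real.hasDerivAt_cos t))).sub
        ((Real.hasDerivAt_sin t).const_mul 3)
    refine h.congr_deriv ?_
    ring
  intro u hu
  refine pos_on_Ioc (by positivity : (0:ℝ) < 2 * π) hd (by simp) ?_ u ⟨hu.1, hu.2.le⟩
  exact fun x hx => G2_pos x hx

/-- `G(u) = u² + u sin u + 4 cos u - 4 > 0` on `(0, 2π)`. -/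
lemma G_pos : ∀ u ∈ Ioo (0:ℝ) (2 * π), 0 < u ^ 2 + u * sin u + 4 * cos u - 4 := by
  have hd : ∀ t : ℝ, HasDerivAt (fun t : ℝ => t ^ 2 + t * sin t + 4 * cos t - 4)
      (2 * t + t * cos t - 3 * sin t) t := by
    intro t
    have h := (((hasDerivAt_pow 2 t).add
        ((hasDerivAt_id' (x := t)).mul (Real.hasDerivAt_sin t))).add
        ((Real.hasDerivAt_cos t).const_mul 4)).sub (hasDerivAt_const t (4:ℝ))
    refine h.congr_deriv ?_
    push_cast; ring
  intro u hu
  refine pos_on_Ioc (by positivity : (0:ℝ) < 2 * π) hd (by simp) ?_ u ⟨hu.1, hu.2.le⟩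
  exact fun x hx => G1_pos x hx

/-- `G̃(u) = u² + u sinh u - 4 cosh u + 4 > 0` for `u > 0`. -/
lemma Gt_pos : ∀ u : ℝ, 0 < u → 0 < u ^ 2 + u * sinh u - 4 * cosh u + 4 := by
  have h2 : ∀ u : ℝ, 0 < u → 0 < 2 - 2 * cosh u + u * sinh u := by
    have hd : ∀ t : ℝ, HasDerivAt (fun t : ℝ => 2 - 2 * cosh t + t * sinh t)
        (t * cosh t - sinh t) t := by
      intro t
      have h := ((hasDerivAt_const t (2:ℝ)).sub ((Real.hasDerivAt_cosh t).const_mul 2)).add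
        ((hasDerivAt_id' (x := t)).mul (Real.hasDerivAt_sinh t))
      refine h.congr_deriv ?_
      ring
    exact pos_on_Ioi hd (by simp) (fun x hx => Q_pos x hx)
  have h1 : ∀ u : ℝ, 0 < u → 0 < 2 * u + u * cosh u - 3 * sinh u := by
    have hd : ∀ t : ℝ, HasDerivAt (fun t : ℝ => 2 * t + t * cosh t - 3 * sinh t)
        (2 - 2 * cosh t + t * sinh t) t := by
      intro t
      have h := (((hasDerivAt_id' (x := t)).const_mul 2).add
          ((hasDerivAt_id' (x := t)).mul (Real.hasDerivAt_cosh t))).sub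
          ((Real.hasDerivAt_sinh t).const_mul 3)
      refine h.congr_deriv ?_
      ring
    exact pos_on_Ioi hd (by simp) (fun x hx => h2 x hx)
  have hd : ∀ t : ℝ, HasDerivAt (fun t : ℝ => t ^ 2 + t * sinh t - 4 * cosh t + 4)
      (2 * t + t * cosh t - 3 * sinh t) t := by
    intro t
    have h := (((hasDerivAt_pow 2 t).add
        ((hasDerivAt_id' (x := t)).mul (Real.hasDerivAt_sinh t))).sub
        ((Real.hasDerivAt_cosh t).const_mul 4)).add (hasDerivAt_const t (4:ℝ))
    refine h.congr_deriv ?_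
    push_cast; ring
  exact pos_on_Ioi hd (by simp) (fun x hx => h1 x hx)

noncomputable def chi (t : ℝ) : ℝ := 4 * t ^ 2 * sin t / (sin t - t * cos t)
noncomputable def psi (s : ℝ) : ℝ := 4 * s ^ 2 * sinh s / (s * cosh s - sinh s)

lemma num_hasDeriv (t : ℝ) : HasDerivAt (fun t : ℝ => 4 * t ^ 2 * sin t)
    (8 * t * sin t + 4 * t ^ 2 * cos t) t := by
  have h := ((hasDerivAt_pow 2 t).const_mul 4).mul (Real.hasDerivAt_sin t)
  refine h.congr_deriv ?_
  push_cast; ring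

lemma numh_hasDeriv (s : ℝ) : HasDerivAt (fun s : ℝ => 4 * s ^ 2 * sinh s)
    (8 * s * sinh s + 4 * s ^ 2 * cosh s) s := by
  have h := ((hasDerivAt_pow 2 s).const_mul 4).mul (Real.hasDerivAt_sinh s)
  refine h.congr_deriv ?_
  push_cast; ring

lemma chi_hasDeriv {t : ℝ} (ht : t ∈ Ioo (0:ℝ) π) :
    HasDerivAt chi (((8 * t * sin t + 4 * t ^ 2 * cos t) * (sin t - t * cos t) -
      4 * t ^ 2 * sin t * (t * sin t)) / (sin t - t * cos t) ^ 2) t :=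
  (num_hasDeriv t).div (P_hasDeriv t) (ne_of_gt (P_pos t ⟨ht.1, ht.2.le⟩))

lemma R_pos {t : ℝ} (ht : t ∈ Ioo (0:ℝ) π) :
    0 < t ^ 2 + t * (sin t * cos t) - 2 * sin t ^ 2 := by
  have hG := G_pos (2 * t) ⟨by linarith [ht.1], by linarith [ht.2]⟩
  rw [Real.sin_two_mul, Real.cos_two_mul] at hG
  nlinarith [Real.sin_sq_add_cos_sq t]

lemma chi_anti : StrictAntiOn chi (Ioo (0:ℝ) π) := by
  apply strictAntiOn_of_deriv_neg (convex_Ioo 0 π)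
  · intro x hx
    exact ((chi_hasDeriv hx).differentiableAt).continuousAt.continuousWithinAt
  · intro x hx
    rw [interior_Ioo] at hx
    rw [(chi_hasDeriv hx).deriv]
    apply div_neg_of_neg_of_pos
    · have hR := R_pos hx
      have hN : (8 * x * sin x + 4 * x ^ 2 * cos x) * (sin x - x * cos x) -
          4 * x ^ 2 * sin x * (x * sin x) =
          -(4 * x) * (x ^ 2 + x * (sin x * cos x) - 2 * sin x ^ 2) := by
        linear_combination (-(4:ℝ) * x ^ 3) * (Real.sin_sq_add_cos_sq x)
      rw [hN]
      have := mul_pos (by linarith [hx.1] : (0:ℝ) < 4 * x) hR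
      linarith
    · exact pow_pos (P_pos x ⟨hx.1, hx.2.le⟩) 2

lemma psi_hasDeriv {s : ℝ} (hs : 0 < s) :
    HasDerivAt psi (((8 * s * sinh s + 4 * s ^ 2 * cosh s) * (s * cosh s - sinh s) -
      4 * s ^ 2 * sinh s * (s * sinh s)) / (s * cosh s - sinh s) ^ 2) s :=
  (numh_hasDeriv s).div (Q_hasDeriv s) (ne_of_gt (Q_pos s hs))

lemma Rt_pos {s : ℝ} (hs : 0 < s) :
    0 < s ^ 2 + s * (sinh s * cosh s) - 2 * sinh s ^ 2 := by
  have hG := Gt_pos (2 * s) (by linarith)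
  rw [Real.sinh_two_mul, Real.cosh_two_mul] at hG
  nlinarith [Real.cosh_sq_sub_sinh_sq s]

lemma psi_mono : StrictMonoOn psi (Ioi (0:ℝ)) := by
  apply strictMonoOn_of_deriv_pos (convex_Ioi 0)
  · intro x hx
    exact ((psi_hasDeriv hx).differentiableAt).continuousAt.continuousWithinAt
  · intro x hx
    rw [interior_Ioi] at hx
    rw [(psi_hasDeriv hx).deriv]
    apply div_pos
    · have hR := Rt_pos hx
      have hN : (8 * x * sinh x + 4 * x ^ 2 * cosh x) * (x * cosh x - sinh x) -
          4 * x ^ 2 * sinh x * (x * sinh x) =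
          (4 * x) * (x ^ 2 + x * (sinh x * cosh x) - 2 * sinh x ^ 2) := by
        linear_combination ((4:ℝ) * x ^ 3) * (Real.cosh_sq_sub_sinh_sq x)
      rw [hN]
      exact mul_pos (by have := mem_Ioi.mp hx; linarith : (0:ℝ) < 4 * x) hR
    · exact pow_pos (Q_pos x hx) 2

lemma chi_lt_12 {t : ℝ} (ht : t ∈ Ioo (0:ℝ) π) : chi t < 12 := by
  have hP := P_pos t ⟨ht.1, ht.2.le⟩
  have hK := K_pos t ⟨ht.1, ht.2.le⟩
  rw [chi, div_lt_iff₀ hP]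
  nlinarith

lemma chi_gt {t : ℝ} (ht : t ∈ Ioo (0:ℝ) π) : 12 - 2 * t ^ 2 < chi t := by
  have hP := P_pos t ⟨ht.1, ht.2.le⟩
  have hV := V_pos t ⟨ht.1, ht.2.le⟩
  rw [chi, lt_div_iff₀ hP]
  nlinarith

lemma psi_gt_12 {s : ℝ} (hs : 0 < s) : 12 < psi s := by
  have hQ := Q_pos s hs
  have hK := Kt_pos s hs
  rw [psi, lt_div_iff₀ hQ]
  nlinarith

lemma psi_lt {s : ℝ} (hs : 0 < s) : psi s < 12 + 2 * s ^ 2 := by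
  have hQ := Q_pos s hs
  have hV := Vh_pos s hs
  rw [psi, div_lt_iff₀ hQ]
  nlinarith

lemma psi_ge_two_mul {s : ℝ} (hs : 1 ≤ s) : 2 * s ≤ psi s := by
  have hs0 : (0:ℝ) < s := by linarith
  have hQ := Q_pos s hs0
  have hsh : 0 < sinh s := Real.sinh_pos_iff.2 hs0
  have hch : 0 < cosh s := Real.cosh_pos s
  have key : cosh s ≤ 2 * sinh s := by
    rw [Real.cosh_eq, Real.sinh_eq]
    have h1 : Real.exp (-s) * Real.exp s = 1 := by
      rw [← Real.exp_add]; simp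
    have h2 : (2:ℝ) ≤ Real.exp 1 := by
      have := Real.add_one_le_exp (1:ℝ); linarith
    have h3 : Real.exp 1 ≤ Real.exp s := Real.exp_le_exp.2 hs
    have h4 : Real.exp (-s) ≤ 1 := by
      rw [Real.exp_le_one_iff]; linarith
    nlinarith [Real.exp_pos (-s), Real.exp_pos s]
  rw [psi, le_div_iff₀ hQ]
  nlinarith


lemma eta_eq_pos (γ : ℝ) {z : ℝ} (hz : 0 < z) :
    eta γ z = γ * sin (π * √z) / √z + 4 * cos (π * √z) := if_pos hz

lemma eta_eq_neg (γ : ℝ) {z : ℝ} (hz : z < 0) :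
    eta γ z = γ * sinh (π * √(-z)) / √(-z) + 4 * cosh (π * √(-z)) := by
  rw [eta, if_neg (by linarith), if_neg (by linarith)]

lemma eta_zero (γ : ℝ) : eta γ 0 = γ * π + 4 := by
  rw [eta, if_neg (by norm_num), if_pos rfl]

lemma eta_hasDeriv_pos (γ : ℝ) {z : ℝ} (hz : 0 < z) :
    ∃ d, HasDerivAt (eta γ) d z ∧ d * (2 * π * z * √z) =
      -γ * π * (sin (π * √z) - π * √z * cos (π * √z)) - 4 * (π * √z) ^ 2 * sin (π * √z) := by
  have hsz : 0 < √z := Real.sqrt_pos.2 hz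
  have hsq : HasDerivAt Real.sqrt (1 / (2 * √z)) z := Real.hasDerivAt_sqrt hz.ne'
  have h1 : HasDerivAt (fun w : ℝ => π * √w) (π * (1 / (2 * √z))) z := hsq.const_mul π
  have hsin : HasDerivAt (fun w : ℝ => sin (π * √w)) (cos (π * √z) * (π * (1 / (2 * √z)))) z :=
    (Real.hasDerivAt_sin (π * √z)).comp (h₂ := sin) z h1
  have hcos : HasDerivAt (fun w : ℝ => cos (π * √w)) (-sin (π * √z) * (π * (1 / (2 * √z)))) z :=
    (Real.hasDerivAt_cos (π * √z)).comp (h₂ := cos) z h1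
  have hq : HasDerivAt (fun w : ℝ => γ * sin (π * √w) / √w)
      ((γ * (cos (π * √z) * (π * (1 / (2 * √z)))) * √z - γ * sin (π * √z) * (1 / (2 * √z))) /
        √z ^ 2) z := (hsin.const_mul γ).div hsq hsz.ne'
  have hform := hq.add (hcos.const_mul 4)
  have heq : eta γ =ᶠ[nhds z] fun w => γ * sin (π * √w) / √w + 4 * cos (π * √w) :=
    eventuallyEq_of_mem (Ioi_mem_nhds hz) fun w hw => eta_eq_pos γ hw
  refine ⟨_, hform.congr_of_eventuallyEq heq, ?_⟩
  have hs2 : √z * √z = z := Real.mul_self_sqrt hz.le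
  have key : ∀ s S C : ℝ, s ≠ 0 →
      ((γ * (C * (π * (1 / (2 * s)))) * s - γ * S * (1 / (2 * s))) / s ^ 2 +
        4 * (-S * (π * (1 / (2 * s))))) * (2 * π * (s * s) * s) =
      -γ * π * (S - π * s * C) - 4 * (π * s) ^ 2 * S := by
    intro s S C hs
    field_simp
    ring
  have h := key (√z) (sin (π * √z)) (cos (π * √z)) hsz.ne'
  rw [hs2] at h
  exact h

lemma eta_hasDeriv_neg (γ : ℝ) {z : ℝ} (hz : z < 0) :
    ∃ d, HasDerivAt (eta γ) d z ∧ d * (2 * π * (-z) * √(-z)) =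
      -(γ * π * (π * √(-z) * cosh (π * √(-z)) - sinh (π * √(-z))) +
        4 * (π * √(-z)) ^ 2 * sinh (π * √(-z))) := by
  have hnz : (0:ℝ) < -z := by linarith
  have hsz : 0 < √(-z) := Real.sqrt_pos.2 hnz
  have hneg : HasDerivAt (fun w : ℝ => -w) (-1) z := (hasDerivAt_id z).neg
  have hsq : HasDerivAt (fun w : ℝ => √(-w)) (1 / (2 * √(-z)) * -1) z :=
    (Real.hasDerivAt_sqrt hnz.ne').comp z hneg
  have h1 : HasDerivAt (fun w : ℝ => π * √(-w)) (π * (1 / (2 * √(-z)) * -1)) z := hsq.const_mul π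
  have hsinh : HasDerivAt (fun w : ℝ => sinh (π * √(-w)))
      (cosh (π * √(-z)) * (π * (1 / (2 * √(-z)) * -1))) z :=
    (Real.hasDerivAt_sinh (π * √(-z))).comp (h₂ := sinh) z h1
  have hcosh : HasDerivAt (fun w : ℝ => cosh (π * √(-w)))
      (sinh (π * √(-z)) * (π * (1 / (2 * √(-z)) * -1))) z :=
    (Real.hasDerivAt_cosh (π * √(-z))).comp (h₂ := cosh) z h1
  have hq : HasDerivAt (fun w : ℝ => γ * sinh (π * √(-w)) / √(-w))
      ((γ * (cosh (π * √(-z)) * (π * (1 / (2 * √(-z)) * -1))) * √(-z) -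
        γ * sinh (π * √(-z)) * (1 / (2 * √(-z)) * -1)) / √(-z) ^ 2) z :=
    (hsinh.const_mul γ).div hsq hsz.ne'
  have hform := hq.add (hcosh.const_mul 4)
  have heq : eta γ =ᶠ[nhds z] fun w => γ * sinh (π * √(-w)) / √(-w) + 4 * cosh (π * √(-w)) :=
    eventuallyEq_of_mem (Iio_mem_nhds hz) fun w hw => eta_eq_neg γ hw
  refine ⟨_, hform.congr_of_eventuallyEq heq, ?_⟩
  have hs2 : √(-z) * √(-z) = -z := Real.mul_self_sqrt hnz.le
  have key : ∀ s S C : ℝ, s ≠ 0 →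
      ((γ * (C * (π * (1 / (2 * s) * -1))) * s - γ * S * (1 / (2 * s) * -1)) / s ^ 2 +
        4 * (S * (π * (1 / (2 * s) * -1)))) * (2 * π * (s * s) * s) =
      -(γ * π * (π * s * C - S) + 4 * (π * s) ^ 2 * S) := by
    intro s S C hs
    field_simp
    ring
  have h := key (√(-z)) (sinh (π * √(-z))) (cosh (π * √(-z))) hsz.ne'
  rw [hs2] at h
  exact h

lemma tendsto_sin_div : Tendsto (fun x : ℝ => sin x / x) (𝓝[≠] (0:ℝ)) (𝓝 1) := by
  have h := hasDerivAt_iff_tendsto_slope.mp (Real.hasDerivAt_sin 0)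
  rw [Real.cos_zero] at h
  refine h.congr fun x => ?_
  rw [slope_def_field, Real.sin_zero]
  ring_nf

lemma tendsto_sinh_div : Tendsto (fun x : ℝ => sinh x / x) (𝓝[≠] (0:ℝ)) (𝓝 1) := by
  have h := hasDerivAt_iff_tendsto_slope.mp (Real.hasDerivAt_sinh 0)
  rw [Real.cosh_zero] at h
  refine h.congr fun x => ?_
  rw [slope_def_field, Real.sinh_zero]
  ring_nf

lemma eta_contAt_zero (γ : ℝ) : ContinuousAt (eta γ) 0 := by
  have hright : ContinuousWithinAt (eta γ) (Ici 0) 0 := by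
    rw [← continuousWithinAt_Ioi_iff_Ici]
    unfold ContinuousWithinAt
    rw [eta_zero]
    have hsq : Tendsto (fun z : ℝ => π * √z) (𝓝[Ioi 0] 0) (𝓝[≠] (0:ℝ)) := by
      rw [tendsto_nhdsWithin_iff]
      constructor
      · have : Tendsto (fun z : ℝ => π * √z) (𝓝 0) (𝓝 (π * √0)) :=
          ((continuous_const.mul Real.continuous_sqrt)).tendsto 0
        simpa using this.mono_left nhdsWithin_le_nhds
      · exact eventually_mem_nhdsWithin.mono fun x hx => by
          have : 0 < π * √x := mul_pos Real.pi_pos (Real.sqrt_pos.2 hx)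
          exact ne_of_gt this
    have h1 : Tendsto (fun z : ℝ => sin (π * √z) / (π * √z)) (𝓝[Ioi 0] 0) (𝓝 1) :=
      tendsto_sin_div.comp hsq
    have hcos : Tendsto (fun z : ℝ => 4 * cos (π * √z)) (𝓝[Ioi 0] 0) (𝓝 4) := by
      have : Tendsto (fun z : ℝ => 4 * cos (π * √z)) (𝓝 0) (𝓝 (4 * cos (π * √0))) :=
        (continuous_const.mul (Real.continuous_cos.comp (continuous_const.mul Real.continuous_sqrt))).tendsto 0
      simpa using this.mono_left nhdsWithin_le_nhds
    have hmain : Tendsto (fun z : ℝ => γ * π * (sin (π * √z) / (π * √z)) + 4 * cos (π * √z))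
        (𝓝[Ioi 0] 0) (𝓝 (γ * π * 1 + 4)) := ((h1.const_mul (γ * π)).add hcos)
    rw [mul_one] at hmain
    refine (Tendsto.congr' ?_ hmain).congr fun z => rfl
    refine eventually_mem_nhdsWithin.mono fun z hz => ?_
    have hsz : 0 < √z := Real.sqrt_pos.2 hz
    rw [eta_eq_pos γ hz]
    field_simp
  have hleft : ContinuousWithinAt (eta γ) (Iic 0) 0 := by
    rw [← continuousWithinAt_Iio_iff_Iic]
    unfold ContinuousWithinAt
    rw [eta_zero]
    have hsq : Tendsto (fun z : ℝ => π * √(-z)) (𝓝[Iio 0] 0) (𝓝[≠] (0:ℝ)) := by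
      rw [tendsto_nhdsWithin_iff]
      constructor
      · have : Tendsto (fun z : ℝ => π * √(-z)) (𝓝 0) (𝓝 (π * √(-0))) :=
          ((continuous_const.mul (Real.continuous_sqrt.comp continuous_neg))).tendsto 0
        simpa using this.mono_left nhdsWithin_le_nhds
      · exact eventually_mem_nhdsWithin.mono fun x hx => by
          have : 0 < π * √(-x) := mul_pos Real.pi_pos (Real.sqrt_pos.2 (by simpa using hx))
          exact ne_of_gt this
    have h1 : Tendsto (fun z : ℝ => sinh (π * √(-z)) / (π * √(-z))) (𝓝[Iio 0] 0) (𝓝 1) :=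
      tendsto_sinh_div.comp hsq
    have hcos : Tendsto (fun z : ℝ => 4 * cosh (π * √(-z))) (𝓝[Iio 0] 0) (𝓝 4) := by
      have : Tendsto (fun z : ℝ => 4 * cosh (π * √(-z))) (𝓝 0) (𝓝 (4 * cosh (π * √(-0)))) :=
        (continuous_const.mul (Real.continuous_cosh.comp
          (continuous_const.mul (Real.continuous_sqrt.comp continuous_neg)))).tendsto 0
      simpa using this.mono_left nhdsWithin_le_nhds
    have hmain : Tendsto (fun z : ℝ => γ * π * (sinh (π * √(-z)) / (π * √(-z))) + 4 * cosh (π * √(-z)))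
        (𝓝[Iio 0] 0) (𝓝 (γ * π * 1 + 4)) := ((h1.const_mul (γ * π)).add hcos)
    rw [mul_one] at hmain
    refine Tendsto.congr' ?_ hmain
    refine eventually_mem_nhdsWithin.mono fun z hz => ?_
    have hz0 : z < 0 := hz
    have hsz : 0 < √(-z) := Real.sqrt_pos.2 (by linarith)
    rw [eta_eq_neg γ hz0]
    field_simp
  have := hleft.union hright
  rwa [Iic_union_Ici, continuousWithinAt_univ] at this

lemma eta_continuous (γ : ℝ) : Continuous (eta γ) := by
  rw [continuous_iff_continuousAt]
  intro z
  rcases lt_trichotomy z 0 with hz | hz | hz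
  · obtain ⟨d, hd, -⟩ := eta_hasDeriv_neg γ hz
    exact hd.differentiableAt.continuousAt
  · rw [hz]; exact eta_contAt_zero γ
  · obtain ⟨d, hd, -⟩ := eta_hasDeriv_pos γ hz
    exact hd.differentiableAt.continuousAt

section derivsign
variable {γ z : ℝ}

lemma t_mem (hz : 0 < z) (hz1 : z < 1) : π * √z ∈ Ioo (0:ℝ) π := by
  have hsz : 0 < √z := Real.sqrt_pos.2 hz
  have h1 : √z < 1 := by
    have := Real.sqrt_lt_sqrt hz.le hz1
    simpa using this
  constructor
  · exact mul_pos Real.pi_pos hsz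
  · nlinarith [Real.pi_pos]

lemma deriv_eta_pos_of (hz : 0 < z) (hz1 : z < 1) (h : chi (π * √z) < -γ * π) :
    0 < deriv (eta γ) z := by
  obtain ⟨d, hd, heq⟩ := eta_hasDeriv_pos γ hz
  have hsz : 0 < √z := Real.sqrt_pos.2 hz
  have hM : 0 < 2 * π * z * √z := by
    have := Real.pi_pos; positivity
  have ht := t_mem hz hz1
  have hP : 0 < sin (π * √z) - π * √z * cos (π * √z) := P_pos _ ⟨ht.1, ht.2.le⟩
  rw [chi, div_lt_iff₀ hP] at h
  have h2 : 0 < d * (2 * π * z * √z) := by rw [heq]; nlinarith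
  rw [hd.deriv]
  rcases mul_pos_iff.mp h2 with ⟨h3, _⟩ | ⟨_, h4⟩
  · exact h3
  · linarith

lemma deriv_eta_neg_of (hz : 0 < z) (hz1 : z < 1) (h : -γ * π < chi (π * √z)) :
    deriv (eta γ) z < 0 := by
  obtain ⟨d, hd, heq⟩ := eta_hasDeriv_pos γ hz
  have hsz : 0 < √z := Real.sqrt_pos.2 hz
  have hM : 0 < 2 * π * z * √z := by
    have := Real.pi_pos; positivity
  have ht := t_mem hz hz1
  have hP : 0 < sin (π * √z) - π * √z * cos (π * √z) := P_pos _ ⟨ht.1, ht.2.le⟩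
  rw [chi, lt_div_iff₀ hP] at h
  have h2 : d * (2 * π * z * √z) < 0 := by rw [heq]; nlinarith
  rw [hd.deriv]
  rcases mul_neg_iff.mp h2 with ⟨_, h4⟩ | ⟨h3, _⟩
  · linarith
  · exact h3

lemma deriv_eta_pos_of' (hz : z < 0) (h : psi (π * √(-z)) < -γ * π) :
    0 < deriv (eta γ) z := by
  obtain ⟨d, hd, heq⟩ := eta_hasDeriv_neg γ hz
  have hnz : (0:ℝ) < -z := by linarith
  have hsz : 0 < √(-z) := Real.sqrt_pos.2 hnz
  have hs : 0 < π * √(-z) := mul_pos Real.pi_pos hsz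
  have hM : 0 < 2 * π * (-z) * √(-z) := by
    have := Real.pi_pos; positivity
  have hQ : 0 < π * √(-z) * cosh (π * √(-z)) - sinh (π * √(-z)) := Q_pos _ hs
  rw [psi, div_lt_iff₀ hQ] at h
  have h2 : 0 < d * (2 * π * (-z) * √(-z)) := by rw [heq]; nlinarith
  rw [hd.deriv]
  rcases mul_pos_iff.mp h2 with ⟨h3, _⟩ | ⟨_, h4⟩
  · exact h3
  · linarith

lemma deriv_eta_neg_of' (hz : z < 0) (h : -γ * π < psi (π * √(-z))) :
    deriv (eta γ) z < 0 := by
  obtain ⟨d, hd, heq⟩ := eta_hasDeriv_neg γ hz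
  have hnz : (0:ℝ) < -z := by linarith
  have hsz : 0 < √(-z) := Real.sqrt_pos.2 hnz
  have hs : 0 < π * √(-z) := mul_pos Real.pi_pos hsz
  have hM : 0 < 2 * π * (-z) * √(-z) := by
    have := Real.pi_pos; positivity
  have hQ : 0 < π * √(-z) * cosh (π * √(-z)) - sinh (π * √(-z)) := Q_pos _ hs
  rw [psi, lt_div_iff₀ hQ] at h
  have h2 : d * (2 * π * (-z) * √(-z)) < 0 := by rw [heq]; nlinarith
  rw [hd.deriv]
  rcases mul_neg_iff.mp h2 with ⟨_, h4⟩ | ⟨h3, _⟩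
  · linarith
  · exact h3

end derivsign

lemma glue_anti {f : ℝ → ℝ} {b : ℝ} (hb : 0 ≤ b)
    (h1 : StrictAntiOn f (Iic 0)) (h2 : StrictAntiOn f (Icc 0 b)) :
    StrictAntiOn f (Iic b) := by
  intro x hx y hy hxy
  rcases le_or_gt y 0 with hy0 | hy0
  · exact h1 (le_trans hxy.le hy0) hy0 hxy
  · rcases le_or_gt 0 x with hx0 | hx0
    · exact h2 ⟨hx0, le_trans hxy.le hy⟩ ⟨hy0.le, hy⟩ hxy
    · calc f y < f 0 := h2 ⟨le_refl 0, hb⟩ ⟨hy0.le, hy⟩ hy0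
        _ < f x := h1 (mem_Iic.mpr hx0.le) (mem_Iic.mpr le_rfl) hx0

lemma glue_mono {f : ℝ → ℝ} {a : ℝ} (ha : a ≤ 0)
    (h1 : StrictMonoOn f (Icc a 0)) (h2 : StrictMonoOn f (Ico 0 1)) :
    StrictMonoOn f (Ico a 1) := by
  intro x hx y hy hxy
  rcases le_or_gt y 0 with hy0 | hy0
  · exact h1 ⟨hx.1, le_trans hxy.le hy0⟩ ⟨le_trans hx.1 hxy.le, hy0⟩ hxy
  · rcases le_or_gt 0 x with hx0 | hx0
    · exact h2 ⟨hx0, hx.2⟩ ⟨hy0.le, hy.2⟩ hxy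
    · calc f x < f 0 := h1 ⟨hx.1, hx0.le⟩ ⟨ha, le_refl 0⟩ hx0
        _ < f y := h2 ⟨le_refl 0, by norm_num⟩ ⟨hy0.le, hy.2⟩ hy0

lemma uniq_min {f : ℝ → ℝ} {z₀ w : ℝ} (hz₀ : z₀ < 1) (hw : w < 1)
    (ha₀ : StrictAntiOn f (Iic z₀)) (hm₀ : StrictMonoOn f (Ico z₀ 1))
    (ha : StrictAntiOn f (Iic w)) (hm : StrictMonoOn f (Ico w 1)) : w = z₀ := by
  rcases lt_trichotomy w z₀ with h | h | h
  · exfalso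
    set y := min z₀ ((w + 1) / 2) with hy
    have hwy : w < y := lt_min h (by linarith)
    have hy1 : y < 1 := lt_of_le_of_lt (min_le_right _ _) (by linarith)
    have h1 : f w < f y := hm ⟨le_refl w, hw⟩ ⟨hwy.le, hy1⟩ hwy
    have h2 : f y < f w := ha₀ (mem_Iic.mpr h.le) (mem_Iic.mpr (min_le_left _ _)) hwy
    linarith
  · exact h
  · exfalso
    set y := min w ((z₀ + 1) / 2) with hy
    have hwy : z₀ < y := lt_min h (by linarith)
    have hy1 : y < 1 := lt_of_le_of_lt (min_le_right _ _) (by linarith)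
    have h1 : f z₀ < f y := hm₀ ⟨le_refl z₀, hz₀⟩ ⟨hwy.le, hy1⟩ hwy
    have h2 : f y < f z₀ := ha (mem_Iic.mpr h.le) (mem_Iic.mpr (min_le_left _ _)) hwy
    linarith

/-- For `γ < 0` there is a unique `z₀ ∈ (−∞, 1)` such that `η` is strictly
decreasing on `(−∞, z₀]` and strictly increasing on `[z₀, 1)`; moreover `z₀ ∈ (0, 1)` if
`−12/π < γ < 0`, `z₀ = 0` if `γ = −12/π`, and `z₀ < 0` if `γ < −12/π`. -/
theorem eta_unique_minimum_of_neg (γ : ℝ) (hγ : γ < 0) :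
    ∃ z₀ : ℝ, z₀ < 1 ∧
      StrictAntiOn (eta γ) (Set.Iic z₀) ∧
      StrictMonoOn (eta γ) (Set.Ico z₀ 1) ∧
      (∀ w : ℝ, w < 1 → StrictAntiOn (eta γ) (Set.Iic w) →
        StrictMonoOn (eta γ) (Set.Ico w 1) → w = z₀) ∧
      (-12 / π < γ → 0 < z₀ ∧ z₀ < 1) ∧
      (γ = -12 / π → z₀ = 0) ∧
      (γ < -12 / π → z₀ < 0) := by
  have hπ : (0:ℝ) < π := Real.pi_pos
  set c : ℝ := -γ * π with hc
  have hc0 : 0 < c := by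
    rw [hc]; nlinarith
  -- translation of the hypothesis cases
  have hcase1 : -12 / π < γ ↔ c < 12 := by
    rw [hc, div_lt_iff₀ hπ]; constructor <;> intro h <;> nlinarith
  have hcase2 : γ = -12 / π ↔ c = 12 := by
    rw [hc, eq_div_iff hπ.ne']
    constructor <;> intro h <;> nlinarith
  have hcase3 : γ < -12 / π ↔ 12 < c := by
    rw [hc, lt_div_iff₀ hπ]; constructor <;> intro h <;> nlinarith
  -- derivative is negative on (-∞, 0) whenever c ≤ 12
  have hanti0 : c ≤ 12 → StrictAntiOn (eta γ) (Iic 0) := by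
    intro hcle
    apply strictAntiOn_of_deriv_neg (convex_Iic 0) (eta_continuous γ).continuousOn
    intro x hx
    rw [interior_Iic] at hx
    refine deriv_eta_neg_of' hx ?_
    have := psi_gt_12 (mul_pos hπ (Real.sqrt_pos.2 (by simpa using (neg_pos.2 hx))))
    rw [← hc]; linarith
  -- derivative is positive on (0,1) whenever 12 ≤ c
  have hmono0 : 12 ≤ c → StrictMonoOn (eta γ) (Ico 0 1) := by
    intro hcge
    apply strictMonoOn_of_deriv_pos (convex_Ico 0 1) (eta_continuous γ).continuousOn
    intro x hx
    rw [interior_Ico] at hx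
    refine deriv_eta_pos_of hx.1 hx.2 ?_
    have := chi_lt_12 (t_mem hx.1 hx.2)
    rw [← hc]; linarith
  rcases lt_trichotomy c 12 with hlt | heq12 | hgt
  · -- case 0 < c < 12 : z₀ ∈ (0,1)
    set a : ℝ := √((12 - c) / 2) with ha
    have ha2 : a ^ 2 = (12 - c) / 2 := Real.sq_sqrt (by linarith)
    have ha0 : 0 < a := Real.sqrt_pos.2 (by linarith)
    have haπ : a < π := by
      nlinarith [Real.pi_gt_three]
    have hconta : ContinuousOn chi (Icc a π) := by
      intro t ht
      have hP : 0 < sin t - t * cos t := P_pos t ⟨lt_of_lt_of_le ha0 ht.1, ht.2⟩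
      exact (((continuous_const.mul (continuous_pow 2)).mul Real.continuous_sin).continuousAt.div
        ((Real.continuous_sin.sub (continuous_id.mul Real.continuous_cos)).continuousAt)
        hP.ne').continuousWithinAt
    have hchiπ : chi π = 0 := by simp [chi]
    have hchia : c < chi a := by
      have := chi_gt ⟨ha0, haπ⟩
      nlinarith
    have hcmem : c ∈ Icc (chi π) (chi a) := by rw [hchiπ]; exact ⟨hc0.le, hchia.le⟩
    obtain ⟨t₀, ht₀mem, ht₀⟩ := intermediate_value_Icc' haπ.le hconta hcmem
    have ht₀0 : 0 < t₀ := lt_of_lt_of_le ha0 ht₀mem.1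
    have ht₀π : t₀ < π := by
      rcases lt_or_eq_of_le ht₀mem.2 with h | h
      · exact h
      · exfalso; rw [h, hchiπ] at ht₀; linarith
    have ht₀mem' : t₀ ∈ Ioo (0:ℝ) π := ⟨ht₀0, ht₀π⟩
    set z₀ : ℝ := (t₀ / π) ^ 2 with hz₀def
    have hz₀pos : 0 < z₀ := by positivity
    have hz₀lt1 : z₀ < 1 := by
      have h1 : t₀ / π < 1 := (div_lt_one hπ).2 ht₀π
      have h2 : 0 < t₀ / π := div_pos ht₀0 hπ
      nlinarith
    have hsqrt_z₀ : √z₀ = t₀ / π := Real.sqrt_sq (by positivity)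
    have hderiv_neg : ∀ x ∈ Ioo (0:ℝ) z₀, deriv (eta γ) x < 0 := by
      intro x hx
      have hx1 : x < 1 := hx.2.trans hz₀lt1
      refine deriv_eta_neg_of hx.1 hx1 ?_
      have htx : π * √x ∈ Ioo (0:ℝ) π := t_mem hx.1 hx1
      have hlt : π * √x < t₀ := by
        have h3 := Real.sqrt_lt_sqrt hx.1.le hx.2
        rw [hsqrt_z₀] at h3
        calc π * √x < π * (t₀ / π) := by nlinarith
          _ = t₀ := by field_simp
      have h4 := chi_anti htx ht₀mem' hlt
      rw [ht₀] at h4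
      rw [← hc]; linarith
    have hderiv_pos : ∀ x ∈ Ioo z₀ 1, 0 < deriv (eta γ) x := by
      intro x hx
      have hx0 : 0 < x := hz₀pos.trans hx.1
      refine deriv_eta_pos_of hx0 hx.2 ?_
      have htx : π * √x ∈ Ioo (0:ℝ) π := t_mem hx0 hx.2
      have hlt : t₀ < π * √x := by
        have h3 := Real.sqrt_lt_sqrt hz₀pos.le hx.1
        rw [hsqrt_z₀] at h3
        calc t₀ = π * (t₀ / π) := by field_simp
          _ < π * √x := by nlinarith
      have h4 := chi_anti ht₀mem' htx hlt
      rw [ht₀] at h4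
      rw [← hc]; linarith
    have hanti : StrictAntiOn (eta γ) (Iic z₀) := by
      refine glue_anti hz₀pos.le (hanti0 hlt.le) ?_
      apply strictAntiOn_of_deriv_neg (convex_Icc 0 z₀) (eta_continuous γ).continuousOn
      intro x hx
      rw [interior_Icc] at hx
      exact hderiv_neg x hx
    have hmono : StrictMonoOn (eta γ) (Ico z₀ 1) := by
      apply strictMonoOn_of_deriv_pos (convex_Ico z₀ 1) (eta_continuous γ).continuousOn
      intro x hx
      rw [interior_Ico] at hx
      exact hderiv_pos x hx
    exact ⟨z₀, hz₀lt1, hanti, hmono,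
      fun w hw hwa hwm => uniq_min hz₀lt1 hw hanti hmono hwa hwm,
      fun _ => ⟨hz₀pos, hz₀lt1⟩,
      fun h => absurd (hcase2.1 h) (by linarith),
      fun h => absurd (hcase3.1 h) (by linarith)⟩
  · -- case c = 12 : z₀ = 0
    refine ⟨0, by norm_num, hanti0 heq12.le, ?_, ?_, ?_, ?_, ?_⟩
    · have := hmono0 heq12.ge
      simpa using this
    · intro w hw hwa hwm
      refine uniq_min (by norm_num) hw (hanti0 heq12.le) ?_ hwa hwm
      have := hmono0 heq12.ge
      simpa using this
    · intro h; exact absurd (hcase1.1 h) (by linarith)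
    · intro _; rfl
    · intro h; exact absurd (hcase3.1 h) (by linarith)
  · -- case c > 12 : z₀ < 0
    set a : ℝ := √((c - 12) / 4) with ha
    have ha2 : a ^ 2 = (c - 12) / 4 := Real.sq_sqrt (by linarith)
    have ha0 : 0 < a := Real.sqrt_pos.2 (by linarith)
    have hb1 : (1:ℝ) ≤ c := by linarith
    have hab : a < c := by
      by_contra h
      push_neg at h
      nlinarith
    have hconta : ContinuousOn psi (Icc a c) := by
      intro t ht
      have hQ : 0 < t * cosh t - sinh t := Q_pos t (lt_of_lt_of_le ha0 ht.1)
      exact (((continuous_const.mul (continuous_pow 2)).mul Real.continuous_sinh).continuousAt.div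
        ((continuous_id.mul Real.continuous_cosh).sub Real.continuous_sinh).continuousAt
        hQ.ne').continuousWithinAt
    have hpsia : psi a < c := by
      have := psi_lt ha0
      nlinarith
    have hpsic : c < psi c := by
      have := psi_ge_two_mul hb1
      linarith
    have hcmem : c ∈ Icc (psi a) (psi c) := ⟨hpsia.le, hpsic.le⟩
    obtain ⟨s₀, hs₀mem, hs₀⟩ := intermediate_value_Icc hab.le hconta hcmem
    have hs₀0 : 0 < s₀ := lt_of_lt_of_le ha0 hs₀mem.1
    set z₀ : ℝ := -((s₀ / π) ^ 2) with hz₀def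
    have hz₀neg : z₀ < 0 := by
      have h5 : 0 < (s₀ / π) ^ 2 := by positivity
      show -((s₀ / π) ^ 2) < 0
      linarith
    have hz₀lt1 : z₀ < 1 := by linarith
    have hsqrt : √(-z₀) = s₀ / π := by
      rw [hz₀def, neg_neg]
      exact Real.sqrt_sq (by positivity)
    have hderiv_neg : ∀ x < z₀, deriv (eta γ) x < 0 := by
      intro x hx
      have hx0 : x < 0 := hx.trans hz₀neg
      refine deriv_eta_neg_of' hx0 ?_
      have hsx : 0 < √(-x) := Real.sqrt_pos.2 (by linarith)
      have hlt : s₀ < π * √(-x) := by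
        have h3 : √(-z₀) < √(-x) := Real.sqrt_lt_sqrt (by linarith) (by linarith)
        rw [hsqrt] at h3
        calc s₀ = π * (s₀ / π) := by field_simp
          _ < π * √(-x) := by nlinarith
      have h4 := psi_mono (mem_Ioi.mpr hs₀0) (mem_Ioi.mpr (mul_pos hπ hsx)) hlt
      rw [hs₀] at h4
      rw [← hc]; linarith
    have hderiv_pos1 : ∀ x ∈ Ioo z₀ 0, 0 < deriv (eta γ) x := by
      intro x hx
      refine deriv_eta_pos_of' hx.2 ?_
      have hsx : 0 < √(-x) := Real.sqrt_pos.2 (by linarith [hx.2])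
      have hlt : π * √(-x) < s₀ := by
        have h3 : √(-x) < √(-z₀) := Real.sqrt_lt_sqrt (by linarith [hx.2]) (by linarith [hx.1])
        rw [hsqrt] at h3
        calc π * √(-x) < π * (s₀ / π) := by nlinarith
          _ = s₀ := by field_simp
      have h4 := psi_mono (mem_Ioi.mpr (mul_pos hπ hsx)) (mem_Ioi.mpr hs₀0) hlt
      rw [hs₀] at h4
      rw [← hc]; linarith
    have hanti : StrictAntiOn (eta γ) (Iic z₀) := by
      apply strictAntiOn_of_deriv_neg (convex_Iic z₀) (eta_continuous γ).continuousOn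
      intro x hx
      rw [interior_Iic] at hx
      exact hderiv_neg x hx
    have hmono : StrictMonoOn (eta γ) (Ico z₀ 1) := by
      refine glue_mono hz₀neg.le ?_ (hmono0 hgt.le)
      apply strictMonoOn_of_deriv_pos (convex_Icc z₀ 0) (eta_continuous γ).continuousOn
      intro x hx
      rw [interior_Icc] at hx
      exact hderiv_pos1 x hx
    exact ⟨z₀, hz₀lt1, hanti, hmono,
      fun w hw hwa hwm => uniq_min hz₀lt1 hw hanti hmono hwa hwm,
      fun h => absurd (hcase1.1 h) (by linarith),
      fun h => absurd (hcase2.1 h) (by linarith),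
      fun _ => hz₀neg⟩
end
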